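/- arXiv:2106.01634 — 4 statements merged into one kernel-verified Lean document; each statement's English description precedes it below -/
import Mathlib

section
/- For every integer s ≥ 9 with s ≠ 11 and s ≢ 0 (mod 4), the graph T(1,s,2) satisfies: its chromatic number equals 5, it is 5-choosable, and it is not 4-choosable; hence its choice number equals its chromatic number, both being 5. -/
/-- The neighbour relation underlying Altshuler's toroidal triangulation `T(r,s,t)`:
`Tnbr r s t u v` says that `v` is one of the six listed neighbours of `u`. -/
def Tnbr (r s t : ℕ) (u v : ZMod r × ZMod s) : Prop :=
  if r = 1 then
    v.1 = u.1 ∧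
      (v.2 = u.2 + 1 ∨ v.2 = u.2 - 1 ∨ v.2 = u.2 + (t : ZMod s) ∨ v.2 = u.2 - (t : ZMod s) ∨
        v.2 = u.2 + ((t : ZMod s) + 1) ∨ v.2 = u.2 - ((t : ZMod s) + 1))
  else if u.1 = 1 then
    (v.1 = u.1 ∧ (v.2 = u.2 + 1 ∨ v.2 = u.2 - 1)) ∨
    (v.1 = u.1 + 1 ∧ (v.2 = u.2 ∨ v.2 = u.2 - 1)) ∨
    (v.1 = u.1 - 1 ∧ (v.2 = u.2 + (t : ZMod s) + 1 ∨ v.2 = u.2 + (t : ZMod s)))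
  else if u.1 = 0 then
    (v.1 = u.1 ∧ (v.2 = u.2 + 1 ∨ v.2 = u.2 - 1)) ∨
    (v.1 = u.1 - 1 ∧ (v.2 = u.2 + 1 ∨ v.2 = u.2)) ∨
    (v.1 = u.1 + 1 ∧ (v.2 = u.2 - (t : ZMod s) ∨ v.2 = u.2 - (t : ZMod s) - 1))
  else
    (v.1 = u.1 ∧ (v.2 = u.2 + 1 ∨ v.2 = u.2 - 1)) ∨
    (v.1 = u.1 + 1 ∧ (v.2 = u.2 ∨ v.2 = u.2 - 1)) ∨
    (v.1 = u.1 - 1 ∧ (v.2 = u.2 ∨ v.2 = u.2 + 1))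

/-- Altshuler's `6`-regular toroidal triangulation `T(r,s,t)`, with vertex `(i,j)`
represented by the pair `(i mod r, j mod s)`. -/
def T (r s t : ℕ) : SimpleGraph (ZMod r × ZMod s) where
  Adj u v := u ≠ v ∧ (Tnbr r s t u v ∨ Tnbr r s t v u)
  symm := ⟨fun u v h => ⟨h.1.symm, h.2.symm⟩⟩
  loopless := ⟨fun u h => h.1 rfl⟩

/-- `G` is `L`-choosable: there is a proper colouring choosing each colour from its list. -/
def IsLChoosable {V : Type*} (G : SimpleGraph V) (L : V → Finset ℕ) : Prop :=
  ∃ c : V → ℕ, (∀ v, c v ∈ L v) ∧ ∀ u v, G.Adj u v → c u ≠ c v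

/-- `G` is `k`-choosable: `G` is `L`-choosable for every list assignment of `k`-lists. -/
def Choosable {V : Type*} (G : SimpleGraph V) (k : ℕ) : Prop :=
  ∀ L : V → Finset ℕ, (∀ v, k ≤ (L v).card) → IsLChoosable G L



/-- the set of earlier-ordered neighbours of `j` in the greedy order `1,…,s-1,0`. -/
def bef (s j : ℕ) : Finset ℕ :=
  (Finset.Ico 1 j).filter (fun i => j - i ≤ 3 ∨ s - 3 ≤ j - i)

lemma mem_bef {s j i : ℕ} :
    i ∈ bef s j ↔ 1 ≤ i ∧ i < j ∧ (j - i ≤ 3 ∨ s - 3 ≤ j - i) := by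
  simp [bef, Finset.mem_filter, Finset.mem_Ico, and_assoc]

lemma exists_avoid (A T : Finset ℕ) (h : (A ∩ T).card < A.card) :
    ∃ x ∈ A, x ∉ T := by
  by_contra hc
  push_neg at hc
  have : A ⊆ A ∩ T := fun x hx => Finset.mem_inter.2 ⟨hx, hc x hx⟩
  exact absurd (Finset.card_le_card this) (by omega)

lemma step_generic (A : Finset ℕ) (S : Finset ℕ) (f : ℕ → ℕ)
    (h : S.card < A.card) : ∃ x ∈ A, ∀ i ∈ S, x ≠ f i := by
  obtain ⟨x, hxA, hx⟩ := exists_avoid A (S.image f)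
    (lt_of_le_of_lt (Finset.card_le_card (Finset.inter_subset_right))
      (lt_of_le_of_lt (Finset.card_image_le) h))
  exact ⟨x, hxA, fun i hi hxi => hx (Finset.mem_image.2 ⟨i, hi, hxi.symm⟩)⟩

lemma inter_union_card (A T1 T2 : Finset ℕ) :
    (A ∩ (T1 ∪ T2)).card ≤ (A ∩ T1).card + (A ∩ T2).card := by
  rw [Finset.inter_union_distrib_left]
  exact Finset.card_union_le _ _

/-- greedy engine: colour `1,2,…,s-1` then `0`. -/
lemma engine (s : ℕ) (hs : 9 ≤ s) (LL A : ℕ → Finset ℕ)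
    (hsub : ∀ j, 1 ≤ j → j < s → A j ⊆ LL j)
    (hstep : ∀ j, 1 ≤ j → j < s → ∀ f : ℕ → ℕ, (∀ i ∈ bef s j, f i ∈ A i) →
      ∃ x ∈ A j, ∀ i ∈ bef s j, x ≠ f i)
    (hlast : ∀ f : ℕ → ℕ, (∀ i, 1 ≤ i → i < s → f i ∈ A i) →
      ∃ x ∈ LL 0, ∀ i, 1 ≤ i → i < s → (i ≤ 3 ∨ s - 3 ≤ i) → x ≠ f i) :
    ∃ c : ℕ → ℕ, (∀ j, j < s → c j ∈ LL j) ∧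
      ∀ i j, i < j → j < s → (j - i ≤ 3 ∨ s - 3 ≤ j - i) → c i ≠ c j := by
  have aux : ∀ m, m < s → ∃ c : ℕ → ℕ,
      (∀ j, 1 ≤ j → j ≤ m → c j ∈ A j) ∧
      (∀ i j, 1 ≤ i → i < j → j ≤ m → (j - i ≤ 3 ∨ s - 3 ≤ j - i) → c i ≠ c j) := by
    intro m
    induction m with
    | zero => exact fun _ => ⟨fun _ => 0, fun j h1 h2 => absurd (le_trans h1 h2) (by omega),
        fun i j h1 h2 h3 _ => absurd h3 (by omega)⟩
    | succ m ih =>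
      intro hm
      obtain ⟨c, hc1, hc2⟩ := ih (by omega)
      obtain ⟨x, hxA, hx⟩ := hstep (m+1) (by omega) hm c
        (fun i hi => hc1 i (mem_bef.1 hi).1 (by have := (mem_bef.1 hi).2.1; omega))
      refine ⟨Function.update c (m+1) x, ?_, ?_⟩
      · intro j h1 h2
        rcases eq_or_lt_of_le h2 with h | h
        · rw [h, Function.update_self]; exact hxA
        · rw [Function.update_of_ne (by omega)]; exact hc1 j h1 (by omega)
      · intro i j h1 h2 h3 h4
        rcases eq_or_lt_of_le h3 with h | h
        · subst h
          rw [Function.update_of_ne (by omega), Function.update_self]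
          exact Ne.symm (hx i (mem_bef.2 ⟨h1, h2, h4⟩))
        · rw [Function.update_of_ne (by omega), Function.update_of_ne (by omega)]
          exact hc2 i j h1 h2 (by omega) h4
  obtain ⟨c, hc1, hc2⟩ := aux (s-1) (by omega)
  obtain ⟨x, hxL, hx⟩ := hlast c (fun i h1 h2 => hc1 i h1 (by omega))
  refine ⟨Function.update c 0 x, ?_, ?_⟩
  · intro j hj
    rcases Nat.eq_zero_or_pos j with h | h
    · rw [h, Function.update_self]; exact hxL
    · rw [Function.update_of_ne (by omega)]
      exact hsub j h hj (hc1 j h (by omega))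
  · intro i j hij hj hcond
    rcases Nat.eq_zero_or_pos i with h | h
    · subst h
      rw [Function.update_self, Function.update_of_ne (by omega)]
      exact hx j hij hj (by omega)
    · rw [Function.update_of_ne (by omega), Function.update_of_ne (by omega)]
      exact hc2 i j h hij (by omega) hcond


lemma adjT {s : ℕ} (u v : ZMod 1 × ZMod s) :
    (T 1 s 2).Adj u v ↔ u.2 ≠ v.2 ∧
      (v.2 = u.2 + 1 ∨ v.2 = u.2 + 2 ∨ v.2 = u.2 + 3 ∨
       u.2 = v.2 + 1 ∨ u.2 = v.2 + 2 ∨ u.2 = v.2 + 3) := by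
  have hne : u ≠ v ↔ u.2 ≠ v.2 := by
    constructor
    · intro h h2; exact h (Prod.ext (Subsingleton.elim _ _) h2)
    · exact fun h h2 => h (congrArg Prod.snd h2)
  have c2 : ((2:ℕ) : ZMod s) = 2 := by push_cast; ring
  show (u ≠ v ∧ (Tnbr 1 s 2 u v ∨ Tnbr 1 s 2 v u)) ↔ _
  unfold Tnbr
  simp only [if_pos rfl, c2, eq_iff_true_of_subsingleton, true_and, hne]
  apply and_congr_right'
  constructor
  · rintro ((h|h|h|h|h|h)|(h|h|h|h|h|h))
    · exact Or.inl h
    · exact Or.inr (Or.inr (Or.inr (Or.inl (by rw [h]; ring))))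
    · exact Or.inr (Or.inl h)
    · exact Or.inr (Or.inr (Or.inr (Or.inr (Or.inl (by rw [h]; ring)))))
    · exact Or.inr (Or.inr (Or.inl (by rw [h]; ring)))
    · exact Or.inr (Or.inr (Or.inr (Or.inr (Or.inr (by rw [h]; ring)))))
    · exact Or.inr (Or.inr (Or.inr (Or.inl h)))
    · exact Or.inl (by rw [h]; ring)
    · exact Or.inr (Or.inr (Or.inr (Or.inr (Or.inl h))))
    · exact Or.inr (Or.inl (by rw [h]; ring))
    · exact Or.inr (Or.inr (Or.inr (Or.inr (Or.inr (by rw [h]; ring)))))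
    · exact Or.inr (Or.inr (Or.inl (by rw [h]; ring)))
  · rintro (h|h|h|h|h|h)
    · exact Or.inl (Or.inl h)
    · exact Or.inl (Or.inr (Or.inr (Or.inl h)))
    · exact Or.inl (Or.inr (Or.inr (Or.inr (Or.inr (Or.inl (by rw [h]; ring))))))
    · exact Or.inr (Or.inl h)
    · exact Or.inr (Or.inr (Or.inr (Or.inl h)))
    · exact Or.inr (Or.inr (Or.inr (Or.inr (Or.inr (Or.inl (by rw [h]; ring))))))

lemma adj_mk {s : ℕ} (hs : 9 ≤ s) (z : ZMod s) (δ : ℕ) (h1 : 1 ≤ δ) (h3 : δ ≤ 3) :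
    (T 1 s 2).Adj (0, z) (0, z + (δ : ZMod s)) := by
  haveI : NeZero s := ⟨by omega⟩
  rw [adjT]
  constructor
  · intro h
    have h2 : z + (δ : ZMod s) = z + 0 := by rw [add_zero]; exact h.symm
    have h3' : (δ : ZMod s) = 0 := by exact add_left_cancel h2
    have := congrArg ZMod.val h3'
    rw [ZMod.val_natCast_of_lt (by omega), ZMod.val_zero] at this
    omega
  · interval_cases δ
    · exact Or.inl (by push_cast; ring)
    · exact Or.inr (Or.inl (by push_cast; ring))
    · exact Or.inr (Or.inr (Or.inl (by push_cast; ring)))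

lemma cyc {s : ℕ} (hs : 9 ≤ s) {i j δ : ℕ} (hi : i < s) (hj : j < s) (hij : i < j)
    (h1 : 1 ≤ δ) (h3 : δ ≤ 3)
    (h : ((j : ZMod s) = (i : ZMod s) + (δ : ZMod s)) ∨
         ((i : ZMod s) = (j : ZMod s) + (δ : ZMod s))) :
    j - i ≤ 3 ∨ s - 3 ≤ j - i := by
  rcases h with h | h
  · have : ((i + δ : ℕ) : ZMod s) = ((j : ℕ) : ZMod s) := by push_cast; rw [h]
    rw [ZMod.natCast_eq_natCast_iff'] at this
    rcases lt_or_ge (i + δ) s with hlt | hge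
    · rw [Nat.mod_eq_of_lt hlt, Nat.mod_eq_of_lt hj] at this; omega
    · have e1 : (i + δ) % s = i + δ - s := by
        rw [Nat.mod_eq_sub_mod hge, Nat.mod_eq_of_lt (by omega)]
      rw [e1, Nat.mod_eq_of_lt hj] at this; omega
  · have : ((j + δ : ℕ) : ZMod s) = ((i : ℕ) : ZMod s) := by push_cast; rw [h]
    rw [ZMod.natCast_eq_natCast_iff'] at this
    rcases lt_or_ge (j + δ) s with hlt | hge
    · rw [Nat.mod_eq_of_lt hlt, Nat.mod_eq_of_lt hi] at this; omega
    · have e1 : (j + δ) % s = j + δ - s := by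
        rw [Nat.mod_eq_sub_mod hge, Nat.mod_eq_of_lt (by omega)]
      rw [e1, Nat.mod_eq_of_lt hi] at this; omega


lemma wrap {s : ℕ} (hs : 9 ≤ s) (L : ZMod 1 × ZMod s → Finset ℕ) (p ε : ZMod s)
    (hε : ε = 1 ∨ ε = -1) (C : ℕ → ℕ)
    (hmem : ∀ j, j < s → C j ∈ L (0, p + ε * (j : ZMod s)))
    (hprop : ∀ i j, i < j → j < s → (j - i ≤ 3 ∨ s - 3 ≤ j - i) → C i ≠ C j) :
    IsLChoosable (T 1 s 2) L := by
  haveI : NeZero s := ⟨by omega⟩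
  have hL0 : ∀ v : ZMod 1 × ZMod s, L (0, v.2) = L v := fun v => by
    congr 1
    exact Prod.ext (Subsingleton.elim _ _) rfl
  have hval : ∀ x : ZMod s, ((x.val : ℕ) : ZMod s) = x := fun x => by
    rw [ZMod.natCast_val, ZMod.cast_id]
  have hsig : ∀ x : ZMod s, p + ε * (((x - p) * ε).val : ZMod s) = x := by
    intro x
    rw [hval]
    rcases hε with h | h <;> subst h <;> ring
  refine ⟨fun v => C (((v.2 - p) * ε).val), ?_, ?_⟩
  · intro v
    rw [← hL0 v]
    have := hmem (((v.2 - p) * ε).val) (ZMod.val_lt _)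
    rwa [hsig v.2] at this
  · intro u v huv
    rw [adjT] at huv
    obtain ⟨hne, hd⟩ := huv
    set i := ((u.2 - p) * ε).val with hidef
    set j := ((v.2 - p) * ε).val with hjdef
    have hi : i < s := ZMod.val_lt _
    have hj : j < s := ZMod.val_lt _
    have hiz : ((i : ℕ) : ZMod s) = (u.2 - p) * ε := hval _
    have hjz : ((j : ℕ) : ZMod s) = (v.2 - p) * ε := hval _
    have hij : i ≠ j := by
      intro h
      apply hne
      have : (u.2 - p) * ε = (v.2 - p) * ε := by rw [← hiz, ← hjz, h]
      rcases hε with he | he <;> subst he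
      · simpa using this
      · have := congrArg (fun t => t * (-1 : ZMod s)) this
        simp only [mul_assoc] at this
        simpa using this
    -- extract δ and relation
    have hrel : ∃ δ : ℕ, 1 ≤ δ ∧ δ ≤ 3 ∧
        (((j : ZMod s)) = (i : ZMod s) + (δ : ZMod s) ∨
         ((i : ZMod s)) = (j : ZMod s) + (δ : ZMod s)) := by
      rw [hiz, hjz]
      rcases hε with he | he <;> subst he <;>
      rcases hd with h|h|h|h|h|h
      · exact ⟨1, by norm_num, by norm_num, Or.inl (by rw [h]; push_cast; ring)⟩
      · exact ⟨2, by norm_num, by norm_num, Or.inl (by rw [h]; push_cast; ring)⟩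
      · exact ⟨3, by norm_num, by norm_num, Or.inl (by rw [h]; push_cast; ring)⟩
      · exact ⟨1, by norm_num, by norm_num, Or.inr (by rw [h]; push_cast; ring)⟩
      · exact ⟨2, by norm_num, by norm_num, Or.inr (by rw [h]; push_cast; ring)⟩
      · exact ⟨3, by norm_num, by norm_num, Or.inr (by rw [h]; push_cast; ring)⟩
      · exact ⟨1, by norm_num, by norm_num, Or.inr (by rw [h]; push_cast; ring)⟩
      · exact ⟨2, by norm_num, by norm_num, Or.inr (by rw [h]; push_cast; ring)⟩
      · exact ⟨3, by norm_num, by norm_num, Or.inr (by rw [h]; push_cast; ring)⟩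
      · exact ⟨1, by norm_num, by norm_num, Or.inl (by rw [h]; push_cast; ring)⟩
      · exact ⟨2, by norm_num, by norm_num, Or.inl (by rw [h]; push_cast; ring)⟩
      · exact ⟨3, by norm_num, by norm_num, Or.inl (by rw [h]; push_cast; ring)⟩
    obtain ⟨δ, hδ1, hδ3, hzz⟩ := hrel
    rcases lt_or_gt_of_ne hij with hlt | hgt
    · exact hprop i j hlt hj (cyc hs hi hj hlt hδ1 hδ3 hzz)
    · exact (hprop j i hgt hi (cyc hs hj hi hgt hδ1 hδ3 (Or.symm hzz))).symm

-- new content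
lemma card2 (x y : ℕ) : ({x, y} : Finset ℕ).card ≤ 2 := by
  apply (Finset.card_insert_le _ _).trans
  simp

lemma card3 (x y z : ℕ) : ({x, y, z} : Finset ℕ).card ≤ 3 := by
  apply (Finset.card_insert_le _ _).trans
  exact Nat.succ_le_succ (card2 y z)

lemma card4 (w x y z : ℕ) : ({w, x, y, z} : Finset ℕ).card ≤ 4 := by
  apply (Finset.card_insert_le _ _).trans
  exact Nat.succ_le_succ (card3 x y z)

lemma inter_le_right_card (A T : Finset ℕ) : (A ∩ T).card ≤ T.card :=
  Finset.card_le_card Finset.inter_subset_right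

lemma bef_cases {s j i : ℕ} (hs : 9 ≤ s) (hj : j < s) (h : i ∈ bef s j) :
    (i + 1 = j ∨ i + 2 = j ∨ i + 3 = j) ∨ (j = s - 2 ∧ i = 1) ∨
      (j = s - 1 ∧ (i = 1 ∨ i = 2)) := by
  rw [mem_bef] at h
  omega

lemma bef_sub3 {s j : ℕ} (hs : 9 ≤ s) (hj : j < s) (hj2 : j ≤ s - 3) :
    bef s j ⊆ {j - 1, j - 2, j - 3} := by
  intro i hi
  have := bef_cases hs hj hi
  simp only [Finset.mem_insert, Finset.mem_singleton]
  omega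

lemma bef_sub4 {s j : ℕ} (hs : 9 ≤ s) (hj : j < s) (hj2 : j = s - 2) :
    bef s j ⊆ {j - 1, j - 2, j - 3, 1} := by
  intro i hi
  have := bef_cases hs hj hi
  simp only [Finset.mem_insert, Finset.mem_singleton]
  omega

lemma triple_not_all (S : Finset ℕ) (a b c : ℕ) (h : ¬(a ∈ S ∧ b ∈ S ∧ c ∈ S)) :
    (({a, b, c} : Finset ℕ) ∩ S).card ≤ 2 := by
  by_cases ha : a ∈ S
  · by_cases hb : b ∈ S
    · have hc : c ∉ S := fun hc => h ⟨ha, hb, hc⟩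
      refine (Finset.card_le_card fun x hx => ?_).trans (card2 a b)
      rw [Finset.mem_inter] at hx
      simp only [Finset.mem_insert, Finset.mem_singleton] at hx ⊢
      rcases hx.1 with h' | h' | h' <;> [left; right; exact absurd (h' ▸ hx.2) hc] <;> exact h'
    · refine (Finset.card_le_card fun x hx => ?_).trans (card2 a c)
      rw [Finset.mem_inter] at hx
      simp only [Finset.mem_insert, Finset.mem_singleton] at hx ⊢
      rcases hx.1 with h' | h' | h' <;> [left; exact absurd (h' ▸ hx.2) hb; right] <;> exact h'
  · refine (Finset.card_le_card fun x hx => ?_).trans (card2 b c)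
    rw [Finset.mem_inter] at hx
    simp only [Finset.mem_insert, Finset.mem_singleton] at hx ⊢
    rcases hx.1 with h' | h' | h' <;> [exact absurd (h' ▸ hx.2) ha; left; right] <;> exact h'

lemma planA {s : ℕ} (hs : 9 ≤ s) (LL : ℕ → Finset ℕ)
    (hcard : ∀ j, j < s → (LL j).card = 5)
    (a b c : ℕ) (ha : a ∈ LL 1) (hb : b ∈ LL 2) (hc : c ∈ LL 3)
    (hab : a ≠ b) (hac : a ≠ c) (hbc : b ≠ c)
    (h1 : ((({a, b} : Finset ℕ)) ∩ LL (s - 1)).card ≤ 1)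
    (h0 : ((({a, b, c} : Finset ℕ)) ∩ LL 0).card ≤ 1) :
    ∃ C : ℕ → ℕ, (∀ j, j < s → C j ∈ LL j) ∧
      ∀ i j, i < j → j < s → (j - i ≤ 3 ∨ s - 3 ≤ j - i) → C i ≠ C j := by
  set A : ℕ → Finset ℕ := fun j =>
    if j = 1 then {a} else if j = 2 then {b} else if j = 3 then {c} else LL j with hA
  have hA1 : A 1 = {a} := by simp [hA]
  have hA2 : A 2 = {b} := by simp [hA]
  have hA3 : A 3 = {c} := by simp [hA]
  have hAg : ∀ j, j ≠ 1 → j ≠ 2 → j ≠ 3 → A j = LL j := by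
    intro j e1 e2 e3; simp [hA, e1, e2, e3]
  apply engine s hs LL A
  · intro j h1j hjs
    by_cases e1 : j = 1
    · subst e1; rw [hA1]; exact Finset.singleton_subset_iff.2 ha
    by_cases e2 : j = 2
    · subst e2; rw [hA2]; exact Finset.singleton_subset_iff.2 hb
    by_cases e3 : j = 3
    · subst e3; rw [hA3]; exact Finset.singleton_subset_iff.2 hc
    · rw [hAg j e1 e2 e3]
  · intro j h1j hjs f hf
    by_cases e1 : j = 1
    · subst e1
      exact ⟨a, by rw [hA1]; exact Finset.mem_singleton_self a,
        fun i hi => absurd (mem_bef.1 hi) (by omega)⟩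
    by_cases e2 : j = 2
    · subst e2
      refine ⟨b, by rw [hA2]; exact Finset.mem_singleton_self b, fun i hi => ?_⟩
      have hi1 : i = 1 := by have := mem_bef.1 hi; omega
      subst hi1
      have := hf 1 hi; rw [hA1, Finset.mem_singleton] at this
      rw [this]; exact hab.symm
    by_cases e3 : j = 3
    · subst e3
      refine ⟨c, by rw [hA3]; exact Finset.mem_singleton_self c, fun i hi => ?_⟩
      have hi1 : i = 1 ∨ i = 2 := by have := mem_bef.1 hi; omega
      rcases hi1 with hi1 | hi1 <;> subst hi1
      · have := hf 1 hi; rw [hA1, Finset.mem_singleton] at this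
        rw [this]; exact hac.symm
      · have := hf 2 hi; rw [hA2, Finset.mem_singleton] at this
        rw [this]; exact hbc.symm
    by_cases el : j = s - 1
    · -- last-but-one vertex: forbidden {f(s-2),f(s-3),f(s-4)} ∪ {a,b}
      subst el
      have hAj : A (s-1) = LL (s-1) := hAg _ (by omega) (by omega) (by omega)
      have hbound : (LL (s-1) ∩ (({f (s-2), f (s-3), f (s-4)} : Finset ℕ) ∪ {a, b})).card
          < (LL (s-1)).card := by
        have b0 := inter_union_card (LL (s-1)) ({f (s-2), f (s-3), f (s-4)}) ({a, b})
        have b1 := inter_le_right_card (LL (s-1)) ({f (s-2), f (s-3), f (s-4)})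
        have b2 := card3 (f (s-2)) (f (s-3)) (f (s-4))
        have b3 : (LL (s-1) ∩ ({a,b} : Finset ℕ)).card ≤ 1 := by
          rw [Finset.inter_comm]; exact h1
        have b4 := hcard (s-1) (by omega)
        omega
      obtain ⟨x, hx, hxT⟩ := exists_avoid (LL (s-1))
          (({f (s-2), f (s-3), f (s-4)} : Finset ℕ) ∪ {a, b}) hbound
      refine ⟨x, by rw [hAj]; exact hx, fun i hi => ?_⟩
      have hcases := bef_cases hs hjs hi
      have hmem : f i ∈ ({f (s-2), f (s-3), f (s-4)} : Finset ℕ) ∪ {a, b} := by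
        rcases hcases with (h' | h' | h') | ⟨h', _⟩ | ⟨_, h' | h'⟩
        · have : i = s - 2 := by omega
          subst this; simp
        · have : i = s - 3 := by omega
          subst this; simp
        · have : i = s - 4 := by omega
          subst this; simp
        · omega
        · subst h'
          have := hf 1 hi; rw [hA1, Finset.mem_singleton] at this
          rw [this]; simp
        · subst h'
          have := hf 2 hi; rw [hA2, Finset.mem_singleton] at this
          rw [this]; simp
      exact fun he => hxT (he ▸ hmem)
    by_cases em : j = s - 2
    · subst em
      have hAj : A (s-2) = LL (s-2) := hAg _ (by omega) (by omega) (by omega)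
      rw [hAj]
      apply step_generic _ _ _
      calc (bef s (s-2)).card ≤ _ := Finset.card_le_card (bef_sub4 hs hjs rfl)
        _ ≤ 4 := card4 _ _ _ _
        _ < (LL (s-2)).card := by rw [hcard _ (by omega)]; omega
    · -- generic: j ≤ s-3
      have hAj : A j = LL j := hAg _ e1 e2 e3
      rw [hAj]
      apply step_generic _ _ _
      calc (bef s j).card ≤ _ := Finset.card_le_card (bef_sub3 hs hjs (by omega))
        _ ≤ 3 := card3 _ _ _
        _ < (LL j).card := by rw [hcard _ hjs]; omega
  · intro f hfA
    have hbound : (LL 0 ∩ (({f (s-1), f (s-2), f (s-3)} : Finset ℕ) ∪ {a, b, c})).card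
        < (LL 0).card := by
      have b0 := inter_union_card (LL 0) ({f (s-1), f (s-2), f (s-3)}) ({a, b, c})
      have b1 := inter_le_right_card (LL 0) ({f (s-1), f (s-2), f (s-3)})
      have b2 := card3 (f (s-1)) (f (s-2)) (f (s-3))
      have b3 : (LL 0 ∩ ({a,b,c} : Finset ℕ)).card ≤ 1 := by
        rw [Finset.inter_comm]; exact h0
      have b4 := hcard 0 (by omega)
      omega
    obtain ⟨x, hx, hxT⟩ := exists_avoid (LL 0)
        (({f (s-1), f (s-2), f (s-3)} : Finset ℕ) ∪ {a, b, c}) hbound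
    refine ⟨x, hx, fun i hi1 his hcond => ?_⟩
    have hmem : f i ∈ ({f (s-1), f (s-2), f (s-3)} : Finset ℕ) ∪ {a, b, c} := by
      have : i = 1 ∨ i = 2 ∨ i = 3 ∨ i = s-3 ∨ i = s-2 ∨ i = s-1 := by omega
      rcases this with h' | h' | h' | h' | h' | h' <;> subst h'
      · have := hfA 1 (by omega) (by omega); rw [hA1, Finset.mem_singleton] at this
        rw [this]; simp
      · have := hfA 2 (by omega) (by omega); rw [hA2, Finset.mem_singleton] at this
        rw [this]; simp
      · have := hfA 3 (by omega) (by omega); rw [hA3, Finset.mem_singleton] at this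
        rw [this]; simp
      · simp
      · simp
      · simp
    exact fun he => hxT (he ▸ hmem)

lemma planB {s : ℕ} (hs : 9 ≤ s) (LL : ℕ → Finset ℕ)
    (hcard : ∀ j, j < s → (LL j).card = 5)
    (a b c : ℕ) (ha : a ∈ LL 1) (ha3 : a ∈ LL (s - 3)) (hb : b ∈ LL 2) (hc : c ∈ LL 3)
    (hab : a ≠ b) (hac : a ≠ c) (hbc : b ≠ c)
    (h0 : ((({a, b, c} : Finset ℕ)) ∩ LL 0).card ≤ 2) :
    ∃ C : ℕ → ℕ, (∀ j, j < s → C j ∈ LL j) ∧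
      ∀ i j, i < j → j < s → (j - i ≤ 3 ∨ s - 3 ≤ j - i) → C i ≠ C j := by
  set A : ℕ → Finset ℕ := fun j =>
    if j = 1 then {a} else if j = 2 then {b} else if j = 3 then {c}
    else if j = s - 3 then {a}
    else if s - 6 ≤ j ∧ j ≤ s - 4 then LL j \ {a} else LL j with hA
  have hA1 : A 1 = {a} := by simp [hA]
  have hA2 : A 2 = {b} := by simp [hA]
  have hA3 : A 3 = {c} := by simp [hA]
  have hAs3 : A (s - 3) = {a} := by
    simp only [hA]
    rw [if_neg (by omega), if_neg (by omega), if_neg (by omega)]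
    simp
  have hAmid : ∀ j, s - 6 ≤ j → j ≤ s - 4 → j ≠ 3 → A j = LL j \ {a} := by
    intro j hj1 hj2 hj3
    simp only [hA]
    rw [if_neg (by omega), if_neg (by omega), if_neg hj3, if_neg (by omega),
      if_pos ⟨hj1, hj2⟩]
  have hAg : ∀ j, j ≠ 1 → j ≠ 2 → j ≠ 3 → j ≠ s - 3 → ¬(s - 6 ≤ j ∧ j ≤ s - 4) →
      A j = LL j := by
    intro j e1 e2 e3 e4 e5
    simp only [hA]
    rw [if_neg e1, if_neg e2, if_neg e3, if_neg e4, if_neg e5]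
  apply engine s hs LL A
  · intro j h1j hjs
    by_cases e1 : j = 1
    · subst e1; rw [hA1]; exact Finset.singleton_subset_iff.2 ha
    by_cases e2 : j = 2
    · subst e2; rw [hA2]; exact Finset.singleton_subset_iff.2 hb
    by_cases e3 : j = 3
    · subst e3; rw [hA3]; exact Finset.singleton_subset_iff.2 hc
    by_cases e4 : j = s - 3
    · subst e4; rw [hAs3]; exact Finset.singleton_subset_iff.2 ha3
    by_cases e5 : s - 6 ≤ j ∧ j ≤ s - 4
    · rw [hAmid j e5.1 e5.2 e3]; exact Finset.sdiff_subset
    · rw [hAg j e1 e2 e3 e4 e5]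
  · intro j h1j hjs f hf
    by_cases e1 : j = 1
    · subst e1
      exact ⟨a, by rw [hA1]; exact Finset.mem_singleton_self a,
        fun i hi => absurd (mem_bef.1 hi) (by omega)⟩
    by_cases e2 : j = 2
    · subst e2
      refine ⟨b, by rw [hA2]; exact Finset.mem_singleton_self b, fun i hi => ?_⟩
      have hi1 : i = 1 := by have := mem_bef.1 hi; omega
      subst hi1
      have := hf 1 hi; rw [hA1, Finset.mem_singleton] at this
      rw [this]; exact hab.symm
    by_cases e3 : j = 3
    · subst e3
      refine ⟨c, by rw [hA3]; exact Finset.mem_singleton_self c, fun i hi => ?_⟩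
      have hi1 : i = 1 ∨ i = 2 := by have := mem_bef.1 hi; omega
      rcases hi1 with hi1 | hi1 <;> subst hi1
      · have := hf 1 hi; rw [hA1, Finset.mem_singleton] at this
        rw [this]; exact hac.symm
      · have := hf 2 hi; rw [hA2, Finset.mem_singleton] at this
        rw [this]; exact hbc.symm
    by_cases e4 : j = s - 3
    · subst e4
      refine ⟨a, by rw [hAs3]; exact Finset.mem_singleton_self a, fun i hi => ?_⟩
      have hic : s - 6 ≤ i ∧ i ≤ s - 4 := by
        have := bef_cases hs hjs hi
        have := mem_bef.1 hi
        omega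
      by_cases hi3 : i = 3
      · subst hi3
        have := hf 3 hi; rw [hA3, Finset.mem_singleton] at this
        rw [this]; exact hac
      · have := hf i hi
        rw [hAmid i hic.1 hic.2 hi3, Finset.mem_sdiff, Finset.notMem_singleton] at this
        exact (this.2).symm
    by_cases el : j = s - 1
    · subst el
      have hAj : A (s-1) = LL (s-1) := hAg _ (by omega) (by omega) (by omega) (by omega) (by omega)
      have hbound : (LL (s-1) ∩ (({f (s-2), f (s-4)} : Finset ℕ) ∪ {a, b})).card
          < (LL (s-1)).card := by
        have b0 := inter_union_card (LL (s-1)) ({f (s-2), f (s-4)}) ({a, b})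
        have b1 := inter_le_right_card (LL (s-1)) ({f (s-2), f (s-4)})
        have b2 := card2 (f (s-2)) (f (s-4))
        have b3 := inter_le_right_card (LL (s-1)) ({a, b})
        have b4 := card2 a b
        have b5 := hcard (s-1) (by omega)
        omega
      obtain ⟨x, hx, hxT⟩ := exists_avoid _ _ hbound
      refine ⟨x, by rw [hAj]; exact hx, fun i hi => ?_⟩
      have hcases := bef_cases hs hjs hi
      have hmem : f i ∈ ({f (s-2), f (s-4)} : Finset ℕ) ∪ {a, b} := by
        rcases hcases with (h' | h' | h') | ⟨h', _⟩ | ⟨_, h' | h'⟩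
        · have : i = s - 2 := by omega
          subst this; simp
        · have : i = s - 3 := by omega
          subst this
          have := hf (s-3) hi; rw [hAs3, Finset.mem_singleton] at this
          rw [this]; simp
        · have : i = s - 4 := by omega
          subst this; simp
        · omega
        · subst h'
          have := hf 1 hi; rw [hA1, Finset.mem_singleton] at this
          rw [this]; simp
        · subst h'
          have := hf 2 hi; rw [hA2, Finset.mem_singleton] at this
          rw [this]; simp
      exact fun he => hxT (he ▸ hmem)
    by_cases em : j = s - 2
    · subst em
      have hAj : A (s-2) = LL (s-2) := hAg _ (by omega) (by omega) (by omega) (by omega) (by omega)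
      rw [hAj]
      apply step_generic _ _ _
      calc (bef s (s-2)).card ≤ _ := Finset.card_le_card (bef_sub4 hs hjs rfl)
        _ ≤ 4 := card4 _ _ _ _
        _ < (LL (s-2)).card := by rw [hcard _ (by omega)]; omega
    by_cases e5 : s - 6 ≤ j ∧ j ≤ s - 4
    · rw [hAmid j e5.1 e5.2 e3]
      apply step_generic _ _ _
      calc (bef s j).card ≤ _ := Finset.card_le_card (bef_sub3 hs hjs (by omega))
        _ ≤ 3 := card3 _ _ _
        _ < (LL j \ {a}).card := by
            have := Finset.le_card_sdiff ({a} : Finset ℕ) (LL j)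
            have := hcard j hjs
            simp only [Finset.card_singleton] at *
            omega
    · have hAj : A j = LL j := hAg _ e1 e2 e3 e4 e5
      rw [hAj]
      apply step_generic _ _ _
      calc (bef s j).card ≤ _ := Finset.card_le_card (bef_sub3 hs hjs (by omega))
        _ ≤ 3 := card3 _ _ _
        _ < (LL j).card := by rw [hcard _ hjs]; omega
  · intro f hfA
    have hbound : (LL 0 ∩ (({f (s-2), f (s-1)} : Finset ℕ) ∪ {a, b, c})).card
        < (LL 0).card := by
      have b0 := inter_union_card (LL 0) ({f (s-2), f (s-1)}) ({a, b, c})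
      have b1 := inter_le_right_card (LL 0) ({f (s-2), f (s-1)})
      have b2 := card2 (f (s-2)) (f (s-1))
      have b3 : (LL 0 ∩ ({a,b,c} : Finset ℕ)).card ≤ 2 := by
        rw [Finset.inter_comm]; exact h0
      have b4 := hcard 0 (by omega)
      omega
    obtain ⟨x, hx, hxT⟩ := exists_avoid _ _ hbound
    refine ⟨x, hx, fun i hi1 his hcond => ?_⟩
    have hmem : f i ∈ ({f (s-2), f (s-1)} : Finset ℕ) ∪ {a, b, c} := by
      have : i = 1 ∨ i = 2 ∨ i = 3 ∨ i = s-3 ∨ i = s-2 ∨ i = s-1 := by omega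
      rcases this with h' | h' | h' | h' | h' | h' <;> subst h'
      · have := hfA 1 (by omega) (by omega); rw [hA1, Finset.mem_singleton] at this
        rw [this]; simp
      · have := hfA 2 (by omega) (by omega); rw [hA2, Finset.mem_singleton] at this
        rw [this]; simp
      · have := hfA 3 (by omega) (by omega); rw [hA3, Finset.mem_singleton] at this
        rw [this]; simp
      · have := hfA (s-3) (by omega) (by omega); rw [hAs3, Finset.mem_singleton] at this
        rw [this]; simp
      · simp
      · simp
    exact fun he => hxT (he ▸ hmem)

lemma planC {s : ℕ} (hs : 9 ≤ s) (LL : ℕ → Finset ℕ)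
    (hcard : ∀ j, j < s → (LL j).card = 5)
    (a b c : ℕ) (ha : a ∈ LL 1) (hb : b ∈ LL 2) (hb2 : b ∈ LL (s - 2)) (hc : c ∈ LL 3)
    (hab : a ≠ b) (hac : a ≠ c) (hbc : b ≠ c)
    (h0 : ((({a, b, c} : Finset ℕ)) ∩ LL 0).card ≤ 2) :
    ∃ C : ℕ → ℕ, (∀ j, j < s → C j ∈ LL j) ∧
      ∀ i j, i < j → j < s → (j - i ≤ 3 ∨ s - 3 ≤ j - i) → C i ≠ C j := by
  set A : ℕ → Finset ℕ := fun j =>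
    if j = 1 then {a} else if j = 2 then {b} else if j = 3 then {c}
    else if j = s - 2 then {b}
    else if s - 5 ≤ j ∧ j ≤ s - 3 then LL j \ {b} else LL j with hA
  have hA1 : A 1 = {a} := by simp [hA]
  have hA2 : A 2 = {b} := by simp [hA]
  have hA3 : A 3 = {c} := by simp [hA]
  have hAs2 : A (s - 2) = {b} := by
    simp only [hA]
    rw [if_neg (by omega), if_neg (by omega), if_neg (by omega)]
    simp
  have hAmid : ∀ j, s - 5 ≤ j → j ≤ s - 3 → A j = LL j \ {b} := by
    intro j hj1 hj2
    simp only [hA]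
    rw [if_neg (by omega), if_neg (by omega), if_neg (by omega), if_neg (by omega),
      if_pos ⟨hj1, hj2⟩]
  have hAg : ∀ j, j ≠ 1 → j ≠ 2 → j ≠ 3 → j ≠ s - 2 → ¬(s - 5 ≤ j ∧ j ≤ s - 3) →
      A j = LL j := by
    intro j e1 e2 e3 e4 e5
    simp only [hA]
    rw [if_neg e1, if_neg e2, if_neg e3, if_neg e4, if_neg e5]
  apply engine s hs LL A
  · intro j h1j hjs
    by_cases e1 : j = 1
    · subst e1; rw [hA1]; exact Finset.singleton_subset_iff.2 ha
    by_cases e2 : j = 2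
    · subst e2; rw [hA2]; exact Finset.singleton_subset_iff.2 hb
    by_cases e3 : j = 3
    · subst e3; rw [hA3]; exact Finset.singleton_subset_iff.2 hc
    by_cases e4 : j = s - 2
    · subst e4; rw [hAs2]; exact Finset.singleton_subset_iff.2 hb2
    by_cases e5 : s - 5 ≤ j ∧ j ≤ s - 3
    · rw [hAmid j e5.1 e5.2]; exact Finset.sdiff_subset
    · rw [hAg j e1 e2 e3 e4 e5]
  · intro j h1j hjs f hf
    by_cases e1 : j = 1
    · subst e1
      exact ⟨a, by rw [hA1]; exact Finset.mem_singleton_self a,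
        fun i hi => absurd (mem_bef.1 hi) (by omega)⟩
    by_cases e2 : j = 2
    · subst e2
      refine ⟨b, by rw [hA2]; exact Finset.mem_singleton_self b, fun i hi => ?_⟩
      have hi1 : i = 1 := by have := mem_bef.1 hi; omega
      subst hi1
      have := hf 1 hi; rw [hA1, Finset.mem_singleton] at this
      rw [this]; exact hab.symm
    by_cases e3 : j = 3
    · subst e3
      refine ⟨c, by rw [hA3]; exact Finset.mem_singleton_self c, fun i hi => ?_⟩
      have hi1 : i = 1 ∨ i = 2 := by have := mem_bef.1 hi; omega
      rcases hi1 with hi1 | hi1 <;> subst hi1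
      · have := hf 1 hi; rw [hA1, Finset.mem_singleton] at this
        rw [this]; exact hac.symm
      · have := hf 2 hi; rw [hA2, Finset.mem_singleton] at this
        rw [this]; exact hbc.symm
    by_cases e4 : j = s - 2
    · subst e4
      refine ⟨b, by rw [hAs2]; exact Finset.mem_singleton_self b, fun i hi => ?_⟩
      have hic : (s - 5 ≤ i ∧ i ≤ s - 3) ∨ i = 1 := by
        have := bef_cases hs hjs hi
        have := mem_bef.1 hi
        omega
      rcases hic with hic | hic
      · have := hf i hi
        rw [hAmid i hic.1 hic.2, Finset.mem_sdiff, Finset.notMem_singleton] at this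
        exact (this.2).symm
      · subst hic
        have := hf 1 hi; rw [hA1, Finset.mem_singleton] at this
        rw [this]; exact hab.symm
    by_cases el : j = s - 1
    · subst el
      have hAj : A (s-1) = LL (s-1) := hAg _ (by omega) (by omega) (by omega) (by omega) (by omega)
      have hbound : (LL (s-1) ∩ (({f (s-3), f (s-4)} : Finset ℕ) ∪ {a, b})).card
          < (LL (s-1)).card := by
        have b0 := inter_union_card (LL (s-1)) ({f (s-3), f (s-4)}) ({a, b})
        have b1 := inter_le_right_card (LL (s-1)) ({f (s-3), f (s-4)})
        have b2 := card2 (f (s-3)) (f (s-4))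
        have b3 := inter_le_right_card (LL (s-1)) ({a, b})
        have b4 := card2 a b
        have b5 := hcard (s-1) (by omega)
        omega
      obtain ⟨x, hx, hxT⟩ := exists_avoid _ _ hbound
      refine ⟨x, by rw [hAj]; exact hx, fun i hi => ?_⟩
      have hcases := bef_cases hs hjs hi
      have hmem : f i ∈ ({f (s-3), f (s-4)} : Finset ℕ) ∪ {a, b} := by
        rcases hcases with (h' | h' | h') | ⟨h', _⟩ | ⟨_, h' | h'⟩
        · have : i = s - 2 := by omega
          subst this
          have := hf (s-2) hi; rw [hAs2, Finset.mem_singleton] at this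
          rw [this]; simp
        · have : i = s - 3 := by omega
          subst this; simp
        · have : i = s - 4 := by omega
          subst this; simp
        · omega
        · subst h'
          have := hf 1 hi; rw [hA1, Finset.mem_singleton] at this
          rw [this]; simp
        · subst h'
          have := hf 2 hi; rw [hA2, Finset.mem_singleton] at this
          rw [this]; simp
      exact fun he => hxT (he ▸ hmem)
    by_cases e5 : s - 5 ≤ j ∧ j ≤ s - 3
    · rw [hAmid j e5.1 e5.2]
      apply step_generic _ _ _
      calc (bef s j).card ≤ _ := Finset.card_le_card (bef_sub3 hs hjs (by omega))
        _ ≤ 3 := card3 _ _ _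
        _ < (LL j \ {b}).card := by
            have := Finset.le_card_sdiff ({b} : Finset ℕ) (LL j)
            have := hcard j hjs
            simp only [Finset.card_singleton] at *
            omega
    · have hAj : A j = LL j := hAg _ e1 e2 e3 e4 e5
      rw [hAj]
      apply step_generic _ _ _
      calc (bef s j).card ≤ _ := Finset.card_le_card (bef_sub3 hs hjs (by omega))
        _ ≤ 3 := card3 _ _ _
        _ < (LL j).card := by rw [hcard _ hjs]; omega
  · intro f hfA
    have hbound : (LL 0 ∩ (({f (s-3), f (s-1)} : Finset ℕ) ∪ {a, b, c})).card
        < (LL 0).card := by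
      have b0 := inter_union_card (LL 0) ({f (s-3), f (s-1)}) ({a, b, c})
      have b1 := inter_le_right_card (LL 0) ({f (s-3), f (s-1)})
      have b2 := card2 (f (s-3)) (f (s-1))
      have b3 : (LL 0 ∩ ({a,b,c} : Finset ℕ)).card ≤ 2 := by
        rw [Finset.inter_comm]; exact h0
      have b4 := hcard 0 (by omega)
      omega
    obtain ⟨x, hx, hxT⟩ := exists_avoid _ _ hbound
    refine ⟨x, hx, fun i hi1 his hcond => ?_⟩
    have hmem : f i ∈ ({f (s-3), f (s-1)} : Finset ℕ) ∪ {a, b, c} := by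
      have : i = 1 ∨ i = 2 ∨ i = 3 ∨ i = s-3 ∨ i = s-2 ∨ i = s-1 := by omega
      rcases this with h' | h' | h' | h' | h' | h' <;> subst h'
      · have := hfA 1 (by omega) (by omega); rw [hA1, Finset.mem_singleton] at this
        rw [this]; simp
      · have := hfA 2 (by omega) (by omega); rw [hA2, Finset.mem_singleton] at this
        rw [this]; simp
      · have := hfA 3 (by omega) (by omega); rw [hA3, Finset.mem_singleton] at this
        rw [this]; simp
      · simp
      · have := hfA (s-2) (by omega) (by omega); rw [hAs2, Finset.mem_singleton] at this
        rw [this]; simp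
      · simp
    exact fun he => hxT (he ▸ hmem)

lemma planF {s : ℕ} (hs : 9 ≤ s) (LL : ℕ → Finset ℕ)
    (hcard : ∀ j, j < s → (LL j).card = 5)
    (a b c d : ℕ) (ha : a ∈ LL 1) (hb : b ∈ LL 2) (hc : c ∈ LL 3) (hd : d ∈ LL (s - 1))
    (hab : a ≠ b) (hac : a ≠ c) (hbc : b ≠ c) (hda : d ≠ a) (hdb : d ≠ b)
    (h2 : ((({a, d} : Finset ℕ)) ∩ LL (s - 2)).card ≤ 1)
    (h0 : ((({a, b, c, d} : Finset ℕ)) ∩ LL 0).card ≤ 2) :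
    ∃ C : ℕ → ℕ, (∀ j, j < s → C j ∈ LL j) ∧
      ∀ i j, i < j → j < s → (j - i ≤ 3 ∨ s - 3 ≤ j - i) → C i ≠ C j := by
  set A : ℕ → Finset ℕ := fun j =>
    if j = 1 then {a} else if j = 2 then {b} else if j = 3 then {c}
    else if j = s - 1 then {d}
    else if s - 4 ≤ j ∧ j ≤ s - 2 then LL j \ {d} else LL j with hA
  have hA1 : A 1 = {a} := by simp [hA]
  have hA2 : A 2 = {b} := by simp [hA]
  have hA3 : A 3 = {c} := by simp [hA]
  have hAs1 : A (s - 1) = {d} := by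
    simp only [hA]
    rw [if_neg (by omega), if_neg (by omega), if_neg (by omega)]
    simp
  have hAmid : ∀ j, s - 4 ≤ j → j ≤ s - 2 → A j = LL j \ {d} := by
    intro j hj1 hj2
    simp only [hA]
    rw [if_neg (by omega), if_neg (by omega), if_neg (by omega), if_neg (by omega),
      if_pos ⟨hj1, hj2⟩]
  have hAg : ∀ j, j ≠ 1 → j ≠ 2 → j ≠ 3 → j ≠ s - 1 → ¬(s - 4 ≤ j ∧ j ≤ s - 2) →
      A j = LL j := by
    intro j e1 e2 e3 e4 e5
    simp only [hA]
    rw [if_neg e1, if_neg e2, if_neg e3, if_neg e4, if_neg e5]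
  apply engine s hs LL A
  · intro j h1j hjs
    by_cases e1 : j = 1
    · subst e1; rw [hA1]; exact Finset.singleton_subset_iff.2 ha
    by_cases e2 : j = 2
    · subst e2; rw [hA2]; exact Finset.singleton_subset_iff.2 hb
    by_cases e3 : j = 3
    · subst e3; rw [hA3]; exact Finset.singleton_subset_iff.2 hc
    by_cases e4 : j = s - 1
    · subst e4; rw [hAs1]; exact Finset.singleton_subset_iff.2 hd
    by_cases e5 : s - 4 ≤ j ∧ j ≤ s - 2
    · rw [hAmid j e5.1 e5.2]; exact Finset.sdiff_subset
    · rw [hAg j e1 e2 e3 e4 e5]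
  · intro j h1j hjs f hf
    by_cases e1 : j = 1
    · subst e1
      exact ⟨a, by rw [hA1]; exact Finset.mem_singleton_self a,
        fun i hi => absurd (mem_bef.1 hi) (by omega)⟩
    by_cases e2 : j = 2
    · subst e2
      refine ⟨b, by rw [hA2]; exact Finset.mem_singleton_self b, fun i hi => ?_⟩
      have hi1 : i = 1 := by have := mem_bef.1 hi; omega
      subst hi1
      have := hf 1 hi; rw [hA1, Finset.mem_singleton] at this
      rw [this]; exact hab.symm
    by_cases e3 : j = 3
    · subst e3
      refine ⟨c, by rw [hA3]; exact Finset.mem_singleton_self c, fun i hi => ?_⟩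
      have hi1 : i = 1 ∨ i = 2 := by have := mem_bef.1 hi; omega
      rcases hi1 with hi1 | hi1 <;> subst hi1
      · have := hf 1 hi; rw [hA1, Finset.mem_singleton] at this
        rw [this]; exact hac.symm
      · have := hf 2 hi; rw [hA2, Finset.mem_singleton] at this
        rw [this]; exact hbc.symm
    by_cases e4 : j = s - 1
    · subst e4
      refine ⟨d, by rw [hAs1]; exact Finset.mem_singleton_self d, fun i hi => ?_⟩
      have hic : (s - 4 ≤ i ∧ i ≤ s - 2) ∨ i = 1 ∨ i = 2 := by
        have := bef_cases hs hjs hi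
        have := mem_bef.1 hi
        omega
      rcases hic with hic | hic | hic
      · have := hf i hi
        rw [hAmid i hic.1 hic.2, Finset.mem_sdiff, Finset.notMem_singleton] at this
        exact (this.2).symm
      · subst hic
        have := hf 1 hi; rw [hA1, Finset.mem_singleton] at this
        rw [this]; exact hda
      · subst hic
        have := hf 2 hi; rw [hA2, Finset.mem_singleton] at this
        rw [this]; exact hdb
    by_cases em : j = s - 2
    · subst em
      have hAj : A (s-2) = LL (s-2) \ {d} := hAmid _ (by omega) (by omega)
      have hsplit : (LL (s-2) ∩ {a}).card + (LL (s-2) ∩ {d}).card ≤ 1 := by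
        have hu : ({a, d} : Finset ℕ) ∩ LL (s-2) = ({a} ∩ LL (s-2)) ∪ ({d} ∩ LL (s-2)) := by
          rw [Finset.insert_eq, Finset.union_inter_distrib_right]
        have hdisj : Disjoint (({a} : Finset ℕ) ∩ LL (s-2)) (({d} : Finset ℕ) ∩ LL (s-2)) := by
          rw [Finset.disjoint_left]
          intro x hx1 hx2
          rw [Finset.mem_inter, Finset.mem_singleton] at hx1 hx2
          exact hda (hx2.1.symm.trans hx1.1)
        have := Finset.card_union_of_disjoint hdisj
        rw [← hu] at this
        rw [Finset.inter_comm (LL (s-2)) {a}, Finset.inter_comm (LL (s-2)) {d}]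
        omega
      have hAcard : (LL (s-2) \ {d}).card = 5 - (LL (s-2) ∩ {d}).card := by
        have := Finset.card_inter_add_card_sdiff (LL (s-2)) ({d} : Finset ℕ)
        have := hcard (s-2) (by omega)
        omega
      have hbound : ((LL (s-2) \ {d}) ∩ (({f (s-3), f (s-4), f (s-5)} : Finset ℕ) ∪ {a})).card
          < (LL (s-2) \ {d}).card := by
        have b0 := inter_union_card (LL (s-2) \ {d}) ({f (s-3), f (s-4), f (s-5)}) ({a})
        have b1 := inter_le_right_card (LL (s-2) \ {d}) ({f (s-3), f (s-4), f (s-5)})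
        have b2 := card3 (f (s-3)) (f (s-4)) (f (s-5))
        have b3 : ((LL (s-2) \ {d}) ∩ {a}).card ≤ (LL (s-2) ∩ {a}).card :=
          Finset.card_le_card (Finset.inter_subset_inter_right
            (Finset.sdiff_subset))
        omega
      obtain ⟨x, hx, hxT⟩ := exists_avoid _ _ hbound
      refine ⟨x, by rw [hAj]; exact hx, fun i hi => ?_⟩
      have hcases := bef_cases hs hjs hi
      have hmem : f i ∈ ({f (s-3), f (s-4), f (s-5)} : Finset ℕ) ∪ {a} := by
        rcases hcases with (h' | h' | h') | ⟨_, h'⟩ | ⟨h', _⟩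
        · have : i = s - 3 := by omega
          subst this; simp
        · have : i = s - 4 := by omega
          subst this; simp
        · have : i = s - 5 := by omega
          subst this; simp
        · subst h'
          have := hf 1 hi; rw [hA1, Finset.mem_singleton] at this
          rw [this]; simp
        · omega
      exact fun he => hxT (he ▸ hmem)
    by_cases e5 : s - 4 ≤ j ∧ j ≤ s - 2
    · rw [hAmid j e5.1 e5.2]
      apply step_generic _ _ _
      calc (bef s j).card ≤ _ := Finset.card_le_card (bef_sub3 hs hjs (by omega))
        _ ≤ 3 := card3 _ _ _
        _ < (LL j \ {d}).card := by
            have := Finset.le_card_sdiff ({d} : Finset ℕ) (LL j)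
            have := hcard j hjs
            simp only [Finset.card_singleton] at *
            omega
    · have hAj : A j = LL j := hAg _ e1 e2 e3 e4 e5
      rw [hAj]
      apply step_generic _ _ _
      calc (bef s j).card ≤ _ := Finset.card_le_card (bef_sub3 hs hjs (by omega))
        _ ≤ 3 := card3 _ _ _
        _ < (LL j).card := by rw [hcard _ hjs]; omega
  · intro f hfA
    have hbound : (LL 0 ∩ (({f (s-3), f (s-2)} : Finset ℕ) ∪ {a, b, c, d})).card
        < (LL 0).card := by
      have b0 := inter_union_card (LL 0) ({f (s-3), f (s-2)}) ({a, b, c, d})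
      have b1 := inter_le_right_card (LL 0) ({f (s-3), f (s-2)})
      have b2 := card2 (f (s-3)) (f (s-2))
      have b3 : (LL 0 ∩ ({a,b,c,d} : Finset ℕ)).card ≤ 2 := by
        rw [Finset.inter_comm]; exact h0
      have b4 := hcard 0 (by omega)
      omega
    obtain ⟨x, hx, hxT⟩ := exists_avoid _ _ hbound
    refine ⟨x, hx, fun i hi1 his hcond => ?_⟩
    have hmem : f i ∈ ({f (s-3), f (s-2)} : Finset ℕ) ∪ {a, b, c, d} := by
      have : i = 1 ∨ i = 2 ∨ i = 3 ∨ i = s-3 ∨ i = s-2 ∨ i = s-1 := by omega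
      rcases this with h' | h' | h' | h' | h' | h' <;> subst h'
      · have := hfA 1 (by omega) (by omega); rw [hA1, Finset.mem_singleton] at this
        rw [this]; simp
      · have := hfA 2 (by omega) (by omega); rw [hA2, Finset.mem_singleton] at this
        rw [this]; simp
      · have := hfA 3 (by omega) (by omega); rw [hA3, Finset.mem_singleton] at this
        rw [this]; simp
      · simp
      · simp
      · have := hfA (s-1) (by omega) (by omega); rw [hAs1, Finset.mem_singleton] at this
        rw [this]; simp
    exact fun he => hxT (he ▸ hmem)


lemma pick2 {S : Finset ℕ} (h : 3 ≤ S.card) (x y : ℕ) : ∃ b ∈ S, b ≠ x ∧ b ≠ y := by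
  obtain ⟨b, hb, hbT⟩ := exists_avoid S {x, y}
    (lt_of_le_of_lt (inter_le_right_card _ _) (lt_of_le_of_lt (card2 x y) (by omega)))
  refine ⟨b, hb, ?_, ?_⟩ <;> intro h' <;> subst h' <;> simp at hbT <;> tauto

lemma pair_in {u v : ℕ} {S : Finset ℕ} (huv : u ≠ v)
    (h : 2 ≤ (({u, v} : Finset ℕ) ∩ S).card) : u ∈ S ∧ v ∈ S := by
  have hsub : ({u, v} : Finset ℕ) ∩ S ⊆ {u, v} := Finset.inter_subset_left
  have hc2 : ({u, v} : Finset ℕ).card = 2 := by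
    rw [Finset.card_insert_of_notMem (by simp [huv]), Finset.card_singleton]
  have heq : ({u, v} : Finset ℕ) ∩ S = {u, v} :=
    Finset.eq_of_subset_of_card_le hsub (by omega)
  constructor
  · have : u ∈ ({u, v} : Finset ℕ) ∩ S := heq.symm ▸ (by simp)
    exact (Finset.mem_inter.1 this).2
  · have : v ∈ ({u, v} : Finset ℕ) ∩ S := heq.symm ▸ (by simp)
    exact (Finset.mem_inter.1 this).2

lemma triple_in {a b c : ℕ} {S : Finset ℕ}
    (h : ¬ ((({a, b, c} : Finset ℕ) ∩ S).card ≤ 2)) : a ∈ S ∧ b ∈ S ∧ c ∈ S := by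
  by_contra hc
  have hsub : ({a,b,c} : Finset ℕ) ∩ S ⊆ ({a,b,c} : Finset ℕ) \ ∅ := by simp [Finset.inter_subset_left]
  -- find an element not in S
  have : ∃ x ∈ ({a,b,c} : Finset ℕ), x ∉ S := by
    push_neg at hc
    by_cases hA : a ∈ S
    · by_cases hB : b ∈ S
      · exact ⟨c, by simp, hc hA hB⟩
      · exact ⟨b, by simp, hB⟩
    · exact ⟨a, by simp, hA⟩
  obtain ⟨x, hx1, hx2⟩ := this
  apply h
  have hsub2 : ({a,b,c} : Finset ℕ) ∩ S ⊆ ({a,b,c} : Finset ℕ).erase x := by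
    intro w hw
    rw [Finset.mem_inter] at hw
    rw [Finset.mem_erase]
    exact ⟨fun he => hx2 (he ▸ hw.2), hw.1⟩
  calc (({a,b,c} : Finset ℕ) ∩ S).card ≤ (({a,b,c} : Finset ℕ).erase x).card :=
        Finset.card_le_card hsub2
    _ ≤ ({a,b,c} : Finset ℕ).card - 1 := by
        rw [Finset.card_erase_of_mem hx1]
    _ ≤ 2 := by
        have := Finset.card_insert_le a ({b,c} : Finset ℕ)
        have := card2 b c
        omega

lemma pair_sub_out {a b : ℕ} {S : Finset ℕ} (ha : a ∉ S) :
    ((({a, b} : Finset ℕ)) ∩ S).card ≤ 1 := by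
  have hsub : ({a, b} : Finset ℕ) ∩ S ⊆ {b} := by
    intro x hx
    rw [Finset.mem_inter] at hx
    simp only [Finset.mem_insert, Finset.mem_singleton] at hx ⊢
    rcases hx.1 with h | h
    · exact absurd (h ▸ hx.2) ha
    · exact h
  exact (Finset.card_le_card hsub).trans (by simp)

lemma triple_sub_out {a b c : ℕ} {S : Finset ℕ} (ha : a ∉ S) (hc : c ∉ S) :
    ((({a, b, c} : Finset ℕ)) ∩ S).card ≤ 1 := by
  have hsub : ({a, b, c} : Finset ℕ) ∩ S ⊆ {b} := by
    intro x hx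
    rw [Finset.mem_inter] at hx
    simp only [Finset.mem_insert, Finset.mem_singleton] at hx ⊢
    rcases hx.1 with h | h | h
    · exact absurd (h ▸ hx.2) ha
    · exact h
    · exact absurd (h ▸ hx.2) hc
  exact (Finset.card_le_card hsub).trans (by simp)

lemma quad_sub_out14 {a b c d : ℕ} {S : Finset ℕ} (ha : a ∉ S) (hd : d ∉ S) :
    ((({a, b, c, d} : Finset ℕ)) ∩ S).card ≤ 2 := by
  have hsub : ({a, b, c, d} : Finset ℕ) ∩ S ⊆ {b, c} := by
    intro x hx
    rw [Finset.mem_inter] at hx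
    simp only [Finset.mem_insert, Finset.mem_singleton] at hx ⊢
    rcases hx.1 with h | h | h | h
    · exact absurd (h ▸ hx.2) ha
    · exact Or.inl h
    · exact Or.inr h
    · exact absurd (h ▸ hx.2) hd
  exact (Finset.card_le_card hsub).trans (card2 b c)

lemma quad_sub_out {a b c d : ℕ} {S : Finset ℕ} (ha : a ∉ S) (hc : c ∉ S) :
    ((({a, b, c, d} : Finset ℕ)) ∩ S).card ≤ 2 := by
  have hsub : ({a, b, c, d} : Finset ℕ) ∩ S ⊆ {b, d} := by
    intro x hx
    rw [Finset.mem_inter] at hx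
    simp only [Finset.mem_insert, Finset.mem_singleton] at hx ⊢
    rcases hx.1 with h | h | h | h
    · exact absurd (h ▸ hx.2) ha
    · exact Or.inl h
    · exact absurd (h ▸ hx.2) hc
    · exact Or.inr h
  exact (Finset.card_le_card hsub).trans (card2 b d)

/-- consequence of plan C failing at a seam through which a distance-4 pair of lists meet. -/
lemma setC {A2 B C D E : Finset ℕ} (hB : B.card = 5) (hC : C.card = 5) (hE : E.card = 5)
    {y : ℕ} (hyD : y ∈ D) (hyA : y ∈ A2)
    (hfail : ∀ a b c, a ∈ C → b ∈ D → b ∈ A2 → c ∈ E → a ≠ b → a ≠ c → b ≠ c →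
      (a ∈ B ∧ b ∈ B ∧ c ∈ B)) :
    C = B ∧ E = B := by
  have hyB : y ∈ B := by
    obtain ⟨a, haC, hay, _⟩ := pick2 (by omega : 3 ≤ C.card) y y
    obtain ⟨c, hcE, hcy, hca⟩ := pick2 (by omega : 3 ≤ E.card) y a
    exact (hfail a y c haC hyD hyA hcE hay (Ne.symm hca) (Ne.symm hcy)).2.1
  have hCB : C ⊆ B := by
    intro a ha
    by_cases hay : a = y
    · exact hay ▸ hyB
    obtain ⟨c, hcE, hcy, hca⟩ := pick2 (by omega : 3 ≤ E.card) y a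
    exact (hfail a y c ha hyD hyA hcE hay (Ne.symm hca) (Ne.symm hcy)).1
  have hEB : E ⊆ B := by
    intro c hc
    by_cases hcy : c = y
    · exact hcy ▸ hyB
    obtain ⟨a, haC, hay, hac⟩ := pick2 (by omega : 3 ≤ C.card) y c
    exact (hfail a y c haC hyD hyA hc hay hac (Ne.symm hcy)).2.2
  exact ⟨Finset.eq_of_subset_of_card_le hCB (by omega),
         Finset.eq_of_subset_of_card_le hEB (by omega)⟩

/-- the main local combinatorial lemma, "case C ⊆ B". -/
lemma caseCB {A3 A2 A1 B C D E : Finset ℕ}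
    (hA3 : A3.card = 5) (hA2 : A2.card = 5) (hA1 : A1.card = 5) (hB : B.card = 5)
    (hC : C.card = 5) (hD : D.card = 5) (hE : E.card = 5)
    (d1 : C ∩ A3 = ∅) (d2 : D ∩ A2 = ∅) (d3 : E ∩ A1 = ∅)
    (hApos : ¬ ∃ a b c, a ∈ C ∧ b ∈ D ∧ c ∈ E ∧ a ≠ b ∧ a ≠ c ∧ b ≠ c ∧
      ((({a,b} : Finset ℕ)) ∩ A1).card ≤ 1 ∧ ((({a,b,c} : Finset ℕ)) ∩ B).card ≤ 1)
    (hAneg : ¬ ∃ a b c, a ∈ A1 ∧ b ∈ A2 ∧ c ∈ A3 ∧ a ≠ b ∧ a ≠ c ∧ b ≠ c ∧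
      ((({a,b} : Finset ℕ)) ∩ C).card ≤ 1 ∧ ((({a,b,c} : Finset ℕ)) ∩ B).card ≤ 1)
    (hCB : C ⊆ B) : False := by
  have hCeq : C = B := Finset.eq_of_subset_of_card_le hCB (by omega)
  have hA3B : ∀ x, x ∈ A3 → x ∉ B := by
    intro x hx hxB
    have : x ∈ C ∩ A3 := Finset.mem_inter.2 ⟨hCeq ▸ hxB, hx⟩
    rw [d1] at this
    exact absurd this (Finset.notMem_empty x)
  -- A1 ⊆ B
  have hA1B : A1 ⊆ B := by
    intro a ha
    by_contra haB
    obtain ⟨b, hb, hba, _⟩ := pick2 (by omega : 3 ≤ A2.card) a a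
    obtain ⟨c, hc, hca, hcb⟩ := pick2 (by omega : 3 ≤ A3.card) a b
    apply hAneg
    refine ⟨a, b, c, ha, hb, hc, Ne.symm hba, Ne.symm hca, Ne.symm hcb, ?_, ?_⟩
    · rw [hCeq]; exact pair_sub_out haB
    · exact triple_sub_out haB (hA3B c hc)
  have hA1eq : A1 = B := Finset.eq_of_subset_of_card_le hA1B (by omega)
  -- A2 ⊆ B
  have hA2B : A2 ⊆ B := by
    intro b hb
    by_contra hbB
    obtain ⟨a, ha, hab', _⟩ := pick2 (by omega : 3 ≤ A1.card) b b
    obtain ⟨c, hc, hca, hcb⟩ := pick2 (by omega : 3 ≤ A3.card) a b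
    apply hAneg
    have hbC : b ∉ C := by rw [hCeq]; exact hbB
    refine ⟨a, b, c, ha, hb, hc, hab', Ne.symm hca, Ne.symm hcb, ?_, ?_⟩
    · -- {a,b} ∩ C with b ∉ C : card ≤ 1
      rw [Finset.pair_comm]
      exact pair_sub_out hbC
    · -- {a,b,c} ∩ B with b ∉ B, c ∉ B
      have hsub : ({a, b, c} : Finset ℕ) ∩ B ⊆ {a} := by
        intro x hx
        rw [Finset.mem_inter] at hx
        simp only [Finset.mem_insert, Finset.mem_singleton] at hx ⊢
        rcases hx.1 with h | h | h
        · exact h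
        · exact absurd (h ▸ hx.2) hbB
        · exact absurd (h ▸ hx.2) (hA3B c hc)
      exact (Finset.card_le_card hsub).trans (by simp)
  have hA2eq : A2 = B := Finset.eq_of_subset_of_card_le hA2B (by omega)
  -- now D ∩ B = ∅ and E ∩ B = ∅, success for plan A+
  have hDB : ∀ x, x ∈ D → x ∉ B := by
    intro x hx hxB
    have : x ∈ D ∩ A2 := Finset.mem_inter.2 ⟨hx, hA2eq ▸ hxB⟩
    rw [d2] at this
    exact absurd this (Finset.notMem_empty x)
  have hEB : ∀ x, x ∈ E → x ∉ B := by
    intro x hx hxB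
    have : x ∈ E ∩ A1 := Finset.mem_inter.2 ⟨hx, hA1eq ▸ hxB⟩
    rw [d3] at this
    exact absurd this (Finset.notMem_empty x)
  obtain ⟨a, ha, _, _⟩ := pick2 (by omega : 3 ≤ C.card) 0 0
  obtain ⟨b, hb, hba, _⟩ := pick2 (by omega : 3 ≤ D.card) a a
  obtain ⟨c, hc, hca, hcb⟩ := pick2 (by omega : 3 ≤ E.card) a b
  apply hApos
  have haB : a ∈ B := hCB ha
  refine ⟨a, b, c, ha, hb, hc, Ne.symm hba, Ne.symm hca, Ne.symm hcb, ?_, ?_⟩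
  · rw [hA1eq, Finset.pair_comm]
    exact pair_sub_out (hDB b hb)
  · have hsub : ({a, b, c} : Finset ℕ) ∩ B ⊆ {a} := by
      intro x hx
      rw [Finset.mem_inter] at hx
      simp only [Finset.mem_insert, Finset.mem_singleton] at hx ⊢
      rcases hx.1 with h | h | h
      · exact h
      · exact absurd (h ▸ hx.2) (hDB b hb)
      · exact absurd (h ▸ hx.2) (hEB c hc)
    exact (Finset.card_le_card hsub).trans (by simp)

/-- the full local impossibility lemma -/
lemma localUnsat {A3 A2 A1 B C D E : Finset ℕ}
    (hA3 : A3.card = 5) (hA2 : A2.card = 5) (hA1 : A1.card = 5) (hB : B.card = 5)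
    (hC : C.card = 5) (hD : D.card = 5) (hE : E.card = 5)
    (d1 : C ∩ A3 = ∅) (d2 : D ∩ A2 = ∅) (d3 : E ∩ A1 = ∅)
    (hApos : ¬ ∃ a b c, a ∈ C ∧ b ∈ D ∧ c ∈ E ∧ a ≠ b ∧ a ≠ c ∧ b ≠ c ∧
      ((({a,b} : Finset ℕ)) ∩ A1).card ≤ 1 ∧ ((({a,b,c} : Finset ℕ)) ∩ B).card ≤ 1)
    (hAneg : ¬ ∃ a b c, a ∈ A1 ∧ b ∈ A2 ∧ c ∈ A3 ∧ a ≠ b ∧ a ≠ c ∧ b ≠ c ∧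
      ((({a,b} : Finset ℕ)) ∩ C).card ≤ 1 ∧ ((({a,b,c} : Finset ℕ)) ∩ B).card ≤ 1)
    (hFpos : ¬ ∃ a b c d, a ∈ C ∧ b ∈ D ∧ c ∈ E ∧ d ∈ A1 ∧ a ≠ b ∧ a ≠ c ∧ b ≠ c ∧
      d ≠ a ∧ d ≠ b ∧
      ((({a,d} : Finset ℕ)) ∩ A2).card ≤ 1 ∧ ((({a,b,c,d} : Finset ℕ)) ∩ B).card ≤ 2)
    (hFneg : ¬ ∃ a b c d, a ∈ A1 ∧ b ∈ A2 ∧ c ∈ A3 ∧ d ∈ C ∧ a ≠ b ∧ a ≠ c ∧ b ≠ c ∧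
      d ≠ a ∧ d ≠ b ∧
      ((({a,d} : Finset ℕ)) ∩ D).card ≤ 1 ∧ ((({a,b,c,d} : Finset ℕ)) ∩ B).card ≤ 2) :
    False := by
  -- step T: no two distinct elements u ∈ C \ B, v ∈ A1 \ B
  have stepT : ∀ u v, u ∈ C → u ∉ B → v ∈ A1 → v ∉ B → u = v := by
    intro u v huC huB hvA hvB
    by_contra huv
    -- plan F+ with a = u, d = v
    have hvA2 : u ∈ A2 ∧ v ∈ A2 := by
      obtain ⟨b, hb, hbu, hbv⟩ := pick2 (by omega : 3 ≤ D.card) u v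
      obtain ⟨c, hc, hcu, hcb⟩ := pick2 (by omega : 3 ≤ E.card) u b
      have hQ : ((({u,b,c,v} : Finset ℕ)) ∩ B).card ≤ 2 := quad_sub_out14 huB hvB
      by_contra hP
      apply hFpos
      refine ⟨u, b, c, v, huC, hb, hc, hvA, Ne.symm hbu, Ne.symm hcu, Ne.symm hcb,
        Ne.symm huv, Ne.symm hbv, ?_, hQ⟩
      by_contra hP2
      push_neg at hP2
      exact hP (pair_in huv (by omega))
    have hvD : u ∈ D ∧ v ∈ D := by
      obtain ⟨b, hb, hbu, hbv⟩ := pick2 (by omega : 3 ≤ A2.card) u v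
      obtain ⟨c, hc, hcv, hcb⟩ := pick2 (by omega : 3 ≤ A3.card) v b
      have hQ : ((({v,b,c,u} : Finset ℕ)) ∩ B).card ≤ 2 := quad_sub_out14 hvB huB
      by_contra hP
      apply hFneg
      refine ⟨v, b, c, u, hvA, hb, hc, huC, Ne.symm hbv, Ne.symm hcv, Ne.symm hcb,
        huv, Ne.symm hbu, ?_, hQ⟩
      by_contra hP2
      push_neg at hP2
      have := pair_in (fun h => huv h.symm) (by omega : 2 ≤ ((({v,u} : Finset ℕ)) ∩ D).card)
      exact hP ⟨this.2, this.1⟩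
    have : u ∈ D ∩ A2 := Finset.mem_inter.2 ⟨hvD.1, hvA2.1⟩
    rw [d2] at this
    exact absurd this (Finset.notMem_empty u)
  -- trichotomy
  by_cases hCB : C ⊆ B
  · exact caseCB hA3 hA2 hA1 hB hC hD hE d1 d2 d3 hApos hAneg hCB
  by_cases hA1B : A1 ⊆ B
  · -- mirror case: apply caseCB with swapped roles
    apply caseCB hE hD hC hB hA1 hA2 hA3 (by rwa [Finset.inter_comm] at d3)
      (by rwa [Finset.inter_comm] at d2) (by rwa [Finset.inter_comm] at d1)
      hAneg hApos hA1B
  -- case III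
  rw [Finset.not_subset] at hCB hA1B
  obtain ⟨u, huC, huB⟩ := hCB
  obtain ⟨v, hvA, hvB⟩ := hA1B
  have huv : u = v := stepT u v huC huB hvA hvB
  subst huv
  -- u = v =: x with x ∈ C ∩ A1, x ∉ B
  have hxE : u ∉ E := by
    intro h
    have : u ∈ E ∩ A1 := Finset.mem_inter.2 ⟨h, hvA⟩
    rw [d3] at this; exact absurd this (Finset.notMem_empty u)
  have hxA3 : u ∉ A3 := by
    intro h
    have : u ∈ C ∩ A3 := Finset.mem_inter.2 ⟨huC, h⟩
    rw [d1] at this; exact absurd this (Finset.notMem_empty u)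
  -- ∃ c0 ∈ E \ B
  have hc0 : ∃ c0 ∈ E, c0 ∉ B := by
    by_contra h
    push_neg at h
    have hEB : E = B := Finset.eq_of_subset_of_card_le h (by omega)
    -- then E ∩ A1 = ∅ gives A1 ∩ B = ∅, but A1 \ B ⊆ {u} so A1 ∩ B ≠ ∅
    obtain ⟨y, hy, hyu, _⟩ := pick2 (by omega : 3 ≤ A1.card) u u
    have hyB : y ∈ B := by
      by_contra hyB
      exact hyu (stepT u y huC huB hy hyB).symm
    have : y ∈ E ∩ A1 := Finset.mem_inter.2 ⟨hEB ▸ hyB, hy⟩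
    rw [d3] at this; exact absurd this (Finset.notMem_empty y)
  obtain ⟨c0, hc0E, hc0B⟩ := hc0
  have hc1 : ∃ c1 ∈ A3, c1 ∉ B := by
    by_contra h
    push_neg at h
    have hA3B : A3 = B := Finset.eq_of_subset_of_card_le h (by omega)
    obtain ⟨y, hy, hyu, _⟩ := pick2 (by omega : 3 ≤ C.card) u u
    have hyB : y ∈ B := by
      by_contra hyB
      exact hyu (stepT y u hy hyB hvA huB)
    have : y ∈ C ∩ A3 := Finset.mem_inter.2 ⟨hy, hA3B ▸ hyB⟩
    rw [d1] at this; exact absurd this (Finset.notMem_empty y)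
  obtain ⟨c1, hc1A3, hc1B⟩ := hc1
  -- plan F+ with a = u, c = c0 gives u ∈ A2
  have huA2 : u ∈ A2 := by
    have hc0u : c0 ≠ u := fun h => hxE (h ▸ hc0E)
    obtain ⟨b, hb, hbu, hbc0⟩ := pick2 (by omega : 3 ≤ D.card) u c0
    obtain ⟨d, hd, hdu, hdb⟩ := pick2 (by omega : 3 ≤ A1.card) u b
    have hQ : ((({u, b, c0, d} : Finset ℕ)) ∩ B).card ≤ 2 := quad_sub_out huB hc0B
    by_contra hP
    apply hFpos
    refine ⟨u, b, c0, d, huC, hb, hc0E, hd, Ne.symm hbu, Ne.symm hc0u, fun h => hbc0 h,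
      hdu, hdb, ?_, hQ⟩
    by_contra hP2
    push_neg at hP2
    exact hP (pair_in (Ne.symm hdu) (by omega)).1
  have huD : u ∈ D := by
    have hc1u : c1 ≠ u := fun h => hxA3 (h ▸ hc1A3)
    obtain ⟨b, hb, hbu, hbc1⟩ := pick2 (by omega : 3 ≤ A2.card) u c1
    obtain ⟨d, hd, hdu, hdb⟩ := pick2 (by omega : 3 ≤ C.card) u b
    have hQ : ((({u, b, c1, d} : Finset ℕ)) ∩ B).card ≤ 2 := quad_sub_out huB hc1B
    by_contra hP
    apply hFneg
    refine ⟨u, b, c1, d, hvA, hb, hc1A3, hd, Ne.symm hbu, Ne.symm hc1u, fun h => hbc1 h,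
      hdu, hdb, ?_, hQ⟩
    by_contra hP2
    push_neg at hP2
    exact hP (pair_in (Ne.symm hdu) (by omega)).1
  have : u ∈ D ∩ A2 := Finset.mem_inter.2 ⟨huD, huA2⟩
  rw [d2] at this
  exact absurd this (Finset.notMem_empty u)

def patc (aa j : ℕ) : ℕ := if j < 4*aa then j % 4 else (j - 4*aa) % 5

lemma patc_lt (aa j : ℕ) : patc aa j < 5 := by unfold patc; split <;> omega

lemma patc_proper {s aa bb : ℕ} (hab : s = 4*aa + 5*bb) {i j : ℕ}
    (hij : i < j) (hj : j < s) (hcond : j - i ≤ 3 ∨ s - 3 ≤ j - i) :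
    patc aa i ≠ patc aa j := by
  unfold patc
  split <;> split <;> omega

lemma decomp : ∀ s : ℕ, 9 ≤ s → s ≠ 11 → ∃ a b, s = 4*a + 5*b := by
  intro s
  induction s using Nat.strong_induction_on with
  | _ s ih =>
    intro h9 h11
    by_cases h : s ≤ 15
    · interval_cases s
      · exact ⟨1, 1, by omega⟩
      · exact ⟨0, 2, by omega⟩
      · omega
      · exact ⟨3, 0, by omega⟩
      · exact ⟨2, 1, by omega⟩
      · exact ⟨1, 2, by omega⟩
      · exact ⟨0, 3, by omega⟩
    · obtain ⟨a, b, hab⟩ := ih (s - 4) (by omega) (by omega) (by omega)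
      exact ⟨a + 1, b, by omega⟩

lemma allEqualChoosable {s : ℕ} (hs : 9 ≤ s) (hs11 : s ≠ 11)
    (L : ZMod 1 × ZMod s → Finset ℕ) (X : Finset ℕ) (hX : X.card = 5)
    (hall : ∀ v, L v = X) : IsLChoosable (T 1 s 2) L := by
  obtain ⟨aa, bb, hab⟩ := decomp s hs hs11
  set g := X.orderEmbOfFin hX with hg
  apply wrap hs L 0 1 (Or.inl rfl) (fun j => g ⟨patc aa j, patc_lt aa j⟩)
  · intro j hj
    rw [hall]
    exact Finset.orderEmbOfFin_mem X hX _
  · intro i j hij hj hcond h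
    exact patc_proper hab hij hj hcond (congrArg Fin.val (g.injective h))

theorem choosable5 {s : ℕ} (hs : 9 ≤ s) (hs11 : s ≠ 11) : Choosable (T 1 s 2) 5 := by
  haveI : NeZero s := ⟨by omega⟩
  intro L hL
  choose L' hs5 hc5 using fun v => Finset.exists_subset_card_eq (hL v)
  suffices h : IsLChoosable (T 1 s 2) L' by
    obtain ⟨c, h1, h2⟩ := h
    exact ⟨c, fun v => hs5 v (h1 v), h2⟩
  set M : ZMod s → Finset ℕ := fun z => L' (0, z) with hM
  have hMcard : ∀ z, (M z).card = 5 := fun z => hc5 _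
  have hMv : ∀ v : ZMod 1 × ZMod s, L' v = M v.2 := by
    intro v
    have hv : v = (0, v.2) := Prod.ext (Subsingleton.elim _ _) rfl
    rw [hM]
    exact congrArg L' hv
  have csub : ∀ k : ℕ, k ≤ s → ((s - k : ℕ) : ZMod s) = -(k : ZMod s) := by
    intro k hk
    rw [Nat.cast_sub hk, ZMod.natCast_self]
    ring
  set LLf : ZMod s → ZMod s → ℕ → Finset ℕ :=
    (fun p ε j => M (p + ε * (j : ZMod s))) with hLLf
  have T1 : ∀ (p x : ZMod s) (j : ℕ), p + (j : ZMod s) = x → LLf p 1 j = M x := by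
    intro p x j h
    rw [hLLf]
    exact congrArg M (by rw [← h]; ring)
  have T2 : ∀ (p x : ZMod s) (j : ℕ), p - (j : ZMod s) = x → LLf p (-1) j = M x := by
    intro p x j h
    rw [hLLf]
    exact congrArg M (by rw [← h]; ring)
  have U1 : ∀ (p x : ZMod s) (k : ℕ), k ≤ s → p - (k : ZMod s) = x → LLf p 1 (s - k) = M x := by
    intro p x k hk h
    rw [hLLf]
    exact congrArg M (by rw [csub k hk, ← h]; ring)
  have U2 : ∀ (p x : ZMod s) (k : ℕ), k ≤ s → p + (k : ZMod s) = x → LLf p (-1) (s - k) = M x := by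
    intro p x k hk h
    rw [hLLf]
    exact congrArg M (by rw [csub k hk, ← h]; ring)
  set PA : ZMod s → ZMod s → Prop := fun p ε => ∃ a b c, a ∈ LLf p ε 1 ∧ b ∈ LLf p ε 2 ∧
    c ∈ LLf p ε 3 ∧ a ≠ b ∧ a ≠ c ∧ b ≠ c ∧
    ((({a,b} : Finset ℕ)) ∩ LLf p ε (s-1)).card ≤ 1 ∧
    ((({a,b,c} : Finset ℕ)) ∩ LLf p ε 0).card ≤ 1 with hPA
  set PC : ZMod s → ZMod s → Prop := fun p ε => ∃ a b c, a ∈ LLf p ε 1 ∧ b ∈ LLf p ε 2 ∧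
    b ∈ LLf p ε (s-2) ∧ c ∈ LLf p ε 3 ∧ a ≠ b ∧ a ≠ c ∧ b ≠ c ∧
    ((({a,b,c} : Finset ℕ)) ∩ LLf p ε 0).card ≤ 2 with hPC
  set PF : ZMod s → ZMod s → Prop := fun p ε => ∃ a b c d, a ∈ LLf p ε 1 ∧ b ∈ LLf p ε 2 ∧
    c ∈ LLf p ε 3 ∧ d ∈ LLf p ε (s-1) ∧ a ≠ b ∧ a ≠ c ∧ b ≠ c ∧ d ≠ a ∧ d ≠ b ∧
    ((({a,d} : Finset ℕ)) ∩ LLf p ε (s-2)).card ≤ 1 ∧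
    ((({a,b,c,d} : Finset ℕ)) ∩ LLf p ε 0).card ≤ 2 with hPF
  by_cases hplan : ∃ p ε : ZMod s, (ε = 1 ∨ ε = -1) ∧ (PA p ε ∨ PC p ε ∨ PF p ε)
  · obtain ⟨p, ε, hε, hcase⟩ := hplan
    have hLL : ∀ j, j < s → ((fun j : ℕ => LLf p ε j) j).card = 5 := fun j _ => hMcard _
    rcases hcase with h | h | h
    · obtain ⟨a, b, c, h1, h2, h3, h4, h5, h6, h7, h8⟩ := h
      obtain ⟨C, hC1, hC2⟩ := planA hs (fun j : ℕ => LLf p ε j) hLL a b c h1 h2 h3 h4 h5 h6 h7 h8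
      exact wrap hs L' p ε hε C (fun j hj => hC1 j hj) hC2
    · obtain ⟨a, b, c, h1, h2, h2', h3, h4, h5, h6, h7⟩ := h
      obtain ⟨C, hC1, hC2⟩ := planC hs (fun j : ℕ => LLf p ε j) hLL a b c h1 h2 h2' h3 h4 h5 h6 h7
      exact wrap hs L' p ε hε C (fun j hj => hC1 j hj) hC2
    · obtain ⟨a, b, c, d, h1, h2, h3, h4, h5, h6, h7, h8, h9, h10, h11⟩ := h
      obtain ⟨C, hC1, hC2⟩ := planF hs (fun j : ℕ => LLf p ε j) hLL a b c d h1 h2 h3 h4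
        h5 h6 h7 h8 h9 h10 h11
      exact wrap hs L' p ε hε C (fun j hj => hC1 j hj) hC2
  · have fA : ∀ p ε : ZMod s, (ε = 1 ∨ ε = -1) → ¬ PA p ε :=
      fun p ε hε h => hplan ⟨p, ε, hε, Or.inl h⟩
    have fC : ∀ p ε : ZMod s, (ε = 1 ∨ ε = -1) → ¬ PC p ε :=
      fun p ε hε h => hplan ⟨p, ε, hε, Or.inr (Or.inl h)⟩
    have fF : ∀ p ε : ZMod s, (ε = 1 ∨ ε = -1) → ¬ PF p ε :=
      fun p ε hε h => hplan ⟨p, ε, hε, Or.inr (Or.inr h)⟩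
    by_cases hnon : ∃ r : ZMod s, (M r ∩ M (r + 4)).Nonempty
    · -- spreading: all lists are equal
      obtain ⟨r, hne⟩ := hnon
      have key : ∀ t : ZMod s, (M t ∩ M (t + 4)).Nonempty →
          M (t + 1) = M (t + 2) ∧ (M (t + 1) ∩ M (t + 1 + 4)).Nonempty := by
        intro t hyne
        obtain ⟨y, hy⟩ := hyne
        rw [Finset.mem_inter] at hy
        have failp : ∀ a b c : ℕ, a ∈ M (t+3) → b ∈ M (t+4) → b ∈ M t → c ∈ M (t+5) →
            a ≠ b → a ≠ c → b ≠ c → (a ∈ M (t+2) ∧ b ∈ M (t+2) ∧ c ∈ M (t+2)) := by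
          intro a b c ha hb hb2 hc n1 n2 n3
          by_contra hno
          apply fC (t+2) 1 (Or.inl rfl)
          rw [hPC]
          refine ⟨a, b, c, ?_, ?_, ?_, ?_, n1, n2, n3, ?_⟩
          · rw [T1 (t+2) (t+3) 1 (by push_cast; ring)]; exact ha
          · rw [T1 (t+2) (t+4) 2 (by push_cast; ring)]; exact hb
          · rw [U1 (t+2) t 2 (by omega) (by push_cast; ring)]; exact hb2
          · rw [T1 (t+2) (t+5) 3 (by push_cast; ring)]; exact hc
          · rw [T1 (t+2) (t+2) 0 (by push_cast; ring)]
            exact triple_not_all _ a b c hno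
        have failm : ∀ a b c : ℕ, a ∈ M (t+1) → b ∈ M t → b ∈ M (t+4) → c ∈ M (t-1) →
            a ≠ b → a ≠ c → b ≠ c → (a ∈ M (t+2) ∧ b ∈ M (t+2) ∧ c ∈ M (t+2)) := by
          intro a b c ha hb hb2 hc n1 n2 n3
          by_contra hno
          apply fC (t+2) (-1) (Or.inr rfl)
          rw [hPC]
          refine ⟨a, b, c, ?_, ?_, ?_, ?_, n1, n2, n3, ?_⟩
          · rw [T2 (t+2) (t+1) 1 (by push_cast; ring)]; exact ha
          · rw [T2 (t+2) t 2 (by push_cast; ring)]; exact hb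
          · rw [U2 (t+2) (t+4) 2 (by omega) (by push_cast; ring)]; exact hb2
          · rw [T2 (t+2) (t-1) 3 (by push_cast; ring)]; exact hc
          · rw [T2 (t+2) (t+2) 0 (by push_cast; ring)]
            exact triple_not_all _ a b c hno
        have res1 := setC (hMcard (t+2)) (hMcard (t+3)) (hMcard (t+5))
          (y := y) hy.2 hy.1 failp
        have res2 := setC (hMcard (t+2)) (hMcard (t+1)) (hMcard (t-1))
          (y := y) hy.1 hy.2 failm
        refine ⟨res2.1, ?_⟩
        have e5 : M (t + 1 + 4) = M (t + 5) := congrArg M (by ring)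
        rw [e5, res1.2, res2.1, Finset.inter_self]
        exact Finset.card_pos.1 (by rw [hMcard]; omega)
      have HN : ∀ k : ℕ, (M (r + (k : ZMod s)) ∩ M (r + (k : ZMod s) + 4)).Nonempty := by
        intro k
        induction k with
        | zero => simpa using hne
        | succ k ih =>
          have h2 := (key (r + (k : ZMod s)) ih).2
          have e : r + ((k+1 : ℕ) : ZMod s) = r + (k : ZMod s) + 1 := by push_cast; ring
          rw [e]
          exact h2
      have HEq : ∀ k : ℕ, M (r + (k : ZMod s) + 1) = M (r + (k : ZMod s) + 2) :=
        fun k => (key (r + (k : ZMod s)) (HN k)).1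
      have Hconst : ∀ k : ℕ, M (r + 1 + (k : ZMod s)) = M (r + 1) := by
        intro k
        induction k with
        | zero => simp
        | succ k ih =>
          have e : r + 1 + ((k+1 : ℕ) : ZMod s) = r + (k : ZMod s) + 2 := by push_cast; ring
          have e2 : r + (k : ZMod s) + 1 = r + 1 + (k : ZMod s) := by ring
          rw [e, ← HEq k, e2, ih]
      have hallM : ∀ z : ZMod s, M z = M (r + 1) := by
        intro z
        have hzv : z = r + 1 + (((z - (r+1)).val : ℕ) : ZMod s) := by
          rw [ZMod.natCast_val, ZMod.cast_id]; ring
        exact (congrArg M hzv).trans (Hconst _)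
      apply allEqualChoosable hs hs11 L' (M (r+1)) (hMcard _)
      intro v
      rw [hMv v, hallM]
    · -- H4strong world: impossible by the local lemma
      exfalso
      push_neg at hnon
      have hdisj : ∀ r : ZMod s, M r ∩ M (r + 4) = ∅ :=
        fun r => hnon r
      refine localUnsat (hMcard (-3)) (hMcard (-2)) (hMcard (-1)) (hMcard 0)
        (hMcard 1) (hMcard 2) (hMcard 3) ?_ ?_ ?_ ?_ ?_ ?_ ?_
      · rw [Finset.inter_comm]
        have := hdisj (-3)
        rwa [show (-3 : ZMod s) + 4 = 1 by ring] at this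
      · rw [Finset.inter_comm]
        have := hdisj (-2)
        rwa [show (-2 : ZMod s) + 4 = 2 by ring] at this
      · rw [Finset.inter_comm]
        have := hdisj (-1)
        rwa [show (-1 : ZMod s) + 4 = 3 by ring] at this
      · -- ¬ (plan A, orientation +1, seam 0)
        intro ⟨a, b, c, h1, h2, h3, h4, h5, h6, h7, h8⟩
        apply fA 0 1 (Or.inl rfl)
        rw [hPA]
        refine ⟨a, b, c, ?_, ?_, ?_, h4, h5, h6, ?_, ?_⟩
        · rw [T1 0 1 1 (by push_cast; ring)]; exact h1
        · rw [T1 0 2 2 (by push_cast; ring)]; exact h2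
        · rw [T1 0 3 3 (by push_cast; ring)]; exact h3
        · rw [U1 0 (-1) 1 (by omega) (by push_cast; ring)]; exact h7
        · rw [T1 0 0 0 (by push_cast; ring)]; exact h8
      · -- ¬ (plan A, orientation -1, seam 0)
        intro ⟨a, b, c, h1, h2, h3, h4, h5, h6, h7, h8⟩
        apply fA 0 (-1) (Or.inr rfl)
        rw [hPA]
        refine ⟨a, b, c, ?_, ?_, ?_, h4, h5, h6, ?_, ?_⟩
        · rw [T2 0 (-1) 1 (by push_cast; ring)]; exact h1
        · rw [T2 0 (-2) 2 (by push_cast; ring)]; exact h2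
        · rw [T2 0 (-3) 3 (by push_cast; ring)]; exact h3
        · rw [U2 0 1 1 (by omega) (by push_cast; ring)]; exact h7
        · rw [T2 0 0 0 (by push_cast; ring)]; exact h8
      · -- ¬ (plan F, orientation +1, seam 0)
        intro ⟨a, b, c, d, h1, h2, h3, h4, h5, h6, h7, h8, h9, h10, h11⟩
        apply fF 0 1 (Or.inl rfl)
        rw [hPF]
        refine ⟨a, b, c, d, ?_, ?_, ?_, ?_, h5, h6, h7, h8, h9, ?_, ?_⟩
        · rw [T1 0 1 1 (by push_cast; ring)]; exact h1
        · rw [T1 0 2 2 (by push_cast; ring)]; exact h2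
        · rw [T1 0 3 3 (by push_cast; ring)]; exact h3
        · rw [U1 0 (-1) 1 (by omega) (by push_cast; ring)]; exact h4
        · rw [U1 0 (-2) 2 (by omega) (by push_cast; ring)]; exact h10
        · rw [T1 0 0 0 (by push_cast; ring)]; exact h11
      · -- ¬ (plan F, orientation -1, seam 0)
        intro ⟨a, b, c, d, h1, h2, h3, h4, h5, h6, h7, h8, h9, h10, h11⟩
        apply fF 0 (-1) (Or.inr rfl)
        rw [hPF]
        refine ⟨a, b, c, d, ?_, ?_, ?_, ?_, h5, h6, h7, h8, h9, ?_, ?_⟩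
        · rw [T2 0 (-1) 1 (by push_cast; ring)]; exact h1
        · rw [T2 0 (-2) 2 (by push_cast; ring)]; exact h2
        · rw [T2 0 (-3) 3 (by push_cast; ring)]; exact h3
        · rw [U2 0 1 1 (by omega) (by push_cast; ring)]; exact h4
        · rw [U2 0 2 2 (by omega) (by push_cast; ring)]; exact h10
        · rw [T2 0 0 0 (by push_cast; ring)]; exact h11

lemma adj_pair {s : ℕ} (hs : 9 ≤ s) (z : ZMod s) (i j : ℕ) (hij : i < j) (hd : j - i ≤ 3) :
    (T 1 s 2).Adj (0, z + (i : ZMod s)) (0, z + (j : ZMod s)) := by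
  have h := adj_mk hs (z + (i : ZMod s)) (j - i) (by omega) hd
  have e : z + (i : ZMod s) + ((j - i : ℕ) : ZMod s) = z + (j : ZMod s) := by
    rw [Nat.cast_sub (by omega)]
    ring
  rwa [e] at h

lemma notColorable4 {s : ℕ} (hs : 9 ≤ s) (hs4 : s % 4 ≠ 0) : ¬ (T 1 s 2).Colorable 4 := by
  haveI : NeZero s := ⟨by omega⟩
  rintro ⟨C⟩
  set g : ZMod s → Fin 4 := fun z => C (0, z) with hg
  have hne : ∀ (z : ZMod s) (i j : ℕ), i < j → j - i ≤ 3 →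
      g (z + (i : ZMod s)) ≠ g (z + (j : ZMod s)) :=
    fun z i j hij hd => C.valid (adj_pair hs z i j hij hd)
  have claim : ∀ z : ZMod s, g (z + 4) = g z := by
    intro z
    have n01 := hne z 0 1 (by omega) (by omega)
    have n02 := hne z 0 2 (by omega) (by omega)
    have n03 := hne z 0 3 (by omega) (by omega)
    have n12 := hne z 1 2 (by omega) (by omega)
    have n13 := hne z 1 3 (by omega) (by omega)
    have n23 := hne z 2 3 (by omega) (by omega)
    have n14 := hne z 1 4 (by omega) (by omega)
    have n24 := hne z 2 4 (by omega) (by omega)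
    have n34 := hne z 3 4 (by omega) (by omega)
    set c1 := g (z + ((1:ℕ) : ZMod s))
    set c2 := g (z + ((2:ℕ) : ZMod s))
    set c3 := g (z + ((3:ℕ) : ZMod s))
    have hz0 : z + ((0:ℕ) : ZMod s) = z := by push_cast; ring
    rw [hz0] at n01 n02 n03
    have hcard3 : ({c1, c2, c3} : Finset (Fin 4)).card = 3 := by
      rw [Finset.card_insert_of_notMem (by simp [n12, n13]),
        Finset.card_insert_of_notMem (by simp [n23]), Finset.card_singleton]
    have hcard1 : (Finset.univ \ ({c1, c2, c3} : Finset (Fin 4))).card = 1 := by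
      rw [Finset.card_sdiff_of_subset (Finset.subset_univ _), Finset.card_univ, Fintype.card_fin, hcard3]
    obtain ⟨w, hw⟩ := Finset.card_eq_one.1 hcard1
    have hin : ∀ x : Fin 4, x ≠ c1 → x ≠ c2 → x ≠ c3 → x = w := by
      intro x h1 h2 h3
      have : x ∈ Finset.univ \ ({c1, c2, c3} : Finset (Fin 4)) := by
        simp [h1, h2, h3]
      rw [hw] at this
      exact Finset.mem_singleton.1 this
    have h4 : z + (4 : ZMod s) = z + ((4:ℕ) : ZMod s) := by push_cast; ring
    rw [h4]
    rw [hin (g (z + ((4:ℕ) : ZMod s))) (Ne.symm n14) (Ne.symm n24) (Ne.symm n34),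
      hin (g z) n01 n02 n03]
  have per : ∀ (k : ℕ) (z : ZMod s), g (z + ((4 * k : ℕ) : ZMod s)) = g z := by
    intro k
    induction k with
    | zero => intro z; simp
    | succ k ih =>
      intro z
      have e : z + ((4 * (k+1) : ℕ) : ZMod s) = (z + ((4 * k : ℕ) : ZMod s)) + 4 := by
        push_cast; ring
      rw [e, claim, ih]
  -- now find k with 4k ≡ 1 or 2 (mod s)
  have hmain : ∃ (k δ : ℕ), 1 ≤ δ ∧ δ ≤ 3 ∧ ((4 * k : ℕ) : ZMod s) = ((δ : ℕ) : ZMod s) := by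
    have h4cases : s % 4 = 1 ∨ s % 4 = 2 ∨ s % 4 = 3 := by omega
    rcases h4cases with h | h | h
    · refine ⟨3 * (s / 4) + 1, 1, by omega, by omega, ?_⟩
      have e : 4 * (3 * (s / 4) + 1) = 3 * s + 1 := by omega
      rw [e]
      push_cast [ZMod.natCast_self]
      ring
    · refine ⟨3 * (s / 4) + 2, 2, by omega, by omega, ?_⟩
      have e : 4 * (3 * (s / 4) + 2) = 3 * s + 2 := by omega
      rw [e]
      push_cast [ZMod.natCast_self]
      ring
    · refine ⟨s / 4 + 1, 1, by omega, by omega, ?_⟩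
      have e : 4 * (s / 4 + 1) = s + 1 := by omega
      rw [e]
      push_cast [ZMod.natCast_self]
      ring
  obtain ⟨k, δ, hδ1, hδ3, hk⟩ := hmain
  have := per k 0
  rw [hk] at this
  have e0 : (0 : ZMod s) + ((0:ℕ) : ZMod s) = 0 := by push_cast; ring
  exact hne 0 0 δ (by omega) (by omega) (by rw [e0]; exact this.symm)

lemma fourLists {s : ℕ} (hs : 9 ≤ s) (hs4 : s % 4 ≠ 0) :
    ¬ IsLChoosable (T 1 s 2) (fun _ => ({0,1,2,3} : Finset ℕ)) := by
  rintro ⟨c, hc1, hc2⟩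
  apply notColorable4 hs hs4
  refine ⟨SimpleGraph.Coloring.mk (fun v => (⟨c v, ?_⟩ : Fin 4)) ?_⟩
  · have := hc1 v
    simp only [Finset.mem_insert, Finset.mem_singleton] at this
    omega
  · intro u v hadj h
    exact hc2 u v hadj (congrArg Fin.val h)


/-- For every `s ≥ 9` with `s ≠ 11` and `s ≢ 0 (mod 4)`, the graph
`T(1,s,2)` has chromatic number `5`, is `5`-choosable and is not `4`-choosable; hence its
choice number (the least `k` for which it is `k`-choosable) equals its chromatic
number, both being `5`. -/
theorem T_one_s_two_chromatic_choosable (s : ℕ) (hs : 9 ≤ s) (hs' : s ≠ 11)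
    (hs4 : s % 4 ≠ 0) :
    (T 1 s 2).chromaticNumber = 5 ∧
    Choosable (T 1 s 2) 5 ∧
    ¬ Choosable (T 1 s 2) 4 ∧
    IsLeast {k : ℕ | Choosable (T 1 s 2) k} 5 := by
  have hch5 : Choosable (T 1 s 2) 5 := choosable5 hs hs'
  have hnc4 : ¬ (T 1 s 2).Colorable 4 := notColorable4 hs hs4
  have hFour := fourLists hs hs4
  have hcol5 : (T 1 s 2).Colorable 5 := by
    obtain ⟨c, hc1, hc2⟩ := hch5 (fun _ => ({0,1,2,3,4} : Finset ℕ))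
      (fun _ => (by decide : 5 ≤ ({0,1,2,3,4} : Finset ℕ).card))
    refine ⟨SimpleGraph.Coloring.mk (fun v => (⟨c v, ?_⟩ : Fin 5)) ?_⟩
    · have := hc1 v
      simp only [Finset.mem_insert, Finset.mem_singleton] at this
      omega
    · intro u v hadj h
      exact hc2 u v hadj (congrArg Fin.val h)
  have hχle : (T 1 s 2).chromaticNumber ≤ 5 := by
    have := hcol5.chromaticNumber_le
    exact_mod_cast this
  have hχge : (5 : ℕ∞) ≤ (T 1 s 2).chromaticNumber := by
    by_contra h
    push_neg at h
    have h45 : (4 : ℕ∞) + 1 = 5 := by norm_num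
    have h4 : (T 1 s 2).chromaticNumber ≤ ((4:ℕ) : ℕ∞) := by
      have := (ENat.lt_add_one_iff (by simp)).1 (h45 ▸ h)
      exact_mod_cast this
    exact hnc4 (SimpleGraph.chromaticNumber_le_iff_colorable.1 h4)
  have hnch4 : ¬ Choosable (T 1 s 2) 4 :=
    fun h => hFour (h _ (fun _ => (by decide : 4 ≤ ({0,1,2,3} : Finset ℕ).card)))
  refine ⟨le_antisymm hχle hχge, hch5, hnch4, hch5, ?_⟩
  intro k hk
  by_contra hlt
  push_neg at hlt
  exact hFour (hk _ (fun _ => (show k ≤ ({0,1,2,3} : Finset ℕ).card from by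
    have h4 : ({0,1,2,3} : Finset ℕ).card = 4 := by decide
    omega)))
end

section
/- Let G be a finite simple graph equipped with an orientation, i.e., a relation → on the vertices such that two vertices u, v are adjacent in G if and only if exactly one of u → v, v → u holds. Suppose the resulting digraph contains no directed cycle of odd length. If L is a list assignment such that |L(v)| ≥ outdeg(v) + 1 for every vertex v, where outdeg(v) is the number of vertices w with v → w, then G is L-choosable. -/
/-- The digraph given by the relation `D` has a directed cycle of odd length: there are
pairwise distinct vertices `v₁, …, v_k` (`k ≥ 2`, `k` odd) with
`v₁ → v₂ → ⋯ → v_k → v₁`. -/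
def HasOddDirectedCycle {V : Type*} (D : V → V → Prop) : Prop :=
  ∃ (k : ℕ) (f : Fin (k + 1) → V), 1 ≤ k ∧ Odd (k + 1) ∧ Function.Injective f ∧
    ∀ i : Fin (k + 1), D (f i) (f (i + 1))

open scoped Classical

namespace BBS

variable {V : Type*}

inductive RWalk (R : V → V → Prop) : ℕ → V → V → Prop where
  | refl (v : V) : RWalk R 0 v v
  | cons {u v w : V} {n : ℕ} : R u v → RWalk R n v w → RWalk R (n + 1) u w

theorem RWalk.trans {R : V → V → Prop} {m n : ℕ} {u v w : V}
    (h1 : RWalk R m u v) (h2 : RWalk R n v w) : RWalk R (m + n) u w := by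
  induction h1 with
  | refl v => simpa using h2
  | cons h _ ih =>
    have := RWalk.cons h (ih h2)
    rwa [Nat.add_right_comm] at this

theorem RWalk.eq_of_zero {R : V → V → Prop} {u w : V} (h : RWalk R 0 u w) : u = w := by
  cases h; rfl

theorem RWalk.single {R : V → V → Prop} {u w : V} (h : R u w) : RWalk R 1 u w :=
  RWalk.cons h (RWalk.refl w)

theorem RWalk.toChain {R : V → V → Prop} {n : ℕ} {u w : V} (h : RWalk R n u w) :
    ∃ l : List V, l.Chain' R ∧ l.length = n + 1 ∧ l.head? = some u ∧ l.getLast? = some w := by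
  induction h with
  | refl v => exact ⟨[v], List.isChain_singleton v, by simp, by simp, by simp⟩
  | @cons u' v' w' n' hr hw ih =>
    obtain ⟨l, hch, hlen, hhd, hlast⟩ := ih
    refine ⟨u' :: l, ?_, by simp [hlen], by simp, ?_⟩
    · show List.IsChain R (u' :: l); rw [List.isChain_cons]
      exact ⟨fun y hy => by rw [hhd] at hy; cases hy; exact hr, hch⟩
    · cases l with
      | nil => simp at hlen
      | cons x xs => rw [List.getLast?_cons_cons]; exact hlast

theorem no_odd_closed (D : V → V → Prop) (hnoodd : ¬ HasOddDirectedCycle D) :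
    ∀ (m : ℕ) (l : List V), l.length = m → 2 ≤ m →
      l.Chain' (fun a b => D a b ∧ a ≠ b) → l.head? = l.getLast? → ¬ Odd (m - 1) := by
  intro m
  induction m using Nat.strong_induction_on with
  | _ m IH =>
  intro l hlen hm hch hclosed hodd
  have h0 : 0 < l.length := by omega
  have hml : l.length - 1 < l.length := by omega
  have hfl : l[0]'h0 = l[l.length - 1]'hml := by
    rw [List.head?_eq_getElem?, List.getLast?_eq_getElem?,
      List.getElem?_eq_getElem h0, List.getElem?_eq_getElem hml] at hclosed
    exact Option.some_injective _ hclosed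
  have hstep : ∀ (i : ℕ) (h : i < m - 1),
      D (l[i]'(by omega)) (l[i+1]'(by omega)) ∧ (l[i]'(by omega)) ≠ (l[i+1]'(by omega)) := by
    have hc := List.isChain_iff_getElem.mp hch
    intro i h
    simpa [List.get_eq_getElem] using hc i (by omega)
  have hm2 : m ≠ 2 := by
    intro h2
    have h01 := hstep 0 (by omega)
    apply h01.2
    have : l.length - 1 = 1 := by omega
    rw [hfl]
    simp only [this]
  have hm4 : 4 ≤ m := by
    rcases hodd with ⟨t, ht⟩
    omega
  by_cases hdup : ∃ i, ∃ j, ∃ (hij : i < j), ∃ (hj : j ≤ m - 2),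
      l[i]'(by omega) = l[j]'(by omega)
  · -- split the closed walk at a repeated vertex
    obtain ⟨i, j, hij, hj, heq⟩ := hdup
    have ha1 : 1 ≤ j - i := by omega
    -- inner closed walk, of length j - i
    have hinner : False → False := id
    have hinlen : ((l.drop i).take (j - i + 1)).length = (j - i) + 1 := by
      simp [List.length_take, List.length_drop]; omega
    have hinch : ((l.drop i).take (j - i + 1)).Chain' (fun a b => D a b ∧ a ≠ b) :=
      (hch.drop i).take _
    have hin0 : ((l.drop i).take (j - i + 1))[0]'(by omega) = l[i]'(by omega) := by
      simp
    have hinlast : ((l.drop i).take (j - i + 1))[j - i]'(by omega) = l[j]'(by omega) := by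
      simp only [List.getElem_take, List.getElem_drop]
      simp only [show i + (j - i) = j from by omega]
    have hinclosed : ((l.drop i).take (j - i + 1)).head? = ((l.drop i).take (j - i + 1)).getLast? := by
      rw [List.head?_eq_getElem?, List.getLast?_eq_getElem?, hinlen]
      rw [List.getElem?_eq_getElem (by omega), List.getElem?_eq_getElem (by omega)]
      simp only [hin0]
      simp only [show (j - i) + 1 - 1 = j - i from by omega, hinlast]
      rw [heq]
    -- outer closed walk, of length (m - 1) - (j - i)
    have houtlen : (l.take i ++ l.drop j).length = ((m - 1) - (j - i)) + 1 := by
      simp [List.length_take, List.length_drop]; omega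
    have hdropi : l.drop i = (l[i]'(by omega)) :: l.drop (i+1) :=
      List.drop_eq_getElem_cons (by omega)
    have hdropj : l.drop j = (l[j]'(by omega)) :: l.drop (j+1) :=
      List.drop_eq_getElem_cons (by omega)
    have hpre : (l.take i ++ [l[i]'(by omega)]).Chain' (fun a b => D a b ∧ a ≠ b) := by
      have h := hch.take (i+1)
      rwa [List.take_succ, List.getElem?_eq_getElem (by omega), Option.toList_some] at h
    have hsuf : ((l[j]'(by omega)) :: l.drop (j+1)).Chain' (fun a b => D a b ∧ a ≠ b) := by
      rw [← hdropj]; exact hch.drop j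
    have houtch : (l.take i ++ l.drop j).Chain' (fun a b => D a b ∧ a ≠ b) := by
      rw [hdropj]
      exact List.isChain_split.mpr ⟨by rw [← heq]; exact hpre, hsuf⟩
    have hout0 : (l.take i ++ l.drop j)[0]'(by omega) = l[0]'h0 := by
      by_cases hi : i = 0
      · subst hi
        simp only [List.take_zero, List.nil_append, List.getElem_drop, Nat.add_zero]
        exact heq.symm
      · rw [List.getElem_append_left (by simp [List.length_take]; omega)]
        simp
    have houtb : (l.take i ++ l.drop j)[(m - 1) - (j - i)]'(by omega) = l[l.length - 1]'hml := by
      rw [List.getElem_append_right (by simp [List.length_take]; omega)]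
      simp only [List.getElem_drop]
      simp only [List.length_take]
      simp only [show j + ((m-1) - (j-i) - min i l.length) = l.length - 1 from by omega]
    have houtclosed : (l.take i ++ l.drop j).head? = (l.take i ++ l.drop j).getLast? := by
      rw [List.head?_eq_getElem?, List.getLast?_eq_getElem?, houtlen]
      rw [List.getElem?_eq_getElem (by omega), List.getElem?_eq_getElem (by omega)]
      simp only [show ((m-1) - (j-i)) + 1 - 1 = (m-1) - (j-i) from by omega]
      rw [hout0, houtb, hfl]
    -- one of the two closed walks is odd
    rcases Nat.even_or_odd (j - i) with he | ho
    · -- outer is odd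
      have hob : Odd ((m - 1) - (j - i)) := by
        rw [Nat.odd_iff] at hodd ⊢
        rw [Nat.even_iff] at he
        omega
      exact IH (((m-1) - (j-i)) + 1) (by omega) (l.take i ++ l.drop j) houtlen (by omega)
        houtch houtclosed (by simpa using hob)
    · exact IH ((j - i) + 1) (by omega) ((l.drop i).take (j - i + 1)) hinlen (by omega)
        hinch hinclosed (by simpa using ho)
  · -- no repetition : we get an odd directed cycle
    push_neg at hdup
    apply hnoodd
    refine ⟨m - 2, fun i => l[(i : ℕ)]'(by have := i.isLt; omega), by omega, ?_, ?_, ?_⟩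
    · have : m - 2 + 1 = m - 1 := by omega
      rw [this]; exact hodd
    · intro i j hijeq
      by_contra hne
      have hne' : (i : ℕ) ≠ (j : ℕ) := fun h => hne (Fin.ext h)
      have hi := i.isLt
      have hj := j.isLt
      rcases Nat.lt_or_ge (i : ℕ) (j : ℕ) with h | h
      · exact hdup (i : ℕ) (j : ℕ) h (by omega) hijeq
      · exact hdup (j : ℕ) (i : ℕ) (by omega) (by omega) hijeq.symm
    · intro i
      have hv1 : ((1 : Fin (m - 2 + 1)) : ℕ) = 1 := by
        rw [Fin.val_one']
        exact Nat.mod_eq_of_lt (by omega)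
      have hadd : ((i + 1 : Fin (m - 2 + 1)) : ℕ) = ((i : ℕ) + 1) % (m - 2 + 1) := by
        rw [Fin.val_add, hv1]
      have hi := i.isLt
      by_cases hik : (i : ℕ) < m - 2
      · have h1 : ((i + 1 : Fin (m - 2 + 1)) : ℕ) = (i : ℕ) + 1 := by
          rw [hadd]; exact Nat.mod_eq_of_lt (by omega)
        simp only [h1]
        exact (hstep (i : ℕ) (by omega)).1
      · have hieq : (i : ℕ) = m - 2 := by omega
        have h1 : ((i + 1 : Fin (m - 2 + 1)) : ℕ) = 0 := by
          rw [hadd, hieq]; simp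
        simp only [h1, hieq]
        have hlaststep := (hstep (m - 2) (by omega)).1
        simp only [show m - 2 + 1 = l.length - 1 from by omega] at hlaststep
        rw [← hfl] at hlaststep
        exact hlaststep


theorem no_odd_rwalk (D : V → V → Prop) (hnoodd : ¬ HasOddDirectedCycle D)
    {R : V → V → Prop} (hR : ∀ a b, R a b → D a b ∧ a ≠ b) :
    ∀ (n : ℕ) (u : V), RWalk R n u u → ¬ Odd n := by
  intro n u hw hoddn
  obtain ⟨l, hch, hlen, hhd, hlast⟩ := hw.toChain
  have hn1 : 1 ≤ n := by
    rcases hoddn with ⟨t, ht⟩; omega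
  exact no_odd_closed D hnoodd (n + 1) l hlen (by omega)
    (hch.imp hR) (hhd.trans hlast.symm) (by simpa using hoddn)

theorem richardson (D : V → V → Prop) (hnoodd : ¬ HasOddDirectedCycle D) (s : Finset V) :
    ∃ K : Finset V, K ⊆ s ∧ (∀ u ∈ K, ∀ w ∈ K, ¬(D u w ∧ u ≠ w)) ∧
      (∀ w ∈ s, w ∉ K → ∃ u ∈ K, D w u ∧ w ≠ u) := by
  suffices H : ∀ (n : ℕ) (s : Finset V), s.card = n →
      ∃ K : Finset V, K ⊆ s ∧ (∀ u ∈ K, ∀ w ∈ K, ¬(D u w ∧ u ≠ w)) ∧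
        (∀ w ∈ s, w ∉ K → ∃ u ∈ K, D w u ∧ w ≠ u) from H s.card s rfl
  intro n
  induction n using Nat.strong_induction_on with
  | _ n IH =>
  intro s hcard
  rcases s.eq_empty_or_nonempty with rfl | ⟨v₀, hv₀⟩
  · exact ⟨∅, by simp, by simp, by simp⟩
  set Ds : V → V → Prop := fun a b => D a b ∧ a ≠ b ∧ a ∈ s ∧ b ∈ s with hDs
  have hno : ∀ (k : ℕ) (u : V), RWalk Ds k u u → ¬ Odd k :=
    no_odd_rwalk D hnoodd (fun a b h => ⟨h.1, h.2.1⟩)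
  set R : V → Finset V := fun u => s.filter fun w => ∃ k, RWalk Ds k u w with hRdef
  obtain ⟨v, hvs, hvmin⟩ := s.exists_min_image (fun u => (R u).card) ⟨v₀, hv₀⟩
  have hmemR : ∀ u w, w ∈ R u ↔ (w ∈ s ∧ ∃ k, RWalk Ds k u w) := by
    intro u w; simp [hRdef]
  have hvC : v ∈ R v := (hmemR v v).mpr ⟨hvs, 0, RWalk.refl v⟩
  have hCs : R v ⊆ s := Finset.filter_subset _ _
  have hout : ∀ u w, (∃ k, RWalk Ds k v u) → Ds u w → w ∈ R v := by
    intro u w ⟨k, hk⟩ hds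
    exact (hmemR v w).mpr ⟨hds.2.2.2, k + 1, hk.trans (RWalk.single hds)⟩
  have hback : ∀ w ∈ R v, ∃ k, RWalk Ds k w v := by
    intro w hw
    obtain ⟨hws, k, hk⟩ := (hmemR v w).mp hw
    have hsub : R w ⊆ R v := by
      intro x hx
      obtain ⟨hxs, k', hk'⟩ := (hmemR w x).mp hx
      exact (hmemR v x).mpr ⟨hxs, k + k', hk.trans hk'⟩
    have heq : R w = R v := Finset.eq_of_subset_of_card_le hsub (hvmin w hws)
    rw [← heq] at hvC
    exact ((hmemR w v).mp hvC).2
  have hpar : ∀ w ∈ R v, ∀ k₁ k₂, RWalk Ds k₁ v w → RWalk Ds k₂ v w → k₁ % 2 = k₂ % 2 := by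
    intro w hw k₁ k₂ h1 h2
    obtain ⟨ℓ, hℓ⟩ := hback w hw
    have hno1 := hno (k₁ + ℓ) v (h1.trans hℓ)
    have hno2 := hno (k₂ + ℓ) v (h2.trans hℓ)
    rw [Nat.odd_iff] at hno1 hno2
    omega
  set K₀ : Finset V := (R v).filter (fun w => ∃ k, k % 2 = 0 ∧ RWalk Ds k v w) with hK₀def
  have hK₀C : K₀ ⊆ R v := Finset.filter_subset _ _
  have hvK₀ : v ∈ K₀ := by
    rw [hK₀def, Finset.mem_filter]
    exact ⟨hvC, 0, rfl, RWalk.refl v⟩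
  have hK₀ind : ∀ u ∈ K₀, ∀ w ∈ K₀, ¬(D u w ∧ u ≠ w) := by
    intro u hu w hw ⟨hD, hne⟩
    obtain ⟨huC, k, hk0, hwalk⟩ := Finset.mem_filter.mp hu
    obtain ⟨hwC, k', hk'0, hwalk'⟩ := Finset.mem_filter.mp hw
    have hds : Ds u w := ⟨hD, hne, hCs huC, hCs hwC⟩
    have := hpar w hwC (k + 1) k' (hwalk.trans (RWalk.single hds)) hwalk'
    omega
  have hK₀dom : ∀ w ∈ R v, w ∉ K₀ → ∃ u ∈ K₀, D w u ∧ w ≠ u := by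
    intro w hw hwK₀
    obtain ⟨hws, k, hwalk⟩ := (hmemR v w).mp hw
    have hkodd : k % 2 = 1 := by
      rcases Nat.even_or_odd k with he | ho
      · exfalso
        exact hwK₀ (Finset.mem_filter.mpr ⟨hw, k, Nat.even_iff.mp he, hwalk⟩)
      · exact Nat.odd_iff.mp ho
    obtain ⟨ℓ, hℓwalk⟩ := hback w hw
    cases hℓwalk with
    | refl =>
      exact absurd (Nat.odd_iff.mpr hkodd) (hno k _ hwalk)
    | @cons _ x _ ℓ' hds hrest =>
      have hxC : x ∈ R v := hout w x ⟨k, hwalk⟩ hds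
      have hxK₀ : x ∈ K₀ := Finset.mem_filter.mpr
        ⟨hxC, k + 1, by omega, hwalk.trans (RWalk.single hds)⟩
      exact ⟨x, hxK₀, hds.1, hds.2.1⟩
  set T : Finset V := s.filter (fun w => w ∉ K₀ ∧ ¬∃ u ∈ K₀, D w u ∧ w ≠ u) with hTdef
  have hTcard : T.card < n := by
    have hsub : T ⊆ s.erase v := by
      intro w hw
      obtain ⟨hws, hwK₀, -⟩ := Finset.mem_filter.mp hw
      exact Finset.mem_erase.mpr ⟨fun h => hwK₀ (h ▸ hvK₀), hws⟩
    have h1 := Finset.card_le_card hsub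
    rw [Finset.card_erase_of_mem hvs] at h1
    have h2 : 1 ≤ s.card := Finset.card_pos.mpr ⟨v₀, hv₀⟩
    omega
  obtain ⟨K₁, hK₁T, hK₁ind, hK₁dom⟩ := IH T.card hTcard T rfl
  have hK₁s : K₁ ⊆ s := hK₁T.trans (Finset.filter_subset _ _)
  have hK₀s : K₀ ⊆ s := hK₀C.trans hCs
  refine ⟨K₀ ∪ K₁, Finset.union_subset hK₀s hK₁s, ?_, ?_⟩
  · intro u hu w hw hDuw
    rcases Finset.mem_union.mp hu with hu0 | hu1 <;> rcases Finset.mem_union.mp hw with hw0 | hw1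
    · exact hK₀ind u hu0 w hw0 hDuw
    · -- u ∈ K₀, w ∈ K₁ : then w ∈ R v, contradiction with w ∈ T
      obtain ⟨hws, hwK₀, hwndom⟩ := Finset.mem_filter.mp (hK₁T hw1)
      obtain ⟨huC, k, hk0, hwalk⟩ := Finset.mem_filter.mp hu0
      have hds : Ds u w := ⟨hDuw.1, hDuw.2, hK₀s hu0, hws⟩
      have hwC : w ∈ R v := hout u w ⟨k, hwalk⟩ hds
      by_cases hw0 : w ∈ K₀
      · exact hwK₀ hw0
      · exact hwndom (hK₀dom w hwC hw0)
    · -- u ∈ K₁, w ∈ K₀ : u would be dominated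
      obtain ⟨hus, huK₀, hundom⟩ := Finset.mem_filter.mp (hK₁T hu1)
      exact hundom ⟨w, hw0, hDuw.1, hDuw.2⟩
    · exact hK₁ind u hu1 w hw1 hDuw
  · intro w hws hwK
    by_cases hwT : w ∈ T
    · obtain ⟨u, hu, hd⟩ := hK₁dom w hwT (fun h => hwK (Finset.mem_union_right _ h))
      exact ⟨u, Finset.mem_union_right _ hu, hd⟩
    · rw [hTdef, Finset.mem_filter] at hwT
      push_neg at hwT
      rcases Classical.em (w ∈ K₀) with h | h
      · exact absurd (Finset.mem_union_left _ h) hwK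
      · obtain ⟨u, hu, hd⟩ := hwT hws h
        exact ⟨u, Finset.mem_union_left _ hu, hd⟩


theorem choose_aux (D : V → V → Prop) (hnoodd : ¬ HasOddDirectedCycle D) :
    ∀ (n : ℕ) (s : Finset V) (L : V → Finset ℕ), s.card = n →
      (∀ v ∈ s, (s.filter fun w => D v w ∧ v ≠ w).card + 1 ≤ (L v).card) →
      ∃ c : V → ℕ, (∀ v ∈ s, c v ∈ L v) ∧
        ∀ u ∈ s, ∀ v ∈ s, D u v → u ≠ v → c u ≠ c v := by
  intro n
  induction n using Nat.strong_induction_on with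
  | _ n IH =>
  intro s L hcard hsize
  rcases s.eq_empty_or_nonempty with rfl | ⟨v₀, hv₀⟩
  · exact ⟨fun _ => 0, by simp, by simp⟩
  obtain ⟨α, hα⟩ : (L v₀).Nonempty := Finset.card_pos.mp (by have := hsize v₀ hv₀; omega)
  set T : Finset V := s.filter fun v => α ∈ L v with hTdef
  obtain ⟨K, hKT, hKind, hKdom⟩ := richardson D hnoodd T
  have hv₀T : v₀ ∈ T := Finset.mem_filter.mpr ⟨hv₀, hα⟩
  have hKne : K.Nonempty := by
    rcases K.eq_empty_or_nonempty with h | h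
    · obtain ⟨u, hu, -⟩ := hKdom v₀ hv₀T (by simp [h])
      rw [h] at hu
      exact absurd hu (Finset.notMem_empty u)
    · exact h
  have hKs : K ⊆ s := hKT.trans (Finset.filter_subset _ _)
  have hs'card : (s \ K).card < n := by
    obtain ⟨x, hx⟩ := hKne
    have h1 : (s \ K).card = s.card - K.card := Finset.card_sdiff_of_subset hKs
    have h2 : 1 ≤ K.card := Finset.card_pos.mpr ⟨x, hx⟩
    have h3 : K.card ≤ s.card := Finset.card_le_card hKs
    have h4 : 1 ≤ s.card := Finset.card_pos.mpr ⟨v₀, hv₀⟩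
    omega
  set L' : V → Finset ℕ := fun v => if v ∈ T then (L v).erase α else L v with hL'def
  have hsize' : ∀ v ∈ s \ K, ((s \ K).filter fun w => D v w ∧ v ≠ w).card + 1 ≤ (L' v).card := by
    intro v hv
    obtain ⟨hvs, hvK⟩ := Finset.mem_sdiff.mp hv
    have hsub0 : ((s \ K).filter fun w => D v w ∧ v ≠ w) ⊆ (s.filter fun w => D v w ∧ v ≠ w) :=
      Finset.filter_subset_filter _ (Finset.sdiff_subset)
    by_cases hvT : v ∈ T
    · obtain ⟨u, huK, hDu, hneu⟩ := hKdom v hvT hvK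
      have hus : u ∈ s.filter fun w => D v w ∧ v ≠ w :=
        Finset.mem_filter.mpr ⟨hKs huK, hDu, hneu⟩
      have hsub : ((s \ K).filter fun w => D v w ∧ v ≠ w) ⊆
          (s.filter fun w => D v w ∧ v ≠ w).erase u := by
        intro w hw
        have hwmem := hsub0 hw
        have hwK : w ∉ K := (Finset.mem_sdiff.mp (Finset.mem_of_mem_filter w hw)).2
        exact Finset.mem_erase.mpr ⟨fun h => hwK (h ▸ huK), hwmem⟩
      have h1 : ((s \ K).filter fun w => D v w ∧ v ≠ w).card ≤
          (s.filter fun w => D v w ∧ v ≠ w).card - 1 := by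
        have := Finset.card_le_card hsub
        rwa [Finset.card_erase_of_mem hus] at this
      have h2 := hsize v hvs
      have h3 : (L' v).card = (L v).card - 1 := by
        have hαv : α ∈ L v := (Finset.mem_filter.mp hvT).2
        rw [hL'def]
        simp only [if_pos hvT]
        exact Finset.card_erase_of_mem hαv
      have h4 : 1 ≤ (s.filter fun w => D v w ∧ v ≠ w).card :=
        Finset.card_pos.mpr ⟨u, hus⟩
      omega
    · have hLv : L' v = L v := by rw [hL'def]; simp only [if_neg hvT]
      rw [hLv]
      have := Finset.card_le_card hsub0
      have := hsize v hvs
      omega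
  obtain ⟨c', hc'mem, hc'prop⟩ := IH (s \ K).card hs'card (s \ K) L' rfl hsize'
  have hL'sub : ∀ v, L' v ⊆ L v := by
    intro v x hx
    by_cases hvT : v ∈ T
    · simp only [hL'def, if_pos hvT] at hx; exact Finset.erase_subset _ _ hx
    · simpa only [hL'def, if_neg hvT] using hx
  have hc'ne : ∀ v ∈ s, v ∉ K → c' v ≠ α := by
    intro v hvs hvK heqα
    have hv' : v ∈ s \ K := Finset.mem_sdiff.mpr ⟨hvs, hvK⟩
    have hcv := hc'mem v hv'
    by_cases hvT : v ∈ T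
    · simp only [hL'def, if_pos hvT] at hcv
      exact (Finset.ne_of_mem_erase hcv) heqα
    · have hαv : α ∉ L v := fun h => hvT (Finset.mem_filter.mpr ⟨hvs, h⟩)
      simp only [hL'def, if_neg hvT] at hcv
      exact hαv (heqα ▸ hcv)
  refine ⟨fun w => if w ∈ K then α else c' w, ?_, ?_⟩
  · intro v hv
    by_cases hvK : v ∈ K
    · simp only [if_pos hvK]
      exact (Finset.mem_filter.mp (hKT hvK)).2
    · simp only [if_neg hvK]
      exact hL'sub v (hc'mem v (Finset.mem_sdiff.mpr ⟨hv, hvK⟩))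
  · intro u hu v hv hD hne
    by_cases huK : u ∈ K <;> by_cases hvK : v ∈ K
    · exact absurd ⟨hD, hne⟩ (hKind u huK v hvK)
    · simp only [if_pos huK, if_neg hvK]
      exact fun h => (hc'ne v hv hvK) h.symm
    · simp only [if_neg huK, if_pos hvK]
      exact hc'ne u hu huK
    · simp only [if_neg huK, if_neg hvK]
      exact hc'prop u (Finset.mem_sdiff.mpr ⟨hu, huK⟩) v (Finset.mem_sdiff.mpr ⟨hv, hvK⟩) hD hne

end BBS


/-- Bondy–Bopanna–Siegel. Let `G` be a finite simple graph with an
orientation `D` (i.e. `u` and `v` are adjacent iff exactly one of `u → v`, `v → u` holds)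
containing no odd directed cycle. If `L` is a list assignment with
`|L(v)| ≥ outdeg(v) + 1` for every vertex `v`, then `G` is `L`-choosable. -/
theorem choosable_of_orientation_no_odd_cycle {V : Type*} [Fintype V]
    (G : SimpleGraph V) (D : V → V → Prop)
    (horient : ∀ u v, G.Adj u v ↔ Xor' (D u v) (D v u))
    (hnoodd : ¬ HasOddDirectedCycle D)
    (L : V → Finset ℕ)
    (hL : ∀ v, {w | D v w}.ncard + 1 ≤ (L v).card) :
    IsLChoosable G L := by
  classical
  have hsize : ∀ v ∈ (Finset.univ : Finset V),
      (Finset.univ.filter fun w => D v w ∧ v ≠ w).card + 1 ≤ (L v).card := by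
    intro v _
    have h1 : (Finset.univ.filter fun w => D v w ∧ v ≠ w).card ≤ {w | D v w}.ncard := by
      have : {w | D v w} = ↑(Finset.univ.filter fun w => D v w) := by
        ext w; simp
      rw [this, Set.ncard_coe_finset]
      exact Finset.card_le_card (Finset.monotone_filter_right _ (by intro w _ hw; exact hw.1))
    have := hL v
    omega
  obtain ⟨c, hmem, hprop⟩ := BBS.choose_aux D hnoodd Finset.univ.card Finset.univ L rfl hsize
  refine ⟨c, fun v => hmem v (Finset.mem_univ v), ?_⟩
  intro u v hadj
  have hne : u ≠ v := hadj.ne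
  rcases (horient u v).mp hadj with ⟨h1, -⟩ | ⟨h1, -⟩
  · exact hprop u (Finset.mem_univ u) v (Finset.mem_univ v) h1 hne
  · exact fun h => hprop v (Finset.mem_univ v) u (Finset.mem_univ u) h1 hne.symm h.symm
end

section
/- For integers r, s ≥ 3, let G = C(r,s) be the cylindrical triangulation, and let L be a list assignment on G such that: there exists 1 ≤ j ≤ s for which the exterior vertices (1,j) and (1,j−1) have lists of size exactly 4; every other exterior vertex has a list of size exactly 3; and every interior vertex has a list of size exactly 5. Then G is L-choosable. -/
/-- The neighbour relation of the cylindrical triangulation `C(r,s)`: row `i+1` of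
`Fin r` represents the `(i+1)`-st row of `C(r,s)`, and second coordinates are modulo `s`.
`Cnbr r s u v` says that `v` is one of the listed neighbours of `u`. -/
def Cnbr (r s : ℕ) (u v : Fin r × ZMod s) : Prop :=
  (v.1 = u.1 ∧ (v.2 = u.2 + 1 ∨ v.2 = u.2 - 1)) ∨
  (v.1.val = u.1.val + 1 ∧ (v.2 = u.2 ∨ v.2 = u.2 - 1)) ∨
  (v.1.val + 1 = u.1.val ∧ (v.2 = u.2 ∨ v.2 = u.2 + 1))

/-- The cylindrical triangulation `C(r,s)`, with vertex `(i,j)` (for `1 ≤ i ≤ r` and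
`j` modulo `s`) represented by the pair `(⟨i−1⟩ : Fin r, j mod s)`. -/
def C (r s : ℕ) : SimpleGraph (Fin r × ZMod s) where
  Adj u v := u ≠ v ∧ (Cnbr r s u v ∨ Cnbr r s v u)
  symm := ⟨fun u v h => ⟨h.1.symm, h.2.symm⟩⟩
  loopless := ⟨fun u h => h.1 rfl⟩

namespace CCP
open Finset
noncomputable section
open scoped Classical

set_option linter.unusedSectionVars false
set_option linter.unusedVariables false

def oo (s : ℕ) (j x : ZMod s) : ℕ := if x = j - 1 then 0 else (x - j).val + 1

section OL
variable {s : ℕ} [NeZero s] (j : ZMod s) (hs : 3 ≤ s)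
include hs

lemma zcast' (a : ZMod s) : ((a.val : ℕ) : ZMod s) = a := ZMod.natCast_rightInverse a

lemma one_nz : (1 : ZMod s) ≠ 0 := by
  intro he
  have h := ZMod.val_cast_of_lt (show 1 < s by omega)
  rw [Nat.cast_one, he] at h; simp [ZMod.val_zero] at h

lemma cast_sm1 : ((s - 1 : ℕ) : ZMod s) = -1 := by
  rw [Nat.cast_sub (by omega : 1 ≤ s), Nat.cast_one, ZMod.natCast_self]; ring

lemma cast_sm2 : ((s - 2 : ℕ) : ZMod s) = -2 := by
  rw [Nat.cast_sub (by omega : 2 ≤ s), Nat.cast_ofNat, ZMod.natCast_self]; ring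

lemma val_neg_two : ((-2 : ZMod s)).val = s - 2 := by
  rw [← cast_sm2 hs, ZMod.val_cast_of_lt (by omega)]

lemma val_eq_sm1 {a : ZMod s} (h : a.val = s - 1) : a = -1 := by
  have h2 := zcast' hs a; rw [h, cast_sm1 hs] at h2; exact h2.symm

lemma val_eq_sm2 {a : ZMod s} (h : a.val = s - 2) : a = -2 := by
  have h2 := zcast' hs a; rw [h, cast_sm2 hs] at h2; exact h2.symm

lemma oo_lt (x : ZMod s) : oo s j x < s := by
  unfold oo
  split
  · omega
  · rename_i hx
    have hv := ZMod.val_lt (x - j)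
    rcases Nat.lt_or_ge ((x-j).val) (s-1) with h | h
    · omega
    · exfalso
      have h1 : (x - j).val = s - 1 := by omega
      have h2 := val_eq_sm1 hs h1
      apply hx
      calc x = x - j + j := by ring
      _ = -1 + j := by rw [h2]
      _ = j - 1 := by ring

omit hs in
lemma oo_zero_iff (x : ZMod s) : oo s j x = 0 ↔ x = j - 1 := by
  unfold oo
  split
  · rename_i h; simp [h]
  · rename_i h; simp [h]

lemma oo_j : oo s j j = 1 := by
  unfold oo
  rw [if_neg, sub_self, ZMod.val_zero]
  intro h
  have h2 : (1 : ZMod s) = 0 := by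
    calc (1 : ZMod s) = j - (j-1) := by ring
    _ = j - j := by rw [← h]
    _ = 0 := by ring
  exact one_nz hs h2

lemma oo_one_iff (x : ZMod s) : oo s j x = 1 ↔ x = j := by
  constructor
  · intro h
    unfold oo at h
    split at h
    · omega
    · have h1 : (x - j).val = 0 := by omega
      have h2 := (ZMod.val_eq_zero _).1 h1
      have h3 := sub_eq_zero.mp h2; exact h3
  · intro h; rw [h]; exact oo_j j hs

omit hs in
lemma oo_inj {x y : ZMod s} (h : oo s j x = oo s j y) : x = y := by
  unfold oo at h
  split at h <;> split at h
  · rename_i h1 h2; rw [h1, h2]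
  · omega
  · omega
  · have h1 : (x - j).val = (y - j).val := by omega
    have h2 := ZMod.val_injective s h1
    calc x = x - j + j := by ring
    _ = y - j + j := by rw [h2]
    _ = y := by ring

lemma oo_succ (x : ZMod s) : oo s j (x + 1) = if oo s j x = s - 1 then 0 else oo s j x + 1 := by
  by_cases hx : x = j - 1
  · subst hx
    have h1 : j - 1 + 1 = j := by ring
    rw [h1]
    have h2 : oo s j (j-1) = 0 := by unfold oo; simp
    rw [h2, oo_j j hs, if_neg (by omega)]
  · by_cases hx2 : x = j - 1 - 1
    · subst hx2
      have h1 : j - 1 - 1 + 1 = j - 1 := by ring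
      rw [h1]
      have h2 : oo s j (j-1) = 0 := by unfold oo; simp
      rw [h2]
      have h3 : oo s j (j-1-1) = s - 1 := by
        unfold oo
        rw [if_neg]
        · have h4 : j - 1 - 1 - j = -2 := by ring
          rw [h4, val_neg_two hs]; omega
        · intro h
          exact one_nz hs (sub_eq_self.mp h)
      rw [h3, if_pos rfl]
    · have hxj : x + 1 ≠ j - 1 := fun h => hx2 (by
        calc x = x + 1 - 1 := by ring
        _ = j - 1 - 1 := by rw [h])
      have hoox : oo s j x = (x - j).val + 1 := by unfold oo; rw [if_neg hx]
      have hvne : (x - j).val ≠ s - 1 := by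
        intro h
        have h2 := val_eq_sm1 hs h
        apply hx
        calc x = x - j + j := by ring
        _ = -1 + j := by rw [h2]
        _ = j - 1 := by ring
      have hvne2 : (x - j).val ≠ s - 2 := by
        intro h
        have hc := val_eq_sm2 hs h
        apply hx2
        calc x = x - j + j := by ring
        _ = -2 + j := by rw [hc]
        _ = j - 1 - 1 := by ring
      have hvlt := ZMod.val_lt (x - j)
      have hsucc : (x + 1 - j).val = (x - j).val + 1 := by
        have h6 : x + 1 - j = (((x-j).val + 1 : ℕ) : ZMod s) := by
          push_cast [zcast' hs (x - j)]; ring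
        rw [h6, ZMod.val_cast_of_lt (by omega)]
      have h7 : oo s j (x+1) = (x + 1 - j).val + 1 := by unfold oo; rw [if_neg hxj]
      rw [h7, hsucc, hoox, if_neg (by omega)]

lemma oo_pred (x : ZMod s) : oo s j (x - 1) = if oo s j x = 0 then s - 1 else oo s j x - 1 := by
  have h := oo_succ j hs (x - 1)
  rw [sub_add_cancel] at h
  by_cases h0 : oo s j (x-1) = s - 1
  · rw [h0, if_pos rfl] at h
    rw [if_pos h, h0]
  · rw [if_neg h0] at h
    rw [if_neg (by omega)]
    omega

lemma oo_jm1 : oo s j (j - 1) = 0 := (oo_zero_iff j (j-1)).2 rfl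

lemma oo_jp1 : oo s j (j + 1) = 2 := by
  rw [oo_succ j hs, oo_j j hs, if_neg (by omega)]

lemma oo_jm2 : oo s j (j - 1 - 1) = s - 1 := by
  have h := oo_pred j hs (j - 1)
  rw [(oo_zero_iff j (j-1)).2 rfl] at h
  simpa using h

end OL

def rho (r s : ℕ) (j : ZMod s) (v : Fin r × ZMod s) : ℕ :=
  if 2 ≤ v.1.val then (r - 1 - v.1.val) * s + oo s j v.2
  else (r - 2) * s +
    (if v.1.val = 1 then (if oo s j v.2 = 0 then 2*s - 3 else 2 * (oo s j v.2 - 1))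
     else (if oo s j v.2 = 0 then 2*s - 1 else if oo s j v.2 = 1 then 2*s - 2
           else 2 * (oo s j v.2) - 3))

section RL
variable {r s : ℕ} [NeZero s] (j : ZMod s) (hs : 3 ≤ s)

lemma rho_hi {v : Fin r × ZMod s} (h : 2 ≤ v.1.val) :
    rho r s j v = (r - 1 - v.1.val) * s + oo s j v.2 := if_pos h

lemma rho_one {v : Fin r × ZMod s} (h : v.1.val = 1) :
    rho r s j v = (r-2)*s + (if oo s j v.2 = 0 then 2*s-3 else 2*(oo s j v.2 - 1)) := by
  unfold rho; rw [if_neg (by omega), if_pos h]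

lemma rho_zero {v : Fin r × ZMod s} (h : v.1.val = 0) :
    rho r s j v = (r-2)*s +
      (if oo s j v.2 = 0 then 2*s-1 else if oo s j v.2 = 1 then 2*s-2
       else 2*(oo s j v.2) - 3) := by
  unfold rho; rw [if_neg (by omega), if_neg (by omega)]

include hs in
/-- larger row index (≥2) comes strictly earlier -/
lemma ltAA {u v : Fin r × ZMod s} (hv : 2 ≤ v.1.val) (hu : 2 ≤ u.1.val)
    (hvu : v.1.val < u.1.val) : rho r s j u < rho r s j v := by
  rw [rho_hi j hu, rho_hi j hv]
  have h1 : oo s j u.2 < s := oo_lt j hs u.2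
  have hbl := u.1.isLt
  have h2 : r - 1 - u.1.val + 1 ≤ r - 1 - v.1.val := by omega
  calc (r-1-u.1.val)*s + oo s j u.2 < (r-1-u.1.val)*s + s := by omega
  _ = (r-1-u.1.val+1)*s := by ring
  _ ≤ (r-1-v.1.val)*s := Nat.mul_le_mul_right s h2
  _ ≤ _ := Nat.le_add_right _ _

include hs in
/-- any phase-A vertex is earlier than any phase-B vertex -/
lemma ltAB {u v : Fin r × ZMod s} (hu : 2 ≤ u.1.val) (hv : v.1.val ≤ 1) :
    rho r s j u < rho r s j v := by
  rw [rho_hi j hu]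
  unfold rho
  rw [if_neg (by omega)]
  have h1 : oo s j u.2 < s := oo_lt j hs u.2
  have hal := u.1.isLt
  have h2 : r-1-u.1.val + 1 ≤ r - 2 := by omega
  have h3 : (r-1-u.1.val)*s + oo s j u.2 < (r-1-u.1.val+1)*s := by
    have h4 : (r-1-u.1.val+1)*s = (r-1-u.1.val)*s + s := by ring
    omega
  calc (r-1-u.1.val)*s + oo s j u.2 < (r-1-u.1.val+1)*s := h3
  _ ≤ (r-2)*s := Nat.mul_le_mul_right s h2
  _ ≤ _ := Nat.le_add_right _ _

lemma adj_cases {u v : Fin r × ZMod s} (h : (C r s).Adj v u) :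
    (u.1 = v.1 ∧ (u.2 = v.2 + 1 ∨ u.2 = v.2 - 1)) ∨
    (u.1.val = v.1.val + 1 ∧ (u.2 = v.2 ∨ u.2 = v.2 - 1)) ∨
    (u.1.val + 1 = v.1.val ∧ (u.2 = v.2 ∨ u.2 = v.2 + 1)) := by
  obtain ⟨hne, hc | hc⟩ := h
  · exact hc
  · rcases hc with ⟨h1, h2 | h2⟩ | ⟨h1, h2 | h2⟩ | ⟨h1, h2 | h2⟩
    · exact Or.inl ⟨h1.symm, Or.inr (by rw [h2]; ring)⟩
    · exact Or.inl ⟨h1.symm, Or.inl (by rw [h2]; ring)⟩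
    · exact Or.inr (Or.inr ⟨h1.symm, Or.inl h2.symm⟩)
    · exact Or.inr (Or.inr ⟨h1.symm, Or.inr (by rw [h2]; ring)⟩)
    · exact Or.inr (Or.inl ⟨h1.symm, Or.inl h2.symm⟩)
    · exact Or.inr (Or.inl ⟨h1.symm, Or.inr (by rw [h2]; ring)⟩)

include hs in
/-- adjacent vertices have distinct positions -/
lemma adj_rho_ne {u v : Fin r × ZMod s} (h : (C r s).Adj v u) :
    rho r s j u ≠ rho r s j v := by
  have hou := oo_lt j hs u.2
  have hov := oo_lt j hs v.2
  rcases adj_cases h with ⟨h1, h2⟩ | ⟨h1, h2⟩ | ⟨h1, h2⟩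
  · -- same row
    have hne2 : u.2 ≠ v.2 := by
      rcases h2 with h2 | h2 <;> rw [h2] <;> intro hh
      · exact one_nz hs (by linear_combination hh)
      · exact one_nz hs (by linear_combination -hh)
    have hoo : oo s j u.2 ≠ oo s j v.2 := fun hh => hne2 (oo_inj j hh)
    have h1v : u.1.val = v.1.val := by rw [h1]
    rcases Nat.lt_or_ge v.1.val 2 with hv2 | hv2
    · have hv01 : v.1.val = 0 ∨ v.1.val = 1 := by omega
      rcases hv01 with hv0 | hv0
      · rw [rho_zero j (by omega : u.1.val = 0), rho_zero j hv0]
        intro heq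
        have hthis := Nat.add_left_cancel heq
        split_ifs at hthis <;> omega
      · rw [rho_one j (by omega : u.1.val = 1), rho_one j hv0]
        intro heq
        have hthis := Nat.add_left_cancel heq
        split_ifs at hthis <;> omega
    · have hrw : rho r s j u = (r - 1 - v.1.val) * s + oo s j u.2 := by
        rw [rho_hi j (by omega : 2 ≤ u.1.val), h1v]
      rw [hrw, rho_hi j hv2]
      intro heq
      exact hoo (Nat.add_left_cancel heq)
  · -- u one row below v
    rcases Nat.lt_or_ge v.1.val 2 with hv2 | hv2
    · rcases Nat.lt_or_ge u.1.val 2 with hu2 | hu2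
      · -- v row 0, u row 1
        have hv0 : v.1.val = 0 := by omega
        have hu1 : u.1.val = 1 := by omega
        rw [rho_one j hu1, rho_zero j hv0]
        intro heq
        have hthis := Nat.add_left_cancel heq
        split_ifs at hthis <;> omega
      · exact Nat.ne_of_lt (ltAB j hs hu2 (by omega))
    · exact Nat.ne_of_lt (ltAA j hs hv2 (by omega) (by omega))
  · -- u one row above v
    rcases Nat.lt_or_ge u.1.val 2 with hu2 | hu2
    · rcases Nat.lt_or_ge v.1.val 2 with hv2 | hv2
      · have hu0 : u.1.val = 0 := by omega
        have hv1 : v.1.val = 1 := by omega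
        rw [rho_one j hv1, rho_zero j hu0]
        intro heq
        have hthis := Nat.add_left_cancel heq
        split_ifs at hthis <;> omega
      · exact Nat.ne_of_gt (ltAB j hs hv2 (by omega))
    · exact Nat.ne_of_gt (ltAA j hs hu2 (by omega) (by omega))

end RL

section MAIN
variable (r s : ℕ) (j : ZMod s) [NeZero s]

def nbelow (v : Fin r × ZMod s) : Finset (Fin r × ZMod s) :=
  univ.filter (fun u => (C r s).Adj v u ∧ rho r s j u < rho r s j v)

lemma mem_nbelow {v u : Fin r × ZMod s} :
    u ∈ nbelow r s j v ↔ (C r s).Adj v u ∧ rho r s j u < rho r s j v := by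
  simp [nbelow]

variable (hr : 3 ≤ r)

def i0 : Fin r := ⟨0, by omega⟩
def i1 : Fin r := ⟨1, by omega⟩
def i2 : Fin r := ⟨2, by omega⟩

def v31 : Fin r × ZMod s := (i2 r hr, j - 1)
def v3j : Fin r × ZMod s := (i2 r hr, j)
def v2j : Fin r × ZMod s := (i1 r hr, j)
def vy : Fin r × ZMod s := (i0 r hr, j)
def vw : Fin r × ZMod s := (i0 r hr, j - 1)

/-- the set of neighbours of `vw` that come before position `rho v` -/
def wfilt (v : Fin r × ZMod s) : Finset (Fin r × ZMod s) :=
  univ.filter (fun u => (C r s).Adj (vw r s j hr) u ∧ rho r s j u < rho r s j v)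

variable (L : Fin r × ZMod s → Finset ℕ)

/-- the greedy colouring with steering preferences -/
def col : Fin r × ZMod s → ℕ
  | v =>
    let F : Finset ℕ := ((nbelow r s j v).attach).image (fun u => col u.1)
    let avail := L v \ F
    let D := L (v2j r s j hr) \ L (vy r s j hr)
    let pref : Finset ℕ :=
      if v = v31 r s j hr ∨ v = v3j r s j hr then avail \ D
      else if v = v2j r s j hr then avail ∩ D
      else if v = vy r s j hr then
        avail \ (L (vw r s j hr) \
          (((wfilt r s j hr v).attach).image (fun u => col u.1)))
      else ∅
    if h : pref.Nonempty then pref.min' h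
    else if h2 : avail.Nonempty then avail.min' h2 else 0
termination_by v => rho r s j v
decreasing_by
  · have hm := u.2
    simp only [nbelow, Finset.mem_filter] at hm
    exact hm.2.2
  · have hm := u.2
    simp only [wfilt, Finset.mem_filter] at hm
    exact hm.2.2

def Fs (v : Fin r × ZMod s) : Finset ℕ :=
  ((nbelow r s j v).attach).image (fun u => col r s j hr L u.1)

def avl (v : Fin r × ZMod s) : Finset ℕ := L v \ Fs r s j hr L v

def DD : Finset ℕ := L (v2j r s j hr) \ L (vy r s j hr)

def WexF (v : Fin r × ZMod s) : Finset ℕ :=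
  ((wfilt r s j hr v).attach).image (fun u => col r s j hr L u.1)

def prefS (v : Fin r × ZMod s) : Finset ℕ :=
  if v = v31 r s j hr ∨ v = v3j r s j hr then avl r s j hr L v \ DD r s j hr L
  else if v = v2j r s j hr then avl r s j hr L v ∩ DD r s j hr L
  else if v = vy r s j hr then
    avl r s j hr L v \ (L (vw r s j hr) \ WexF r s j hr L v)
  else ∅

lemma col_eq (v : Fin r × ZMod s) :
    col r s j hr L v =
      if h : (prefS r s j hr L v).Nonempty then (prefS r s j hr L v).min' h
      else if h2 : (avl r s j hr L v).Nonempty then (avl r s j hr L v).min' h2 else 0 := by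
  rw [col]
  rfl

lemma prefS_subset (v : Fin r × ZMod s) : prefS r s j hr L v ⊆ avl r s j hr L v := by
  unfold prefS
  split_ifs
  · exact sdiff_subset
  · exact inter_subset_left
  · exact sdiff_subset
  · exact empty_subset _

lemma col_mem_avl {v : Fin r × ZMod s} (h : (avl r s j hr L v).Nonempty) :
    col r s j hr L v ∈ avl r s j hr L v := by
  rw [col_eq]
  split_ifs with h1
  · exact prefS_subset r s j hr L v (min'_mem _ h1)
  · exact min'_mem _ h

lemma col_mem_prefS {v : Fin r × ZMod s} (h : (prefS r s j hr L v).Nonempty) :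
    col r s j hr L v ∈ prefS r s j hr L v := by
  rw [col_eq, dif_pos h]
  exact min'_mem _ h

lemma Fs_eq (v : Fin r × ZMod s) :
    Fs r s j hr L v = (nbelow r s j v).image (col r s j hr L) := by
  unfold Fs
  have h : (fun (u : {x // x ∈ nbelow r s j v}) => col r s j hr L u.1)
      = (col r s j hr L) ∘ Subtype.val := rfl
  rw [h, ← Finset.image_image, Finset.attach_image_val]

end MAIN


section SUBS
variable {r s : ℕ} [NeZero s] (j : ZMod s) (hr : 3 ≤ r) (hs : 3 ≤ s)

include hs in
lemma above_not_lt {u v : Fin r × ZMod s} (hv2 : 2 ≤ v.1.val) (h1 : u.1.val + 1 = v.1.val) :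
    ¬ rho r s j u < rho r s j v := by
  rcases Nat.lt_or_ge u.1.val 2 with h | h
  · exact Nat.not_lt.mpr (le_of_lt (ltAB j hs hv2 (by omega)))
  · exact Nat.not_lt.mpr (le_of_lt (ltAA j hs h hv2 (by omega)))

include hr hs in
lemma nb_A {v : Fin r × ZMod s} (h2 : 2 ≤ v.1.val) (hir : v.1.val ≤ r - 2) :
    nbelow r s j v ⊆ {(v.1, v.2+1), (v.1, v.2-1),
      (⟨v.1.val+1, by omega⟩, v.2), (⟨v.1.val+1, by omega⟩, v.2-1)} := by
  intro u hu
  rw [mem_nbelow] at hu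
  obtain ⟨hadj, hlt⟩ := hu
  simp only [mem_insert, mem_singleton]
  rcases adj_cases hadj with ⟨h1, h2' | h2'⟩ | ⟨h1, h2' | h2'⟩ | ⟨h1, h2' | h2'⟩
  · exact Or.inl (Prod.ext h1 h2')
  · exact Or.inr (Or.inl (Prod.ext h1 h2'))
  · exact Or.inr (Or.inr (Or.inl (Prod.ext (Fin.ext h1) h2')))
  · exact Or.inr (Or.inr (Or.inr (Prod.ext (Fin.ext h1) h2')))
  · exact absurd hlt (above_not_lt j hs h2 h1)
  · exact absurd hlt (above_not_lt j hs h2 h1)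

include hr hs in
lemma nb_Abot {v : Fin r × ZMod s} (hbot : v.1.val = r - 1) :
    nbelow r s j v ⊆ {(v.1, v.2+1), (v.1, v.2-1)} := by
  intro u hu
  rw [mem_nbelow] at hu
  obtain ⟨hadj, hlt⟩ := hu
  simp only [mem_insert, mem_singleton]
  have hv2 : 2 ≤ v.1.val := by omega
  rcases adj_cases hadj with ⟨h1, h2' | h2'⟩ | ⟨h1, h2' | h2'⟩ | ⟨h1, h2' | h2'⟩
  · exact Or.inl (Prod.ext h1 h2')
  · exact Or.inr (Prod.ext h1 h2')
  · exact absurd (u.1.isLt) (by omega)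
  · exact absurd (u.1.isLt) (by omega)
  · exact absurd hlt (above_not_lt j hs hv2 h1)
  · exact absurd hlt (above_not_lt j hs hv2 h1)

include hr hs in
lemma nb_v31_hi (hr4 : 4 ≤ r) :
    nbelow r s j (v31 r s j hr) ⊆
      {((⟨3, by omega⟩ : Fin r), j-1), ((⟨3, by omega⟩ : Fin r), j-1-1)} := by
  intro u hu
  rw [mem_nbelow] at hu
  obtain ⟨hadj, hlt⟩ := hu
  simp only [mem_insert, mem_singleton]
  have hrv : rho r s j (v31 r s j hr) = (r-1-2)*s + 0 := by
    rw [rho_hi j (by norm_num [v31, i2])]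
    simp [v31, i2, oo_jm1 j hs]
  rcases adj_cases hadj with ⟨h1, h2' | h2'⟩ | ⟨h1, h2' | h2'⟩ | ⟨h1, h2' | h2'⟩
  · exfalso
    have h1v : u.1.val = 2 := by rw [h1]; rfl
    have hval : oo s j u.2 = 1 := by
      rw [h2']
      show oo s j (j - 1 + 1) = 1
      rw [show (j:ZMod s) - 1 + 1 = j from by ring, oo_j j hs]
    rw [rho_hi j (by omega), hrv, h1v, hval] at hlt
    have := Nat.lt_of_add_lt_add_left hlt
    omega
  · exfalso
    have h1v : u.1.val = 2 := by rw [h1]; rfl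
    have hval : oo s j u.2 = s - 1 := by
      rw [h2']
      show oo s j (j - 1 - 1) = s - 1
      exact oo_jm2 j hs
    rw [rho_hi j (by omega), hrv, h1v, hval] at hlt
    have := Nat.lt_of_add_lt_add_left hlt
    omega
  · exact Or.inl (Prod.ext (Fin.ext h1) h2')
  · exact Or.inr (Prod.ext (Fin.ext h1) h2')
  · exact absurd hlt (above_not_lt j hs (by norm_num [v31, i2]) h1)
  · exact absurd hlt (above_not_lt j hs (by norm_num [v31, i2]) h1)

include hr hs in
lemma nb_v31_r3 (hr3 : r = 3) :
    nbelow r s j (v31 r s j hr) ⊆ (∅ : Finset (Fin r × ZMod s)) := by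
  intro u hu
  rw [mem_nbelow] at hu
  obtain ⟨hadj, hlt⟩ := hu
  exfalso
  have hrv : rho r s j (v31 r s j hr) = (r-1-2)*s + 0 := by
    rw [rho_hi j (by norm_num [v31, i2])]
    simp [v31, i2, oo_jm1 j hs]
  rcases adj_cases hadj with ⟨h1, h2' | h2'⟩ | ⟨h1, h2' | h2'⟩ | ⟨h1, h2' | h2'⟩
  · have h1v : u.1.val = 2 := by rw [h1]; rfl
    have hval : oo s j u.2 = 1 := by
      rw [h2']
      show oo s j (j - 1 + 1) = 1
      rw [show (j:ZMod s) - 1 + 1 = j from by ring, oo_j j hs]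
    rw [rho_hi j (by omega), hrv, h1v, hval] at hlt
    have := Nat.lt_of_add_lt_add_left hlt
    omega
  · have h1v : u.1.val = 2 := by rw [h1]; rfl
    have hval : oo s j u.2 = s - 1 := by
      rw [h2']
      show oo s j (j - 1 - 1) = s - 1
      exact oo_jm2 j hs
    rw [rho_hi j (by omega), hrv, h1v, hval] at hlt
    have := Nat.lt_of_add_lt_add_left hlt
    omega
  · have h1v : u.1.val = 3 := by rw [h1]; rfl
    exact absurd u.1.isLt (by omega)
  · have h1v : u.1.val = 3 := by rw [h1]; rfl
    exact absurd u.1.isLt (by omega)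
  · exact absurd hlt (above_not_lt j hs (by norm_num [v31, i2]) h1)
  · exact absurd hlt (above_not_lt j hs (by norm_num [v31, i2]) h1)
end SUBS


section SUBS2
variable {r s : ℕ} [NeZero s] (j : ZMod s) (hr : 3 ≤ r) (hs : 3 ≤ s)

include hr hs in
lemma nb_v3j_hi (hr4 : 4 ≤ r) :
    nbelow r s j (v3j r s j hr) ⊆
      {v31 r s j hr, ((⟨3, by omega⟩ : Fin r), j), ((⟨3, by omega⟩ : Fin r), j-1)} := by
  intro u hu
  rw [mem_nbelow] at hu
  obtain ⟨hadj, hlt⟩ := hu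
  simp only [mem_insert, mem_singleton]
  have hrv : rho r s j (v3j r s j hr) = (r-1-2)*s + 1 := by
    show rho r s j (i2 r hr, j) = _
    rw [rho_hi j (by norm_num [i2]), oo_j j hs]
    norm_num [i2]
  rcases adj_cases hadj with ⟨h1, h2' | h2'⟩ | ⟨h1, h2' | h2'⟩ | ⟨h1, h2' | h2'⟩
  · exfalso
    have h1v : u.1.val = 2 := by rw [h1]; rfl
    have hval : oo s j u.2 = 2 := by rw [h2']; exact oo_jp1 j hs
    rw [rho_hi j (by omega), hrv, h1v, hval] at hlt
    have hq := Nat.lt_of_add_lt_add_left hlt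
    omega
  · exact Or.inl (Prod.ext h1 h2')
  · exact Or.inr (Or.inl (Prod.ext (Fin.ext h1) h2'))
  · exact Or.inr (Or.inr (Prod.ext (Fin.ext h1) h2'))
  · exact absurd hlt (above_not_lt j hs (by norm_num [v3j, i2]) h1)
  · exact absurd hlt (above_not_lt j hs (by norm_num [v3j, i2]) h1)

include hr hs in
lemma nb_v3j_r3 (hr3 : r = 3) :
    nbelow r s j (v3j r s j hr) ⊆ {v31 r s j hr} := by
  intro u hu
  rw [mem_nbelow] at hu
  obtain ⟨hadj, hlt⟩ := hu
  simp only [mem_singleton]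
  have hrv : rho r s j (v3j r s j hr) = (r-1-2)*s + 1 := by
    show rho r s j (i2 r hr, j) = _
    rw [rho_hi j (by norm_num [i2]), oo_j j hs]
    norm_num [i2]
  rcases adj_cases hadj with ⟨h1, h2' | h2'⟩ | ⟨h1, h2' | h2'⟩ | ⟨h1, h2' | h2'⟩
  · exfalso
    have h1v : u.1.val = 2 := by rw [h1]; rfl
    have hval : oo s j u.2 = 2 := by rw [h2']; exact oo_jp1 j hs
    rw [rho_hi j (by omega), hrv, h1v, hval] at hlt
    have hq := Nat.lt_of_add_lt_add_left hlt
    omega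
  · exact Prod.ext h1 h2'
  · have h1v : u.1.val = 3 := h1
    exact absurd u.1.isLt (by omega)
  · have h1v : u.1.val = 3 := h1
    exact absurd u.1.isLt (by omega)
  · exact absurd hlt (above_not_lt j hs (by norm_num [v3j, i2]) h1)
  · exact absurd hlt (above_not_lt j hs (by norm_num [v3j, i2]) h1)

include hr hs in
lemma nb_v2j :
    nbelow r s j (v2j r s j hr) ⊆ {(i2 r hr, j), (i2 r hr, j-1)} := by
  intro u hu
  rw [mem_nbelow] at hu
  obtain ⟨hadj, hlt⟩ := hu
  simp only [mem_insert, mem_singleton]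
  have hrv : rho r s j (v2j r s j hr) = (r-2)*s + 0 := by
    show rho r s j (i1 r hr, j) = _
    rw [rho_one j rfl, oo_j j hs]
    norm_num
  rcases adj_cases hadj with ⟨h1, h2' | h2'⟩ | ⟨h1, h2' | h2'⟩ | ⟨h1, h2' | h2'⟩
  · exfalso
    have h1v : u.1.val = 1 := by rw [h1]; rfl
    have hval : oo s j u.2 = 2 := by rw [h2']; exact oo_jp1 j hs
    rw [rho_one j h1v, hval, hrv] at hlt
    rw [if_neg (show ¬(2 = 0) by omega)] at hlt
    have hq := Nat.lt_of_add_lt_add_left hlt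
    omega
  · exfalso
    have h1v : u.1.val = 1 := by rw [h1]; rfl
    have hval : oo s j u.2 = 0 := by rw [h2']; exact oo_jm1 j hs
    rw [rho_one j h1v, hval, if_pos rfl, hrv] at hlt
    have hq := Nat.lt_of_add_lt_add_left hlt
    omega
  · exact Or.inl (Prod.ext (Fin.ext h1) h2')
  · exact Or.inr (Prod.ext (Fin.ext h1) h2')
  · exfalso
    have h1x : u.1.val + 1 = 1 := h1
    have h1v : u.1.val = 0 := by omega
    have hval : oo s j u.2 = 1 := by rw [h2']; exact oo_j j hs
    rw [rho_zero j h1v, hval, hrv] at hlt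
    rw [if_neg (show ¬(1 = 0) by omega), if_pos rfl] at hlt
    have hq := Nat.lt_of_add_lt_add_left hlt
    omega
  · exfalso
    have h1x : u.1.val + 1 = 1 := h1
    have h1v : u.1.val = 0 := by omega
    have hval : oo s j u.2 = 2 := by rw [h2']; exact oo_jp1 j hs
    rw [rho_zero j h1v, hval, hrv] at hlt
    rw [if_neg (show ¬(2 = 0) by omega), if_neg (show ¬(2 = 1) by omega)] at hlt
    have hq := Nat.lt_of_add_lt_add_left hlt
    omega

include hr hs in
lemma nb_B2 {x : ZMod s} (hx2 : 2 ≤ oo s j x) :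
    nbelow r s j (i1 r hr, x) ⊆
      {(i1 r hr, x-1), (i0 r hr, x), (i2 r hr, x), (i2 r hr, x-1)} := by
  intro u hu
  rw [mem_nbelow] at hu
  obtain ⟨hadj, hlt⟩ := hu
  simp only [mem_insert, mem_singleton]
  have hox := oo_lt j hs x
  have hrv : rho r s j ((i1 r hr, x)) = (r-2)*s + (2*(oo s j x - 1)) := by
    rw [rho_one j rfl]
    rw [if_neg (show ¬(oo s j x = 0) by omega)]
  rcases adj_cases hadj with ⟨h1, h2' | h2'⟩ | ⟨h1, h2' | h2'⟩ | ⟨h1, h2' | h2'⟩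
  · exfalso
    have h1v : u.1.val = 1 := by rw [h1]; rfl
    have hval : oo s j u.2 = if oo s j x = s - 1 then 0 else oo s j x + 1 := by
      rw [h2']; exact oo_succ j hs x
    rw [rho_one j h1v, hval, hrv] at hlt
    by_cases hw : oo s j x = s - 1
    · rw [if_pos hw, if_pos rfl] at hlt
      have hq := Nat.lt_of_add_lt_add_left hlt
      omega
    · rw [if_neg hw, if_neg (show ¬(oo s j x + 1 = 0) by omega)] at hlt
      have hq := Nat.lt_of_add_lt_add_left hlt
      omega
  · exact Or.inl (Prod.ext h1 h2')
  · exact Or.inr (Or.inr (Or.inl (Prod.ext (Fin.ext h1) h2')))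
  · exact Or.inr (Or.inr (Or.inr (Prod.ext (Fin.ext h1) h2')))
  · right; left
    have h1x : u.1.val + 1 = 1 := h1
    have h1v : u.1.val = 0 := by omega
    exact Prod.ext (Fin.ext h1v) h2'
  · exfalso
    have h1x : u.1.val + 1 = 1 := h1
    have h1v : u.1.val = 0 := by omega
    have hval : oo s j u.2 = if oo s j x = s - 1 then 0 else oo s j x + 1 := by
      rw [h2']; exact oo_succ j hs x
    rw [rho_zero j h1v, hval, hrv] at hlt
    by_cases hw : oo s j x = s - 1
    · rw [if_pos hw, if_pos rfl] at hlt
      have hq := Nat.lt_of_add_lt_add_left hlt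
      omega
    · rw [if_neg hw, if_neg (show ¬(oo s j x + 1 = 0) by omega),
          if_neg (show ¬(oo s j x + 1 = 1) by omega)] at hlt
      have hq := Nat.lt_of_add_lt_add_left hlt
      omega

include hr hs in
lemma nb_B3 :
    nbelow r s j (i1 r hr, j-1) ⊆
      {(i1 r hr, j-1-1), (i1 r hr, j), (i2 r hr, j-1), (i2 r hr, j-1-1)} := by
  intro u hu
  rw [mem_nbelow] at hu
  obtain ⟨hadj, hlt⟩ := hu
  simp only [mem_insert, mem_singleton]
  have hrv : rho r s j ((i1 r hr, j-1)) = (r-2)*s + (2*s-3) := by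
    rw [rho_one j rfl, oo_jm1 j hs, if_pos rfl]
  rcases adj_cases hadj with ⟨h1, h2' | h2'⟩ | ⟨h1, h2' | h2'⟩ | ⟨h1, h2' | h2'⟩
  · right; left
    refine Prod.ext h1 ?_
    rw [h2']
    show (j:ZMod s) - 1 + 1 = j
    ring
  · exact Or.inl (Prod.ext h1 h2')
  · exact Or.inr (Or.inr (Or.inl (Prod.ext (Fin.ext h1) h2')))
  · exact Or.inr (Or.inr (Or.inr (Prod.ext (Fin.ext h1) h2')))
  · exfalso
    have h1x : u.1.val + 1 = 1 := h1
    have h1v : u.1.val = 0 := by omega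
    have hval : oo s j u.2 = 0 := by rw [h2']; exact oo_jm1 j hs
    rw [rho_zero j h1v, hval, if_pos rfl, hrv] at hlt
    have hq := Nat.lt_of_add_lt_add_left hlt
    omega
  · exfalso
    have h1x : u.1.val + 1 = 1 := h1
    have h1v : u.1.val = 0 := by omega
    have hval : oo s j u.2 = 1 := by
      rw [h2']
      show oo s j (j - 1 + 1) = 1
      rw [show (j:ZMod s) - 1 + 1 = j from by ring, oo_j j hs]
    rw [rho_zero j h1v, hval, hrv] at hlt
    rw [if_neg (show ¬(1 = 0) by omega), if_pos rfl] at hlt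
    have hq := Nat.lt_of_add_lt_add_left hlt
    omega

include hr hs in
lemma rho_vy_eq : rho r s j (vy r s j hr) = (r-2)*s + (2*s-2) := by
  show rho r s j (i0 r hr, j) = _
  rw [rho_zero j rfl, oo_j j hs]
  rw [if_neg (show ¬(1 = 0) by omega), if_pos rfl]

include hr hs in
lemma nb_vy :
    nbelow r s j (vy r s j hr) ⊆ {(i0 r hr, j+1), (i1 r hr, j), (i1 r hr, j-1)} := by
  intro u hu
  rw [mem_nbelow] at hu
  obtain ⟨hadj, hlt⟩ := hu
  simp only [mem_insert, mem_singleton]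
  have hrv := rho_vy_eq j hr hs
  rcases adj_cases hadj with ⟨h1, h2' | h2'⟩ | ⟨h1, h2' | h2'⟩ | ⟨h1, h2' | h2'⟩
  · exact Or.inl (Prod.ext h1 h2')
  · exfalso
    have h1v : u.1.val = 0 := by rw [h1]; rfl
    have hval : oo s j u.2 = 0 := by rw [h2']; exact oo_jm1 j hs
    rw [rho_zero j h1v, hval, if_pos rfl, hrv] at hlt
    have hq := Nat.lt_of_add_lt_add_left hlt
    omega
  · exact Or.inr (Or.inl (Prod.ext (Fin.ext h1) h2'))
  · exact Or.inr (Or.inr (Prod.ext (Fin.ext h1) h2'))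
  · have h1x : u.1.val + 1 = 0 := h1
    exact absurd h1x (by omega)
  · have h1x : u.1.val + 1 = 0 := h1
    exact absurd h1x (by omega)

include hr hs in
lemma nb_C2 {x : ZMod s} (hx2 : 2 ≤ oo s j x) :
    nbelow r s j (i0 r hr, x) ⊆ {(i0 r hr, x-1), (i1 r hr, x-1)} := by
  intro u hu
  rw [mem_nbelow] at hu
  obtain ⟨hadj, hlt⟩ := hu
  simp only [mem_insert, mem_singleton]
  have hox := oo_lt j hs x
  have hrv : rho r s j ((i0 r hr, x)) = (r-2)*s + (2*(oo s j x) - 3) := by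
    rw [rho_zero j rfl]
    rw [if_neg (show ¬(oo s j x = 0) by omega), if_neg (show ¬(oo s j x = 1) by omega)]
  rcases adj_cases hadj with ⟨h1, h2' | h2'⟩ | ⟨h1, h2' | h2'⟩ | ⟨h1, h2' | h2'⟩
  · exfalso
    have h1v : u.1.val = 0 := by rw [h1]; rfl
    have hval : oo s j u.2 = if oo s j x = s - 1 then 0 else oo s j x + 1 := by
      rw [h2']; exact oo_succ j hs x
    rw [rho_zero j h1v, hval, hrv] at hlt
    by_cases hw : oo s j x = s - 1
    · rw [if_pos hw, if_pos rfl] at hlt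
      have hq := Nat.lt_of_add_lt_add_left hlt
      omega
    · rw [if_neg hw, if_neg (show ¬(oo s j x + 1 = 0) by omega),
          if_neg (show ¬(oo s j x + 1 = 1) by omega)] at hlt
      have hq := Nat.lt_of_add_lt_add_left hlt
      omega
  · exact Or.inl (Prod.ext h1 h2')
  · exfalso
    have h1x : u.1.val = 1 := h1
    have h2x : u.2 = x := h2'
    rw [rho_one j h1x, h2x, hrv] at hlt
    rw [if_neg (show ¬(oo s j x = 0) by omega)] at hlt
    have hq := Nat.lt_of_add_lt_add_left hlt
    omega
  · right
    have h1x : u.1.val = 1 := h1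
    exact Prod.ext (Fin.ext h1x) h2'
  · have h1x : u.1.val + 1 = 0 := h1
    exact absurd h1x (by omega)
  · have h1x : u.1.val + 1 = 0 := h1
    exact absurd h1x (by omega)

include hr hs in
lemma nb_vw :
    nbelow r s j (vw r s j hr) ⊆
      {(i0 r hr, j-1-1), vy r s j hr, (i1 r hr, j-1), (i1 r hr, j-1-1)} := by
  intro u hu
  rw [mem_nbelow] at hu
  obtain ⟨hadj, hlt⟩ := hu
  simp only [mem_insert, mem_singleton]
  rcases adj_cases hadj with ⟨h1, h2' | h2'⟩ | ⟨h1, h2' | h2'⟩ | ⟨h1, h2' | h2'⟩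
  · right; left
    refine Prod.ext h1 ?_
    rw [h2']
    show (j:ZMod s) - 1 + 1 = j
    ring
  · exact Or.inl (Prod.ext h1 h2')
  · have h1x : u.1.val = 1 := h1
    exact Or.inr (Or.inr (Or.inl (Prod.ext (Fin.ext h1x) h2')))
  · have h1x : u.1.val = 1 := h1
    exact Or.inr (Or.inr (Or.inr (Prod.ext (Fin.ext h1x) h2')))
  · have h1x : u.1.val + 1 = 0 := h1
    exact absurd h1x (by omega)
  · have h1x : u.1.val + 1 = 0 := h1
    exact absurd h1x (by omega)

include hr hs in
lemma wfilt_sub :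
    wfilt r s j hr (vy r s j hr) ⊆
      {(i0 r hr, j-1-1), (i1 r hr, j-1), (i1 r hr, j-1-1)} := by
  intro u hu
  simp only [wfilt, Finset.mem_filter] at hu
  obtain ⟨-, hadj, hlt⟩ := hu
  simp only [mem_insert, mem_singleton]
  have hrv := rho_vy_eq j hr hs
  rcases adj_cases hadj with ⟨h1, h2' | h2'⟩ | ⟨h1, h2' | h2'⟩ | ⟨h1, h2' | h2'⟩
  · exfalso
    have h1v : u.1.val = 0 := by rw [h1]; rfl
    have hval : oo s j u.2 = 1 := by
      rw [h2']
      show oo s j (j - 1 + 1) = 1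
      rw [show (j:ZMod s) - 1 + 1 = j from by ring, oo_j j hs]
    rw [rho_zero j h1v, hval, hrv] at hlt
    rw [if_neg (show ¬(1 = 0) by omega), if_pos rfl] at hlt
    have hq := Nat.lt_of_add_lt_add_left hlt
    omega
  · exact Or.inl (Prod.ext h1 h2')
  · have h1x : u.1.val = 1 := h1
    exact Or.inr (Or.inl (Prod.ext (Fin.ext h1x) h2'))
  · have h1x : u.1.val = 1 := h1
    exact Or.inr (Or.inr (Prod.ext (Fin.ext h1x) h2'))
  · have h1x : u.1.val + 1 = 0 := h1
    exact absurd h1x (by omega)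
  · have h1x : u.1.val + 1 = 0 := h1
    exact absurd h1x (by omega)

include hr hs in
lemma nbvw_wfilt {u : Fin r × ZMod s} (hu : u ∈ nbelow r s j (vw r s j hr))
    (hne : u ≠ vy r s j hr) : u ∈ wfilt r s j hr (vy r s j hr) := by
  have hadj : (C r s).Adj (vw r s j hr) u := by
    rw [mem_nbelow] at hu; exact hu.1
  have h4 := nb_vw j hr hs hu
  simp only [mem_insert, mem_singleton] at h4
  have hrvy := rho_vy_eq j hr hs
  simp only [wfilt, Finset.mem_filter]
  refine ⟨mem_univ _, hadj, ?_⟩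
  rcases h4 with h | h | h | h
  · rw [h, rho_zero j rfl, oo_jm2 j hs, hrvy]
    rw [if_neg (show ¬(s-1 = 0) by omega), if_neg (show ¬(s-1 = 1) by omega)]
    apply Nat.add_lt_add_left
    omega
  · exact absurd h hne
  · rw [h, rho_one j rfl, oo_jm1 j hs, if_pos rfl, hrvy]
    apply Nat.add_lt_add_left
    omega
  · rw [h, rho_one j rfl, oo_jm2 j hs, hrvy]
    rw [if_neg (show ¬(s-1 = 0) by omega)]
    apply Nat.add_lt_add_left
    omega

end SUBS2



section CARDH
variable {α : Type*} [DecidableEq α]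

lemma cardle2 (a b : α) : ({a, b} : Finset α).card ≤ 2 := by
  apply le_trans (Finset.card_insert_le _ _)
  simp

lemma cardle3 (a b c : α) : ({a, b, c} : Finset α).card ≤ 3 := by
  apply le_trans (Finset.card_insert_le _ _)
  exact Nat.add_le_add_right (cardle2 b c) 1

lemma cardle4 (a b c d : α) : ({a, b, c, d} : Finset α).card ≤ 4 := by
  apply le_trans (Finset.card_insert_le _ _)
  exact Nat.add_le_add_right (cardle3 b c d) 1

end CARDH

/-- required lower bounds on list sizes -/
def bnd (r s : ℕ) (j : ZMod s) (v : Fin r × ZMod s) : ℕ :=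
  if v.1.val = 0 then (if v.2 = j ∨ v.2 = j - 1 then 4 else 3)
  else if v.1.val = r - 1 then 3 else 5

section STEER
variable {r s : ℕ} [NeZero s] (j : ZMod s) (hr : 3 ≤ r) (hs : 3 ≤ s)
  (L : Fin r × ZMod s → Finset ℕ)

lemma WexF_eq (v : Fin r × ZMod s) :
    WexF r s j hr L v = (wfilt r s j hr v).image (col r s j hr L) := by
  unfold WexF
  have h : (fun (u : {x // x ∈ wfilt r s j hr v}) => col r s j hr L u.1)
      = (col r s j hr L) ∘ Subtype.val := rfl
  rw [h, ← Finset.image_image, Finset.attach_image_val]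

lemma Fs_card_le (v : Fin r × ZMod s) :
    (Fs r s j hr L v).card ≤ (nbelow r s j v).card := by
  rw [Fs_eq]
  exact Finset.card_image_le

lemma avl_card_ge (v : Fin r × ZMod s) {n m : ℕ} (hL : n ≤ (L v).card)
    (hnb : (nbelow r s j v).card ≤ m) : n - m ≤ (avl r s j hr L v).card := by
  have h1 := Finset.le_card_sdiff (Fs r s j hr L v) (L v)
  have h2 := Fs_card_le j hr L v
  unfold avl
  omega

lemma ne_v2j_v31 : v2j r s j hr ≠ v31 r s j hr := by
  simp [v2j, v31, i1, i2, Prod.ext_iff, Fin.ext_iff]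

lemma ne_v2j_v3j : v2j r s j hr ≠ v3j r s j hr := by
  simp [v2j, v3j, i1, i2, Prod.ext_iff, Fin.ext_iff]

lemma ne_vy_v31 : vy r s j hr ≠ v31 r s j hr := by
  simp [vy, v31, i0, i2, Prod.ext_iff, Fin.ext_iff]

lemma ne_vy_v3j : vy r s j hr ≠ v3j r s j hr := by
  simp [vy, v3j, i0, i2, Prod.ext_iff, Fin.ext_iff]

lemma ne_vy_v2j : vy r s j hr ≠ v2j r s j hr := by
  simp [vy, v2j, i0, i1, Prod.ext_iff, Fin.ext_iff]

lemma prefS_v31 :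
    prefS r s j hr L (v31 r s j hr) = avl r s j hr L (v31 r s j hr) \ DD r s j hr L := by
  unfold prefS
  rw [if_pos (Or.inl rfl)]

lemma prefS_v3j :
    prefS r s j hr L (v3j r s j hr) = avl r s j hr L (v3j r s j hr) \ DD r s j hr L := by
  unfold prefS
  rw [if_pos (Or.inr rfl)]

lemma prefS_v2j :
    prefS r s j hr L (v2j r s j hr) = avl r s j hr L (v2j r s j hr) ∩ DD r s j hr L := by
  unfold prefS
  rw [if_neg, if_pos rfl]
  push_neg
  exact ⟨ne_v2j_v31 j hr, ne_v2j_v3j j hr⟩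

lemma prefS_vy :
    prefS r s j hr L (vy r s j hr) =
      avl r s j hr L (vy r s j hr) \
        (L (vw r s j hr) \ WexF r s j hr L (vy r s j hr)) := by
  unfold prefS
  rw [if_neg, if_neg (ne_vy_v2j j hr), if_pos rfl]
  push_neg
  exact ⟨ne_vy_v31 j hr, ne_vy_v3j j hr⟩

variable (hB : ∀ v, bnd r s j v ≤ (L v).card) (hy4 : (L (vy r s j hr)).card = 4)

include hB hs in
lemma avl_v31_card : 3 ≤ (avl r s j hr L (v31 r s j hr)).card := by
  rcases Nat.lt_or_ge r 4 with h4 | h4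
  · have hr3 : r = 3 := by omega
    have hnb : (nbelow r s j (v31 r s j hr)).card ≤ 0 := by
      have := Finset.card_le_card (nb_v31_r3 j hr hs hr3)
      simpa using this
    have hbnd : (3:ℕ) ≤ (L (v31 r s j hr)).card := by
      have := hB (v31 r s j hr)
      unfold bnd at this
      rw [if_neg (by simp [v31, i2]), if_pos (by simp [v31, i2]; omega)] at this
      exact this
    have := avl_card_ge j hr L (v31 r s j hr) hbnd hnb
    omega
  · have hnb : (nbelow r s j (v31 r s j hr)).card ≤ 2 := by
      have := Finset.card_le_card (nb_v31_hi j hr hs h4)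
      exact le_trans this (cardle2 _ _)
    have hbnd : (5:ℕ) ≤ (L (v31 r s j hr)).card := by
      have := hB (v31 r s j hr)
      unfold bnd at this
      rw [if_neg (by simp [v31, i2]), if_neg (by simp [v31, i2]; omega)] at this
      exact this
    have := avl_card_ge j hr L (v31 r s j hr) hbnd hnb
    omega

include hB hs in
lemma avl_v3j_card : 2 ≤ (avl r s j hr L (v3j r s j hr)).card := by
  rcases Nat.lt_or_ge r 4 with h4 | h4
  · have hr3 : r = 3 := by omega
    have hnb : (nbelow r s j (v3j r s j hr)).card ≤ 1 := by
      have := Finset.card_le_card (nb_v3j_r3 j hr hs hr3)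
      simpa using this
    have hbnd : (3:ℕ) ≤ (L (v3j r s j hr)).card := by
      have := hB (v3j r s j hr)
      unfold bnd at this
      rw [if_neg (by simp [v3j, i2]), if_pos (by simp [v3j, i2]; omega)] at this
      exact this
    have := avl_card_ge j hr L (v3j r s j hr) hbnd hnb
    omega
  · have hnb : (nbelow r s j (v3j r s j hr)).card ≤ 3 := by
      have := Finset.card_le_card (nb_v3j_hi j hr hs h4)
      exact le_trans this (cardle3 _ _ _)
    have hbnd : (5:ℕ) ≤ (L (v3j r s j hr)).card := by
      have := hB (v3j r s j hr)
      unfold bnd at this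
      rw [if_neg (by simp [v3j, i2]), if_neg (by simp [v3j, i2]; omega)] at this
      exact this
    have := avl_card_ge j hr L (v3j r s j hr) hbnd hnb
    omega

include hB hs hy4 in
lemma Dclaim : (DD r s j hr L \ {col r s j hr L (v3j r s j hr),
    col r s j hr L (v31 r s j hr)}).Nonempty := by
  have hDD1 : 1 ≤ (DD r s j hr L).card := by
    have h1 := Finset.le_card_sdiff (L (vy r s j hr)) (L (v2j r s j hr))
    have h2 : (5:ℕ) ≤ (L (v2j r s j hr)).card := by
      have := hB (v2j r s j hr)
      unfold bnd at this
      rw [if_neg (by simp [v2j, i1]), if_neg (by simp [v2j, i1]; omega)] at this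
      exact this
    unfold DD
    omega
  by_cases hA : (avl r s j hr L (v31 r s j hr) \ DD r s j hr L).Nonempty
  · have h31 : col r s j hr L (v31 r s j hr) ∉ DD r s j hr L := by
      have hmem := col_mem_prefS r s j hr L (v := v31 r s j hr)
        (by rw [prefS_v31]; exact hA)
      rw [prefS_v31] at hmem
      exact (Finset.mem_sdiff.mp hmem).2
    by_cases hA2 : (avl r s j hr L (v3j r s j hr) \ DD r s j hr L).Nonempty
    · have h3j : col r s j hr L (v3j r s j hr) ∉ DD r s j hr L := by
        have hmem := col_mem_prefS r s j hr L (v := v3j r s j hr)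
          (by rw [prefS_v3j]; exact hA2)
        rw [prefS_v3j] at hmem
        exact (Finset.mem_sdiff.mp hmem).2
      obtain ⟨d, hd⟩ := Finset.card_pos.mp (by omega : 0 < (DD r s j hr L).card)
      refine ⟨d, Finset.mem_sdiff.mpr ⟨hd, ?_⟩⟩
      simp only [Finset.mem_insert, Finset.mem_singleton]
      rintro (h | h) <;> rw [h] at hd
      · exact h3j hd
      · exact h31 hd
    · have hsub : avl r s j hr L (v3j r s j hr) ⊆ DD r s j hr L := by
        intro a ha
        by_contra hna
        exact hA2 ⟨a, Finset.mem_sdiff.mpr ⟨ha, hna⟩⟩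
      have hDD2 : 2 ≤ (DD r s j hr L).card :=
        le_trans (avl_v3j_card j hr hs L hB) (Finset.card_le_card hsub)
      have hcard := Finset.le_card_sdiff
        ({col r s j hr L (v3j r s j hr)} : Finset ℕ) (DD r s j hr L)
      rw [Finset.card_singleton] at hcard
      have hne : (DD r s j hr L \ {col r s j hr L (v3j r s j hr)}).Nonempty :=
        Finset.card_pos.mp (by omega)
      obtain ⟨d, hd⟩ := hne
      rw [Finset.mem_sdiff, Finset.mem_singleton] at hd
      refine ⟨d, Finset.mem_sdiff.mpr ⟨hd.1, ?_⟩⟩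
      simp only [Finset.mem_insert, Finset.mem_singleton]
      rintro (h | h)
      · exact hd.2 h
      · rw [h] at hd; exact h31 hd.1
  · have hsub : avl r s j hr L (v31 r s j hr) ⊆ DD r s j hr L := by
      intro a ha
      by_contra hna
      exact hA ⟨a, Finset.mem_sdiff.mpr ⟨ha, hna⟩⟩
    have hDD3 : 3 ≤ (DD r s j hr L).card :=
      le_trans (avl_v31_card j hr hs L hB) (Finset.card_le_card hsub)
    have hcard := Finset.le_card_sdiff
      ({col r s j hr L (v3j r s j hr), col r s j hr L (v31 r s j hr)} : Finset ℕ)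
      (DD r s j hr L)
    have h2 := cardle2 (col r s j hr L (v3j r s j hr)) (col r s j hr L (v31 r s j hr))
    exact Finset.card_pos.mp (by omega)

include hB hs hy4 in
lemma col_v2j_DD : col r s j hr L (v2j r s j hr) ∈ DD r s j hr L := by
  obtain ⟨d, hd⟩ := Dclaim j hr hs L hB hy4
  rw [Finset.mem_sdiff] at hd
  have hpre : (prefS r s j hr L (v2j r s j hr)).Nonempty := by
    rw [prefS_v2j]
    refine ⟨d, Finset.mem_inter.mpr ⟨?_, hd.1⟩⟩
    unfold avl
    rw [Finset.mem_sdiff]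
    constructor
    · exact Finset.sdiff_subset hd.1
    · intro hmem
      rw [Fs_eq] at hmem
      obtain ⟨u, hu, hcu⟩ := Finset.mem_image.mp hmem
      have := nb_v2j j hr hs hu
      simp only [Finset.mem_insert, Finset.mem_singleton] at this
      apply hd.2
      simp only [Finset.mem_insert, Finset.mem_singleton]
      rcases this with h | h
      · left; rw [← hcu, h]; rfl
      · right; rw [← hcu, h]; rfl
  have := col_mem_prefS r s j hr L hpre
  rw [prefS_v2j] at this
  exact (Finset.mem_inter.mp this).2

include hB hs hy4 in
lemma col_v2j_not_Lvy : col r s j hr L (v2j r s j hr) ∉ L (vy r s j hr) := by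
  have := col_v2j_DD j hr hs L hB hy4
  unfold DD at this
  exact (Finset.mem_sdiff.mp this).2

include hB hs hy4 in
lemma avl_vy_card : 2 ≤ (avl r s j hr L (vy r s j hr)).card := by
  set c1 := col r s j hr L ((i0 r hr, j+1)) with hc1
  set c3 := col r s j hr L ((i1 r hr, j-1)) with hc3
  have hsub : L (vy r s j hr) \ {c1, c3} ⊆ avl r s j hr L (vy r s j hr) := by
    intro a ha
    rw [Finset.mem_sdiff] at ha
    unfold avl
    rw [Finset.mem_sdiff]
    refine ⟨ha.1, ?_⟩
    intro hmem
    rw [Fs_eq] at hmem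
    obtain ⟨u, hu, hcu⟩ := Finset.mem_image.mp hmem
    have h3 := nb_vy j hr hs hu
    simp only [Finset.mem_insert, Finset.mem_singleton] at h3
    rcases h3 with h | h | h
    · apply ha.2
      simp only [Finset.mem_insert, Finset.mem_singleton]
      left; rw [← hcu, h]
    · -- u = (i1, j) = v2j : colour not in L vy, contradiction with a ∈ L vy
      have : a ∉ L (vy r s j hr) := by
        rw [← hcu, h]
        exact col_v2j_not_Lvy j hr hs L hB hy4
      exact this ha.1
    · apply ha.2
      simp only [Finset.mem_insert, Finset.mem_singleton]
      right; rw [← hcu, h]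
  have h1 := Finset.le_card_sdiff ({c1, c3} : Finset ℕ) (L (vy r s j hr))
  have h2 := cardle2 c1 c3
  have h3 := Finset.card_le_card hsub
  omega

include hB hs hy4 in
lemma avl_vw_nonempty : (avl r s j hr L (vw r s j hr)).Nonempty := by
  set Wf := WexF r s j hr L (vy r s j hr) with hWf
  have hWfcard : Wf.card ≤ 3 := by
    rw [hWf, WexF_eq]
    refine le_trans Finset.card_image_le ?_
    refine le_trans (Finset.card_le_card (wfilt_sub j hr hs)) (cardle3 _ _ _)
  have hw4 : (4:ℕ) ≤ (L (vw r s j hr)).card := by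
    have := hB (vw r s j hr)
    unfold bnd at this
    rw [if_pos (by simp [vw, i0]), if_pos (by simp [vw])] at this
    exact this
  have hWW1 : 1 ≤ (L (vw r s j hr) \ Wf).card := by
    have := Finset.le_card_sdiff Wf (L (vw r s j hr))
    omega
  -- avl vw contains (L vw \ Wf) minus the colour of vy
  have hcontain : ∀ a, a ∈ L (vw r s j hr) \ Wf → a ≠ col r s j hr L (vy r s j hr) →
      a ∈ avl r s j hr L (vw r s j hr) := by
    intro a ha hane
    rw [Finset.mem_sdiff] at ha
    unfold avl
    rw [Finset.mem_sdiff]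
    refine ⟨ha.1, ?_⟩
    intro hmem
    rw [Fs_eq] at hmem
    obtain ⟨u, hu, hcu⟩ := Finset.mem_image.mp hmem
    by_cases huy : u = vy r s j hr
    · rw [huy] at hcu
      exact hane hcu.symm
    · have hwf := nbvw_wfilt j hr hs hu huy
      apply ha.2
      rw [hWf, WexF_eq]
      exact Finset.mem_image.mpr ⟨u, hwf, hcu⟩
  by_cases hp : (prefS r s j hr L (vy r s j hr)).Nonempty
  · have hcy : col r s j hr L (vy r s j hr) ∉ L (vw r s j hr) \ Wf := by
      have hmem := col_mem_prefS r s j hr L hp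
      rw [prefS_vy] at hmem
      exact (Finset.mem_sdiff.mp hmem).2
    obtain ⟨b, hb⟩ := Finset.card_pos.mp (by omega : 0 < (L (vw r s j hr) \ Wf).card)
    refine ⟨b, hcontain b hb ?_⟩
    intro he
    rw [he] at hb
    exact hcy hb
  · -- pref empty : avl vy ⊆ L vw \ Wf, so the latter has ≥ 2 elements
    have hsub : avl r s j hr L (vy r s j hr) ⊆ L (vw r s j hr) \ Wf := by
      intro a ha
      by_contra hna
      exact hp (by
        rw [prefS_vy]
        exact ⟨a, Finset.mem_sdiff.mpr ⟨ha, hna⟩⟩)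
    have hWW2 : 2 ≤ (L (vw r s j hr) \ Wf).card :=
      le_trans (avl_vy_card j hr hs L hB hy4) (Finset.card_le_card hsub)
    have hcard := Finset.le_card_sdiff
      ({col r s j hr L (vy r s j hr)} : Finset ℕ) (L (vw r s j hr) \ Wf)
    rw [Finset.card_singleton] at hcard
    obtain ⟨b, hb⟩ := Finset.card_pos.mp
      (by omega : 0 < ((L (vw r s j hr) \ Wf) \ {col r s j hr L (vy r s j hr)}).card)
    rw [Finset.mem_sdiff, Finset.mem_singleton] at hb
    exact ⟨b, hcontain b hb.1 hb.2⟩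

end STEER


section FINAL
variable {r s : ℕ} [NeZero s] (j : ZMod s) (hr : 3 ≤ r) (hs : 3 ≤ s)
  (L : Fin r × ZMod s → Finset ℕ)
  (hB : ∀ v, bnd r s j v ≤ (L v).card) (hy4 : (L (vy r s j hr)).card = 4)

include hB hy4 hs in
lemma avl_ne : ∀ v, (avl r s j hr L v).Nonempty := by
  intro v
  by_cases h0 : v.1.val = 0
  · by_cases hxj : v.2 = j
    · have hv : v = vy r s j hr := Prod.ext (Fin.ext h0) hxj
      rw [hv]
      exact Finset.card_pos.mp (by have := avl_vy_card j hr hs L hB hy4; omega)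
    · by_cases hxj1 : v.2 = j - 1
      · have hv : v = vw r s j hr := Prod.ext (Fin.ext h0) hxj1
        rw [hv]
        exact avl_vw_nonempty j hr hs L hB hy4
      · have ho2 : 2 ≤ oo s j v.2 := by
          have h1 : oo s j v.2 ≠ 0 := fun h => hxj1 ((oo_zero_iff j v.2).1 h)
          have h2 : oo s j v.2 ≠ 1 := fun h => hxj ((oo_one_iff j hs v.2).1 h)
          omega
        have hv : v = (i0 r hr, v.2) := Prod.ext (Fin.ext h0) rfl
        have hnb : (nbelow r s j v).card ≤ 2 := by
          rw [hv]
          exact le_trans (Finset.card_le_card (nb_C2 j hr hs ho2)) (cardle2 _ _)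
        have hbnd : 3 ≤ (L v).card := by
          have h := hB v
          unfold bnd at h
          rw [if_pos h0, if_neg (by push_neg; exact ⟨hxj, hxj1⟩)] at h
          exact h
        have := avl_card_ge j hr L v hbnd hnb
        exact Finset.card_pos.mp (by omega)
  · by_cases h1 : v.1.val = 1
    · have hbnd : 5 ≤ (L v).card := by
        have h := hB v
        unfold bnd at h
        rw [if_neg h0, if_neg (by omega)] at h
        exact h
      by_cases hxj : v.2 = j
      · have hv : v = v2j r s j hr := Prod.ext (Fin.ext h1) hxj
        have hnb : (nbelow r s j v).card ≤ 2 := by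
          rw [hv]
          exact le_trans (Finset.card_le_card (nb_v2j j hr hs)) (cardle2 _ _)
        have := avl_card_ge j hr L v hbnd hnb
        exact Finset.card_pos.mp (by omega)
      · by_cases hxj1 : v.2 = j - 1
        · have hv : v = (i1 r hr, j - 1) := Prod.ext (Fin.ext h1) hxj1
          have hnb : (nbelow r s j v).card ≤ 4 := by
            rw [hv]
            exact le_trans (Finset.card_le_card (nb_B3 j hr hs)) (cardle4 _ _ _ _)
          have := avl_card_ge j hr L v hbnd hnb
          exact Finset.card_pos.mp (by omega)
        · have ho2 : 2 ≤ oo s j v.2 := by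
            have ha : oo s j v.2 ≠ 0 := fun h => hxj1 ((oo_zero_iff j v.2).1 h)
            have hb : oo s j v.2 ≠ 1 := fun h => hxj ((oo_one_iff j hs v.2).1 h)
            omega
          have hv : v = (i1 r hr, v.2) := Prod.ext (Fin.ext h1) rfl
          have hnb : (nbelow r s j v).card ≤ 4 := by
            rw [hv]
            exact le_trans (Finset.card_le_card (nb_B2 j hr hs ho2)) (cardle4 _ _ _ _)
          have := avl_card_ge j hr L v hbnd hnb
          exact Finset.card_pos.mp (by omega)
    · have h2v : 2 ≤ v.1.val := by omega
      by_cases hbot : v.1.val = r - 1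
      · have hnb : (nbelow r s j v).card ≤ 2 :=
          le_trans (Finset.card_le_card (nb_Abot j hr hs hbot)) (cardle2 _ _)
        have hbnd : 3 ≤ (L v).card := by
          have h := hB v
          unfold bnd at h
          rw [if_neg h0, if_pos hbot] at h
          exact h
        have := avl_card_ge j hr L v hbnd hnb
        exact Finset.card_pos.mp (by omega)
      · have hir : v.1.val ≤ r - 2 := by have := v.1.isLt; omega
        have hnb : (nbelow r s j v).card ≤ 4 :=
          le_trans (Finset.card_le_card (nb_A j hr hs h2v hir)) (cardle4 _ _ _ _)
        have hbnd : 5 ≤ (L v).card := by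
          have h := hB v
          unfold bnd at h
          rw [if_neg h0, if_neg hbot] at h
          exact h
        have := avl_card_ge j hr L v hbnd hnb
        exact Finset.card_pos.mp (by omega)

end FINAL

end
end CCP

/-- For `r, s ≥ 3`, let `L` be a list assignment on the cylindrical
triangulation `C(r,s)` such that: for some `j`, the exterior vertices `(1,j)` and
`(1,j−1)` have lists of size exactly `4`; every other exterior vertex (i.e. vertex in
row `1` or row `r`) has a list of size exactly `3`; and every interior vertex has a list
of size exactly `5`. Then `C(r,s)` is `L`-choosable. -/
theorem C_choosable (r s : ℕ) (hr : 3 ≤ r) (hs : 3 ≤ s)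
    (L : Fin r × ZMod s → Finset ℕ) (j : ZMod s)
    (h4a : (L (⟨0, by omega⟩, j)).card = 4)
    (h4b : (L (⟨0, by omega⟩, j - 1)).card = 4)
    (h3 : ∀ v : Fin r × ZMod s, (v.1.val = 0 ∨ v.1.val = r - 1) →
      v ≠ (⟨0, by omega⟩, j) → v ≠ (⟨0, by omega⟩, j - 1) → (L v).card = 3)
    (h5 : ∀ v : Fin r × ZMod s, ¬ (v.1.val = 0 ∨ v.1.val = r - 1) → (L v).card = 5) :
    IsLChoosable (C r s) L := by
  haveI : NeZero s := ⟨by omega⟩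
  have hB : ∀ v, CCP.bnd r s j v ≤ (L v).card := by
    intro v
    unfold CCP.bnd
    split_ifs with hi0 hj hbot
    · rcases hj with hj | hj
      · have hv : v = (⟨0, by omega⟩, j) := Prod.ext (Fin.ext hi0) hj
        rw [hv]
        exact le_of_eq h4a.symm
      · have hv : v = (⟨0, by omega⟩, j - 1) := Prod.ext (Fin.ext hi0) hj
        rw [hv]
        exact le_of_eq h4b.symm
    · push_neg at hj
      refine le_of_eq (h3 v (Or.inl hi0) ?_ ?_).symm
      · intro he
        exact hj.1 (congrArg Prod.snd he)
      · intro he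
        exact hj.2 (congrArg Prod.snd he)
    · refine le_of_eq (h3 v (Or.inr hbot) ?_ ?_).symm
      · intro he
        exact hi0 (congrArg (fun p => p.1.val) he)
      · intro he
        exact hi0 (congrArg (fun p => p.1.val) he)
    · refine le_of_eq (h5 v ?_).symm
      push_neg
      exact ⟨hi0, hbot⟩
  have hy4 : (L (CCP.vy r s j hr)).card = 4 := h4a
  have hne := CCP.avl_ne j hr hs L hB hy4
  refine ⟨CCP.col r s j hr L, fun v => ?_, fun u v huv => ?_⟩
  · have h := CCP.col_mem_avl r s j hr L (hne v)
    unfold CCP.avl at h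
    exact (Finset.mem_sdiff.mp h).1
  · rcases lt_trichotomy (CCP.rho r s j u) (CCP.rho r s j v) with hlt | heq | hgt
    · have hadj : (C r s).Adj v u := (C r s).adj_symm huv
      have hu : u ∈ CCP.nbelow r s j v := by
        rw [CCP.mem_nbelow]; exact ⟨hadj, hlt⟩
      have h1 : CCP.col r s j hr L u ∈ CCP.Fs r s j hr L v := by
        rw [CCP.Fs_eq]
        exact Finset.mem_image_of_mem _ hu
      have h2 := CCP.col_mem_avl r s j hr L (hne v)
      unfold CCP.avl at h2
      rw [Finset.mem_sdiff] at h2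
      intro he
      rw [he] at h1
      exact h2.2 h1
    · exact absurd heq (CCP.adj_rho_ne j hs ((C r s).adj_symm huv))
    · have hv' : v ∈ CCP.nbelow r s j u := by
        rw [CCP.mem_nbelow]; exact ⟨huv, hgt⟩
      have h1 : CCP.col r s j hr L v ∈ CCP.Fs r s j hr L u := by
        rw [CCP.Fs_eq]
        exact Finset.mem_image_of_mem _ hv'
      have h2 := CCP.col_mem_avl r s j hr L (hne u)
      unfold CCP.avl at h2
      rw [Finset.mem_sdiff] at h2
      intro he
      rw [← he] at h1
      exact h2.2 h1
end

section
/- Let r ≥ 4, s ≥ 3, 0 ≤ t ≤ s−1, G = T(r,s,t), and let L be a list assignment with every list of size exactly 5 satisfying criteria (i)–(iv). If a vertex v = (i,j) has some neighbour u with L(u) = L(v), then at least one vertical neighbour of v has list equal to L(v), i.e., L(i,j+1) = L(v) or L(i,j−1) = L(v). -/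
/-- Criterion (i): not all the lists are identical, and every vertex's list is contained
in the union of the lists of its two left neighbours and in the union of the lists of
its two right neighbours. -/
def Crit1 (r s : ℕ) (L : ZMod r × ZMod s → Finset ℕ) : Prop :=
  (¬ ∀ u v : ZMod r × ZMod s, L u = L v) ∧
  ∀ (i : ZMod r) (j : ZMod s),
    L (i, j) ⊆ L (i - 1, j) ∪ L (i - 1, j + 1) ∧
    L (i, j) ⊆ L (i + 1, j) ∪ L (i + 1, j - 1)

/-- Criterion (ii): whenever `(i,j)` and `(i,j−1)` have distinct lists, one of the three
configurations (a)–(c) holds with respect to their left neighbours, and one of the three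
mirror configurations (a')–(c') holds with respect to their right neighbours. -/
def Crit2 (r s : ℕ) (L : ZMod r × ZMod s → Finset ℕ) : Prop :=
  ∀ (i : ZMod r) (j : ZMod s), L (i, j) ≠ L (i, j - 1) →
    ((L (i, j) = L (i - 1, j + 1) ∧ L (i, j - 1) = L (i - 1, j - 1)) ∨
     (L (i, j) = L (i - 1, j + 1) ∧ L (i, j) = L (i - 1, j) ∧
       L (i, j - 1) ≠ L (i - 1, j - 1)) ∨
     (L (i, j) ≠ L (i - 1, j + 1) ∧ L (i, j - 1) = L (i - 1, j) ∧
       L (i, j - 1) = L (i - 1, j - 1))) ∧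
    ((L (i, j) = L (i + 1, j) ∧ L (i, j - 1) = L (i + 1, j - 2)) ∨
     (L (i, j - 1) = L (i + 1, j - 2) ∧ L (i, j - 1) = L (i + 1, j - 1) ∧
       L (i, j) ≠ L (i + 1, j)) ∨
     (L (i, j - 1) ≠ L (i + 1, j - 2) ∧ L (i, j) = L (i + 1, j - 1) ∧
       L (i, j) = L (i + 1, j)))

/-- Criterion (iii): adjacent vertices in distinct columns with identical lists have a
common neighbour with the same list. -/
def Crit3 (r s t : ℕ) (L : ZMod r × ZMod s → Finset ℕ) : Prop :=
  ∀ u v : ZMod r × ZMod s, (T r s t).Adj u v → u.1 ≠ v.1 → L u = L v →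
    ∃ w, (T r s t).Adj u w ∧ (T r s t).Adj v w ∧ L w = L u

/-- Criterion (iv): whenever `u`, `v`, `w` are mutually adjacent vertices with identical
lists and `v`, `w` lie in the same column, at least one vertical neighbour of `u` has a
list identical to `L(u)`. -/
def Crit4 (r s t : ℕ) (L : ZMod r × ZMod s → Finset ℕ) : Prop :=
  ∀ u v w : ZMod r × ZMod s, (T r s t).Adj u v → (T r s t).Adj v w → (T r s t).Adj u w →
    L u = L v → L v = L w → v.1 = w.1 →
    (L (u.1, u.2 + 1) = L u ∨ L (u.1, u.2 - 1) = L u)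

/-- The vertex `v` is isolated for the list assignment `L`: no neighbour of `v` has a
list identical to `L(v)`. -/
def Isolated (r s t : ℕ) (L : ZMod r × ZMod s → Finset ℕ) (v : ZMod r × ZMod s) : Prop :=
  ∀ w, (T r s t).Adj v w → L w ≠ L v


lemma aux_ne_zmod (r k : ℕ) (hk : 0 < k) (hkr : k < r) : ((k : ℕ) : ZMod r) ≠ 0 := by
  haveI : NeZero r := ⟨by omega⟩
  intro h0
  rw [ZMod.natCast_eq_zero_iff] at h0
  exact absurd (Nat.le_of_dvd hk h0) (by omega)

lemma tnbr_col {r s t : ℕ} (hr : r ≠ 1) {u v : ZMod r × ZMod s}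
    (h : Tnbr r s t u v) : v.1 = u.1 ∨ v.1 = u.1 + 1 ∨ v.1 = u.1 - 1 := by
  unfold Tnbr at h
  rw [if_neg hr] at h
  split_ifs at h <;> tauto

lemma adj_col {r s t : ℕ} (hr : r ≠ 1) {u v : ZMod r × ZMod s}
    (h : (T r s t).Adj u v) : v.1 = u.1 ∨ v.1 = u.1 + 1 ∨ v.1 = u.1 - 1 := by
  rcases h.2 with h' | h'
  · exact tnbr_col hr h'
  · rcases tnbr_col hr h' with h'' | h'' | h''
    · exact Or.inl h''.symm
    · exact Or.inr (Or.inr (by linear_combination -h''))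
    · exact Or.inr (Or.inl (by linear_combination -h''))

lemma tnbr_same_col {r s t : ℕ} (hr : 4 ≤ r) {u v : ZMod r × ZMod s}
    (h : Tnbr r s t u v) (hc : v.1 = u.1) : v.2 = u.2 + 1 ∨ v.2 = u.2 - 1 := by
  have h1 : (1 : ZMod r) ≠ 0 := by
    simpa using aux_ne_zmod r 1 (by omega) (by omega)
  have hr1 : r ≠ 1 := by omega
  unfold Tnbr at h
  rw [if_neg hr1] at h
  split_ifs at h <;>
    rcases h with ⟨_, h⟩ | ⟨hA, _⟩ | ⟨hA, _⟩ <;>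
    first
      | exact h
      | exact absurd (show (1:ZMod r) = 0 by linear_combination hc - hA) h1
      | exact absurd (show (1:ZMod r) = 0 by linear_combination hA - hc) h1

lemma adj_same_col {r s t : ℕ} (hr : 4 ≤ r) {u v : ZMod r × ZMod s}
    (h : (T r s t).Adj u v) (hc : v.1 = u.1) : v.2 = u.2 + 1 ∨ v.2 = u.2 - 1 := by
  rcases h.2 with h' | h'
  · exact tnbr_same_col hr h' hc
  · rcases tnbr_same_col hr h' hc.symm with h'' | h''
    · exact Or.inr (by linear_combination -h'')
    · exact Or.inl (by linear_combination -h'')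

/-- Lemma 3.3(2). Let `G = T(r,s,t)` with `r ≥ 4`, `s ≥ 3`, and let
`L` assign `5`-lists satisfying criteria (i)–(iv). If the vertex `v = (i,j)` has some
neighbour with a list identical to `L(v)`, then at least one vertical neighbour of `v`
has a list identical to `L(v)`. -/
theorem T_nonisolated_vertical_neighbor (r s t : ℕ) (hr : 4 ≤ r) (hs : 3 ≤ s)
    (ht : t ≤ s - 1) (L : ZMod r × ZMod s → Finset ℕ)
    (hcard : ∀ v, (L v).card = 5)
    (hcrit1 : Crit1 r s L) (hcrit2 : Crit2 r s L)
    (hcrit3 : Crit3 r s t L) (hcrit4 : Crit4 r s t L)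
    (i : ZMod r) (j : ZMod s)
    (hnoniso : ∃ u, (T r s t).Adj (i, j) u ∧ L u = L (i, j)) :
    L (i, j + 1) = L (i, j) ∨ L (i, j - 1) = L (i, j) := by
  have hr1 : r ≠ 1 := by omega
  have h1 : (1 : ZMod r) ≠ 0 := by simpa using aux_ne_zmod r 1 (by omega) (by omega)
  have h2 : (2 : ZMod r) ≠ 0 := by simpa using aux_ne_zmod r 2 (by omega) (by omega)
  have h3 : (3 : ZMod r) ≠ 0 := by simpa using aux_ne_zmod r 3 (by omega) (by omega)
  obtain ⟨u, hadj, hL⟩ := hnoniso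
  by_cases hcol : u.1 = i
  · rcases adj_same_col hr hadj hcol with hv | hv
    · left
      have : (i, j + 1) = u := Prod.ext hcol.symm hv.symm
      rw [this]; exact hL
    · right
      have : (i, j - 1) = u := Prod.ext hcol.symm hv.symm
      rw [this]; exact hL
  · obtain ⟨w, hvw, huw, hLw⟩ :=
      hcrit3 (i, j) u hadj (fun h => hcol h.symm) hL.symm
    by_cases hw : w.1 = i
    · rcases adj_same_col hr hvw hw with hv | hv
      · left
        have : (i, j + 1) = w := Prod.ext hw.symm hv.symm
        rw [this]; exact hLw
      · right
        have : (i, j - 1) = w := Prod.ext hw.symm hv.symm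
        rw [this]; exact hLw
    · have hwu : w.1 = u.1 := by
        rcases adj_col hr1 hadj with hA | hA | hA
        · exact absurd hA hcol
        · rcases adj_col hr1 hvw with hB | hB | hB
          · exact absurd hB hw
          · linear_combination hB - hA
          · rcases adj_col hr1 huw with hC | hC | hC
            · exact hC
            · exact absurd (show (3:ZMod r) = 0 by linear_combination hB - hC - hA) h3
            · exact absurd (show w.1 = i by linear_combination hC + hA) hw
        · rcases adj_col hr1 hvw with hB | hB | hB
          · exact absurd hB hw
          · rcases adj_col hr1 huw with hC | hC | hC
            · exact hC
            · exact absurd (show w.1 = i by linear_combination hC + hA) hw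
            · exact absurd (show (3:ZMod r) = 0 by linear_combination hA + hC - hB) h3
          · linear_combination hB - hA
      exact hcrit4 (i, j) u w hadj huw hvw hL.symm (hL.trans hLw.symm) hwu.symm
end
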